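/- arXiv:2009.10450 — 5 statements merged into one kernel-verified Lean document; each statement's English description precedes it below -/
import Mathlib

section
/- (Propagation of unconfoundedness to the dimension-reduced index, claim following Constraint 1). If the pair (Y(0),Y(1)) is conditionally independent of D given σ(X) and D is conditionally independent of X given σ(αᵀX) (Constraint 1: D ⊥ X | αᵀX), then the pair (Y(0),Y(1)) is conditionally independent of D given σ(αᵀX). -/
open MeasureTheory ProbabilityTheory

section Aux

/-- If `D ⟂ X | m₁` with `m₁ ≤ σ(X)`, then conditional probabilities of `D`-events
given `σ(X)` coincide with those given `m₁`. -/
private lemma aux_proj {Ω γ : Type*} {m₁ : MeasurableSpace Ω} [mΩ : MeasurableSpace Ω]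
    [StandardBorelSpace Ω] [Nonempty Ω] {mγ : MeasurableSpace γ}
    {μ : Measure Ω} [IsProbabilityMeasure μ]
    {D : Ω → ℝ} {X : Ω → γ} (hD : Measurable D) (hX : Measurable X)
    (hm₁ : m₁ ≤ mΩ) (hm12 : m₁ ≤ MeasurableSpace.comap X mγ)
    (hconstraint : CondIndepFun m₁ hm₁ D X μ)
    {t : Set ℝ} (ht : MeasurableSet t) :
    (μ⟦D ⁻¹' t | m₁⟧) =ᵐ[μ] μ⟦D ⁻¹' t | MeasurableSpace.comap X mγ⟧ := by
  classical
  rw [condIndepFun_iff_condExp_inter_preimage_eq_mul hD hX] at hconstraint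
  have hm₂ : MeasurableSpace.comap X mγ ≤ mΩ := hX.comap_le
  set B : Ω → ℝ := Set.indicator (D ⁻¹' t) (fun _ => (1 : ℝ)) with hB
  have hBint : Integrable B μ := (integrable_const (1 : ℝ)).indicator (hD ht)
  have hBbd : ∀ ω, |B ω| ≤ 1 := by
    intro ω; by_cases h : ω ∈ D ⁻¹' t <;> simp [hB, Set.indicator_apply, h]
  have hBm₁bd : ∀ᵐ ω ∂μ, ‖(μ[B | m₁]) ω‖ ≤ (1 : ℝ) := by
    have := ae_bdd_condExp_of_ae_bdd (m := m₁) (μ := μ) (R := 1)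
      (Filter.Eventually.of_forall fun ω => by simpa using hBbd ω)
    simpa [Real.norm_eq_abs] using this
  refine ae_eq_condExp_of_forall_setIntegral_eq hm₂ hBint
    (fun u _ _ => integrable_condExp.integrableOn) ?_
    ((stronglyMeasurable_condExp.mono hm12).aestronglyMeasurable)
  rintro C ⟨u, hu, rfl⟩ -
  have hCmeas : MeasurableSet (X ⁻¹' u) := hX hu
  set IC : Ω → ℝ := Set.indicator (X ⁻¹' u) (fun _ => (1 : ℝ)) with hIC
  have hICint : Integrable IC μ := (integrable_const (1 : ℝ)).indicator hCmeas
  have key := hconstraint t u ht hu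
  have hprodint : Integrable (fun ω => (μ[B | m₁]) ω * IC ω) μ :=
    hICint.bdd_mul (stronglyMeasurable_condExp.mono hm₁).aestronglyMeasurable hBm₁bd
  have pull : (μ[fun ω => (μ[B | m₁]) ω * IC ω | m₁])
      =ᵐ[μ] fun ω => (μ[B | m₁]) ω * (μ[IC | m₁]) ω :=
    condExp_mul_of_stronglyMeasurable_left stronglyMeasurable_condExp hprodint hICint
  calc ∫ x in X ⁻¹' u, (μ[B | m₁]) x ∂μ
      = ∫ x, (μ[B | m₁]) x * IC x ∂μ := by
        rw [← integral_indicator hCmeas]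
        congr 1
        funext ω
        by_cases h : ω ∈ X ⁻¹' u <;> simp [hIC, Set.indicator_apply, h]
    _ = ∫ x, (μ[fun ω => (μ[B | m₁]) ω * IC ω | m₁]) x ∂μ :=
        (integral_condExp hm₁).symm
    _ = ∫ x, (μ[B | m₁]) x * (μ[IC | m₁]) x ∂μ := integral_congr_ae pull
    _ = ∫ x, (μ[Set.indicator (D ⁻¹' t ∩ X ⁻¹' u) (fun _ => (1 : ℝ)) | m₁]) x ∂μ :=
        (integral_congr_ae key).symm
    _ = ∫ x, Set.indicator (D ⁻¹' t ∩ X ⁻¹' u) (fun _ => (1 : ℝ)) x ∂μ :=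
        integral_condExp hm₁
    _ = ∫ x in X ⁻¹' u, B x ∂μ := by
        rw [← integral_indicator hCmeas]
        congr 1
        funext ω
        by_cases h1 : ω ∈ D ⁻¹' t <;> by_cases h2 : ω ∈ X ⁻¹' u <;>
          simp [hB, Set.indicator_apply, h1, h2]

/-- Tower argument: if `f ⟂ g | m₂`, `m₁ ≤ m₂`, and conditional probabilities of `g`-events
given `m₂` coincide with those given `m₁`, then `f ⟂ g | m₁`. -/
private lemma aux_tower {Ω : Type*} {m₁ m₂ : MeasurableSpace Ω} [mΩ : MeasurableSpace Ω]
    [StandardBorelSpace Ω] [Nonempty Ω] {μ : Measure Ω} [IsProbabilityMeasure μ]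
    {β γ : Type*} {mβ : MeasurableSpace β} {mγ : MeasurableSpace γ}
    {f : Ω → β} {g : Ω → γ} (hf : Measurable f) (hg : Measurable g)
    (hm12 : m₁ ≤ m₂) (hm₁ : m₁ ≤ mΩ) (hm₂ : m₂ ≤ mΩ)
    (h2 : CondIndepFun m₂ hm₂ f g μ)
    (hproj : ∀ t : Set γ, MeasurableSet t → (μ⟦g ⁻¹' t | m₁⟧) =ᵐ[μ] μ⟦g ⁻¹' t | m₂⟧) :
    CondIndepFun m₁ hm₁ f g μ := by
  classical
  rw [condIndepFun_iff_condExp_inter_preimage_eq_mul hf hg] at h2 ⊢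
  intro s t hs ht
  set A : Ω → ℝ := Set.indicator (f ⁻¹' s) (fun _ => (1 : ℝ)) with hA
  set B : Ω → ℝ := Set.indicator (g ⁻¹' t) (fun _ => (1 : ℝ)) with hB
  have hBbd : ∀ ω, |B ω| ≤ 1 := by
    intro ω; by_cases h : ω ∈ g ⁻¹' t <;> simp [hB, Set.indicator_apply, h]
  have hBm₁bd : ∀ᵐ ω ∂μ, ‖(μ[B | m₁]) ω‖ ≤ (1 : ℝ) := by
    have := ae_bdd_condExp_of_ae_bdd (m := m₁) (μ := μ) (R := 1)
      (Filter.Eventually.of_forall fun ω => by simpa using hBbd ω)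
    simpa [Real.norm_eq_abs] using this
  have hinterAB : Set.indicator (f ⁻¹' s ∩ g ⁻¹' t) (fun _ => (1 : ℝ))
      = fun ω => A ω * B ω := by
    funext ω
    by_cases h1 : ω ∈ f ⁻¹' s <;> by_cases h2 : ω ∈ g ⁻¹' t <;>
      simp [hA, hB, Set.indicator_apply, h1, h2]
  calc (μ[Set.indicator (f ⁻¹' s ∩ g ⁻¹' t) (fun _ => (1 : ℝ)) | m₁])
      =ᵐ[μ] μ[μ[Set.indicator (f ⁻¹' s ∩ g ⁻¹' t) (fun _ => (1 : ℝ)) | m₂] | m₁] :=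
        (condExp_condExp_of_le hm12 hm₂).symm
    _ =ᵐ[μ] μ[fun ω => (μ[A | m₂]) ω * (μ[B | m₂]) ω | m₁] :=
        condExp_congr_ae (h2 s t hs ht)
    _ =ᵐ[μ] μ[fun ω => (μ[B | m₁]) ω * (μ[A | m₂]) ω | m₁] := by
        refine condExp_congr_ae ?_
        filter_upwards [hproj t ht] with ω hω
        rw [← hω, mul_comm]
    _ =ᵐ[μ] fun ω => (μ[B | m₁]) ω * (μ[μ[A | m₂] | m₁]) ω := by
        refine condExp_mul_of_stronglyMeasurable_left stronglyMeasurable_condExp ?_ integrable_condExp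
        exact integrable_condExp.bdd_mul
          (stronglyMeasurable_condExp.mono hm₁).aestronglyMeasurable hBm₁bd
    _ =ᵐ[μ] fun ω => (μ[A | m₁]) ω * (μ[B | m₁]) ω := by
        filter_upwards [condExp_condExp_of_le hm12 hm₂ (f := A)] with ω hω
        rw [hω, mul_comm]

end Aux

/-- **Propagation of unconfoundedness to the dimension-reduced index**
(claim following Constraint 1). If `(Y(0),Y(1)) ⟂ D | σ(X)` and `D ⟂ X | σ(αᵀX)`
(Constraint 1), then `(Y(0),Y(1)) ⟂ D | σ(αᵀX)`. -/
theorem unconfoundedness_propagates_to_index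
    {Ω : Type*} [mΩ : MeasurableSpace Ω] [StandardBorelSpace Ω] [Nonempty Ω]
    (μ : Measure Ω) [IsProbabilityMeasure μ]
    {k q : ℕ} (hk : 2 ≤ k) (hqk : q ≤ k)
    (D : Ω → ℝ) (Y0 Y1 : Ω → ℝ) (X : Ω → Fin k → ℝ)
    (hD : Measurable D) (hY0 : Measurable Y0) (hY1 : Measurable Y1) (hX : Measurable X)
    (hD01 : ∀ ω, D ω = 0 ∨ D ω = 1)
    (hY0int : Integrable Y0 μ) (hY1int : Integrable Y1 μ)
    -- the linear index αᵀX
    (α : Matrix (Fin k) (Fin q) ℝ)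
    (hαX : Measurable (fun ω => α.transpose.mulVec (X ω)))
    -- unconfoundedness: (Y(0),Y(1)) ⟂ D | σ(X)
    (hunconf : CondIndepFun (MeasurableSpace.comap X inferInstance) hX.comap_le
      (fun ω => (Y0 ω, Y1 ω)) D μ)
    -- Constraint 1: D ⟂ X | σ(αᵀX)
    (hconstraint : CondIndepFun
      (MeasurableSpace.comap (fun ω => α.transpose.mulVec (X ω)) inferInstance)
      hαX.comap_le D X μ) :
    CondIndepFun
      (MeasurableSpace.comap (fun ω => α.transpose.mulVec (X ω)) inferInstance)
      hαX.comap_le (fun ω => (Y0 ω, Y1 ω)) D μ := by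
  classical
  have hφ : Measurable (fun v : Fin k → ℝ => α.transpose.mulVec v) := by
    apply measurable_pi_lambda
    intro i
    simp only [Matrix.mulVec, dotProduct]
    exact Finset.measurable_sum _ fun j _ => (measurable_pi_apply j).const_mul _
  have hm12 : MeasurableSpace.comap (fun ω => α.transpose.mulVec (X ω))
      (inferInstance : MeasurableSpace (Fin q → ℝ)) ≤
      MeasurableSpace.comap X (inferInstance : MeasurableSpace (Fin k → ℝ)) := by
    rintro s ⟨u, hu, rfl⟩
    exact ⟨(fun v : Fin k → ℝ => α.transpose.mulVec v) ⁻¹' u, hφ hu, rfl⟩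
  have hproj : ∀ t : Set ℝ, MeasurableSet t →
      (μ⟦D ⁻¹' t | MeasurableSpace.comap (fun ω => α.transpose.mulVec (X ω)) inferInstance⟧)
        =ᵐ[μ] μ⟦D ⁻¹' t | MeasurableSpace.comap X inferInstance⟧ :=
    fun t ht => aux_proj hD hX hαX.comap_le hm12 hconstraint ht
  exact aux_tower (hY0.prodMk hY1) hD hm12 hαX.comap_le hX.comap_le
    hunconf hproj
end

section
/- (Key orthogonality identity used in the proof of Corollary 2.1). Almost surely, E[ψ·ε | σ(X)] = p(X)·(1−p(X))·n_p(X); equivalently, E[φ₂·ε | σ(X)] = 0 a.s., i.e. the influence function φ₂ of NCQTE is conditionally uncorrelated with the propensity-score residual ε = D − p(X). -/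
open MeasureTheory ProbabilityTheory

private lemma condexp_lin2 {Ω : Type*} {mΩ : MeasurableSpace Ω} {μ : Measure Ω}
    [IsFiniteMeasure μ] {m : MeasurableSpace Ω}
    (hm : m ≤ mΩ) (a b : ℝ) {g h : Ω → ℝ}
    (hg : Integrable g μ) (hh : Integrable h μ) :
    μ[(fun ω => a * g ω + b * h ω)|m] =ᵐ[μ] fun ω => a * (μ[g|m]) ω + b * (μ[h|m]) ω := by
  have h1 : (fun ω => a * g ω + b * h ω) = (a • g) + (b • h) := by
    funext ω; simp [smul_eq_mul]
  rw [h1]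
  refine (condExp_add (hg.smul a) (hh.smul b) m).trans ?_
  filter_upwards [condExp_smul (μ := μ) (m := m) a g, condExp_smul (μ := μ) (m := m) b h]
    with ω h1 h2
  simp only [Pi.add_apply, h1, h2, Pi.smul_apply, smul_eq_mul]

private lemma condexp_affine {Ω : Type*} {mΩ : MeasurableSpace Ω} {μ : Measure Ω}
    [IsFiniteMeasure μ] {m : MeasurableSpace Ω} (hm : m ≤ mΩ) (a b : ℝ) {g : Ω → ℝ}
    (hg : Integrable g μ) :
    μ[(fun ω => a * g ω + b)|m] =ᵐ[μ] fun ω => a * (μ[g|m]) ω + b := by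
  have h1 : (fun ω => a * g ω + b) = (a • g) + (fun _ => b) := by
    funext ω; simp [smul_eq_mul]
  rw [h1]
  refine (condExp_add (hg.smul a) (integrable_const b) m).trans ?_
  have hcc : μ[(fun _ : Ω => b)|m] = fun _ => b := condExp_const hm b
  rw [hcc]
  filter_upwards [condExp_smul (μ := μ) (m := m) a g] with ω h1
  simp only [Pi.add_apply, h1, Pi.smul_apply, smul_eq_mul]

private lemma integrable_indicator_one {Ω : Type*} {mΩ : MeasurableSpace Ω} {μ : Measure Ω}
    [IsFiniteMeasure μ] {s : Set Ω} (hs : MeasurableSet s) :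
    Integrable (Set.indicator s fun _ => (1:ℝ)) μ :=
  (integrable_const 1).indicator hs

private lemma integrable_of_ae_bdd {Ω : Type*} {mΩ : MeasurableSpace Ω}
    {μ : Measure Ω} [IsFiniteMeasure μ] {f : Ω → ℝ} (hf : AEStronglyMeasurable f μ)
    (C : ℝ) (hC : ∀ᵐ ω ∂μ, |f ω| ≤ C) : Integrable f μ :=
  Integrable.mono' (integrable_const C) hf (by simpa [Real.norm_eq_abs] using hC)

set_option maxHeartbeats 1000000 in
/-- **Key orthogonality identity used in the proof of Corollary 2.1.**
Almost surely `E[ψ·ε | σ(X)] = p(X)(1−p(X))·n_p(X)`; equivalently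
`E[φ₂·ε | σ(X)] = 0` a.s., i.e. the influence function `φ₂` of NCQTE is
conditionally uncorrelated with the propensity-score residual `ε = D − p(X)`. -/
theorem ncqte_orthogonality_identity
    {Ω : Type*} [mΩ : MeasurableSpace Ω] [StandardBorelSpace Ω] [Nonempty Ω]
    (μ : Measure Ω) [IsProbabilityMeasure μ]
    {k : ℕ} (hk : 2 ≤ k)
    (D : Ω → ℝ) (Y0 Y1 : Ω → ℝ) (X : Ω → Fin k → ℝ)
    (hD : Measurable D) (hY0 : Measurable Y0) (hY1 : Measurable Y1) (hX : Measurable X)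
    (hD01 : ∀ ω, D ω = 0 ∨ D ω = 1)
    (hY0int : Integrable Y0 μ) (hY1int : Integrable Y1 μ)
    -- p(X) is a version of E[D | σ(X)]
    (p : (Fin k → ℝ) → ℝ) (hp : Measurable p)
    (hpX : (fun ω => p (X ω)) =ᵐ[μ] μ[D | MeasurableSpace.comap X inferInstance])
    -- overlap
    (c : ℝ) (hc : 0 < c)
    (hoverlap : ∀ᵐ ω ∂μ, c ≤ p (X ω) ∧ p (X ω) ≤ 1 - c)
    -- unconfoundedness: (Y(0),Y(1)) ⟂ D | σ(X)
    (hunconf : CondIndepFun (MeasurableSpace.comap X inferInstance) hX.comap_le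
      (fun ω => (Y0 ω, Y1 ω)) D μ)
    (τ : ℝ) (hτ : τ ∈ Set.Ioo (0 : ℝ) 1)
    (q0 q1 : ℝ) (f0 f1 : ℝ) (hf0 : 0 < f0) (hf1 : 0 < f1)
    -- η_j(y) = (1{y ≤ q_j} − τ)/f_j
    (η0 η1 : ℝ → ℝ)
    (hη0 : ∀ y, η0 y = ((if y ≤ q0 then (1 : ℝ) else 0) - τ) / f0)
    (hη1 : ∀ y, η1 y = ((if y ≤ q1 then (1 : ℝ) else 0) - τ) / f1)
    -- ψ = (D/p(X))·η₁(Y(1)) − ((1−D)/(1−p(X)))·η₀(Y(0))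
    (ψ : Ω → ℝ)
    (hψ : ∀ ω, ψ ω = (D ω / p (X ω)) * η1 (Y1 ω)
      - ((1 - D ω) / (1 - p (X ω))) * η0 (Y0 ω))
    -- m_j(X) is a version of E[η_j(Y(j)) | σ(X)]
    (m0 m1 : (Fin k → ℝ) → ℝ) (hm0meas : Measurable m0) (hm1meas : Measurable m1)
    (hm0 : (fun ω => m0 (X ω)) =ᵐ[μ]
      μ[(fun ω => η0 (Y0 ω)) | MeasurableSpace.comap X inferInstance])
    (hm1 : (fun ω => m1 (X ω)) =ᵐ[μ]
      μ[(fun ω => η1 (Y1 ω)) | MeasurableSpace.comap X inferInstance])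
    -- n_p(X) = m₁(X)/p(X) + m₀(X)/(1−p(X))
    (np : (Fin k → ℝ) → ℝ)
    (hnp : ∀ x, np x = m1 x / p x + m0 x / (1 - p x))
    -- ε = D − p(X)
    (ε : Ω → ℝ) (hε : ∀ ω, ε ω = D ω - p (X ω))
    -- φ₂ = ψ − n_p(X)·ε
    (φ₂ : Ω → ℝ) (hφ₂ : ∀ ω, φ₂ ω = ψ ω - np (X ω) * ε ω) :
    (μ[(fun ω => ψ ω * ε ω) | MeasurableSpace.comap X inferInstance]
        =ᵐ[μ] fun ω => p (X ω) * (1 - p (X ω)) * np (X ω))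
      ∧
    (μ[(fun ω => φ₂ ω * ε ω) | MeasurableSpace.comap X inferInstance]
        =ᵐ[μ] fun _ => (0 : ℝ)) := by
  classical
  set 𝓖 := MeasurableSpace.comap X inferInstance with h𝓖def
  have hle : 𝓖 ≤ mΩ := hX.comap_le
  have hXm : Measurable[𝓖] X := measurable_iff_comap_le.mpr le_rfl
  -- basic measurability
  have hη1m : Measurable η1 := by
    rw [funext hη1]
    exact ((Measurable.ite measurableSet_Iic measurable_const measurable_const).sub
      measurable_const).div_const f1
  have hη0m : Measurable η0 := by
    rw [funext hη0]
    exact ((Measurable.ite measurableSet_Iic measurable_const measurable_const).sub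
      measurable_const).div_const f0
  have hnpm : Measurable np := by
    rw [funext hnp]
    exact (hm1meas.div hp).add (hm0meas.div (measurable_const.sub hp))
  have hεm : Measurable[mΩ] ε := by
    rw [funext hε]; exact hD.sub (hp.comp hX)
  have hψm : Measurable[mΩ] ψ := by
    rw [funext hψ]
    exact ((hD.div (hp.comp hX)).mul (hη1m.comp hY1)).sub
      (((measurable_const.sub hD).div (measurable_const.sub (hp.comp hX))).mul (hη0m.comp hY0))
  have hφ₂m : Measurable[mΩ] φ₂ := by
    rw [funext hφ₂]; exact hψm.sub ((hnpm.comp hX).mul hεm)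
  -- bounds for η
  have habs : ∀ a : ℝ, a = 0 ∨ a = 1 → |a - τ| ≤ 1 + |τ| := by
    intro a ha
    have h2 := le_abs_self τ
    have h3 := neg_abs_le τ
    rcases ha with rfl | rfl <;> rw [abs_le] <;> constructor <;> linarith
  set R1 : ℝ := (1 + |τ|) / f1 with hR1def
  set R0 : ℝ := (1 + |τ|) / f0 with hR0def
  have hR1nn : 0 ≤ R1 := div_nonneg (by positivity) hf1.le
  have hR0nn : 0 ≤ R0 := div_nonneg (by positivity) hf0.le
  have hbη1 : ∀ y, |η1 y| ≤ R1 := by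
    intro y
    rw [hR1def, hη1, abs_div, abs_of_pos hf1]
    gcongr
    exact habs _ (by split_ifs <;> [right; left] <;> rfl)
  have hbη0 : ∀ y, |η0 y| ≤ R0 := by
    intro y
    rw [hR0def, hη0, abs_div, abs_of_pos hf0]
    gcongr
    exact habs _ (by split_ifs <;> [right; left] <;> rfl)
  -- integrability of basic pieces
  have hDint : Integrable D μ := by
    refine integrable_of_ae_bdd hD.aestronglyMeasurable 1 (Filter.Eventually.of_forall ?_)
    intro ω; rcases hD01 ω with h | h <;> simp [h]
  have hη1Yint : Integrable (fun ω => η1 (Y1 ω)) μ :=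
    integrable_of_ae_bdd (hη1m.comp hY1).aestronglyMeasurable R1
      (Filter.Eventually.of_forall fun ω => hbη1 _)
  have hη0Yint : Integrable (fun ω => η0 (Y0 ω)) μ :=
    integrable_of_ae_bdd (hη0m.comp hY0).aestronglyMeasurable R0
      (Filter.Eventually.of_forall fun ω => hbη0 _)
  -- conditional independence factorization
  have hYY : Measurable[mΩ] (fun ω => (Y0 ω, Y1 ω)) := hY0.prodMk hY1
  have hfac := (condIndepFun_iff_condExp_inter_preimage_eq_mul (μ := μ)
    (hm' := hle) hYY hD).mp hunconf
  set A1 : Set Ω := (fun ω => (Y0 ω, Y1 ω)) ⁻¹' (Set.univ ×ˢ Set.Iic q1) with hA1def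
  set A0 : Set Ω := (fun ω => (Y0 ω, Y1 ω)) ⁻¹' (Set.Iic q0 ×ˢ Set.univ) with hA0def
  set B1 : Set Ω := D ⁻¹' {1} with hB1def
  set B0 : Set Ω := D ⁻¹' {0} with hB0def
  have hA1meas : MeasurableSet[mΩ] A1 := hYY (MeasurableSet.univ.prod measurableSet_Iic)
  have hA0meas : MeasurableSet[mΩ] A0 := hYY (measurableSet_Iic.prod MeasurableSet.univ)
  have hB1meas : MeasurableSet[mΩ] B1 := hD (measurableSet_singleton 1)
  have hB0meas : MeasurableSet[mΩ] B0 := hD (measurableSet_singleton 0)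
  have hfac1 := hfac (Set.univ ×ˢ Set.Iic q1) {1}
    (MeasurableSet.univ.prod measurableSet_Iic) (measurableSet_singleton 1)
  have hfac0 := hfac (Set.Iic q0 ×ˢ Set.univ) {0}
    (measurableSet_Iic.prod MeasurableSet.univ) (measurableSet_singleton 0)
  -- identification of indicator condexps
  have hindB1 : Set.indicator B1 (fun _ => (1:ℝ)) = D := by
    funext ω; rcases hD01 ω with h | h <;> simp [Set.indicator_apply, hB1def, h]
  have hindB0 : Set.indicator B0 (fun _ => (1:ℝ)) = fun ω => 1 - D ω := by
    funext ω; rcases hD01 ω with h | h <;> simp [Set.indicator_apply, hB0def, h]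
  have hB1p : μ[Set.indicator B1 (fun _ => (1:ℝ))|𝓖] =ᵐ[μ] fun ω => p (X ω) := by
    rw [hindB1]; exact hpX.symm
  have hB0p : μ[Set.indicator B0 (fun _ => (1:ℝ))|𝓖] =ᵐ[μ] fun ω => 1 - p (X ω) := by
    rw [hindB0]
    have hpt : (fun ω => 1 - D ω) = fun ω => (-1 : ℝ) * D ω + 1 := by funext ω; ring
    rw [hpt]
    refine (condexp_affine (μ := μ) hle (-1) 1 hDint).trans ?_
    filter_upwards [hpX] with ω h
    rw [← h]; ring
  have hA1m : μ[Set.indicator A1 (fun _ => (1:ℝ))|𝓖] =ᵐ[μ] fun ω => f1 * m1 (X ω) + τ := by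
    have hpt : Set.indicator A1 (fun _ => (1:ℝ)) = fun ω => f1 * η1 (Y1 ω) + τ := by
      funext ω
      by_cases h : Y1 ω ≤ q1 <;>
        simp [Set.indicator_apply, hA1def, h, hη1] <;> (field_simp; try ring)
    rw [hpt]
    refine (condexp_affine (μ := μ) hle f1 τ hη1Yint).trans ?_
    filter_upwards [hm1] with ω h
    rw [← h]
  have hA0m : μ[Set.indicator A0 (fun _ => (1:ℝ))|𝓖] =ᵐ[μ] fun ω => f0 * m0 (X ω) + τ := by
    have hpt : Set.indicator A0 (fun _ => (1:ℝ)) = fun ω => f0 * η0 (Y0 ω) + τ := by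
      funext ω
      by_cases h : Y0 ω ≤ q0 <;>
        simp [Set.indicator_apply, hA0def, h, hη0] <;> (field_simp; try ring)
    rw [hpt]
    refine (condexp_affine (μ := μ) hle f0 τ hη0Yint).trans ?_
    filter_upwards [hm0] with ω h
    rw [← h]
  -- product condexps via conditional independence
  have hfac1' : μ[Set.indicator (A1 ∩ B1) (fun _ => (1:ℝ))|𝓖] =ᵐ[μ]
      fun ω => (μ[Set.indicator A1 (fun _ => (1:ℝ))|𝓖]) ω
        * (μ[Set.indicator B1 (fun _ => (1:ℝ))|𝓖]) ω := hfac1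
  have hfac0' : μ[Set.indicator (A0 ∩ B0) (fun _ => (1:ℝ))|𝓖] =ᵐ[μ]
      fun ω => (μ[Set.indicator A0 (fun _ => (1:ℝ))|𝓖]) ω
        * (μ[Set.indicator B0 (fun _ => (1:ℝ))|𝓖]) ω := hfac0
  set u1 : Ω → ℝ := fun ω => D ω * η1 (Y1 ω) with hu1def
  set u0 : Ω → ℝ := fun ω => (1 - D ω) * η0 (Y0 ω) with hu0def
  have hu1 : μ[u1|𝓖] =ᵐ[μ] fun ω => p (X ω) * m1 (X ω) := by
    have hpt : u1 = fun ω => f1⁻¹ * Set.indicator (A1 ∩ B1) (fun _ => (1:ℝ)) ω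
        + (-(τ * f1⁻¹)) * Set.indicator B1 (fun _ => (1:ℝ)) ω := by
      funext ω
      rcases hD01 ω with h | h <;> by_cases h1 : Y1 ω ≤ q1 <;>
        simp [hu1def, Set.indicator_apply, hA1def, hB1def, h, h1, hη1] <;> (field_simp; try ring)
    rw [hpt]
    refine (condexp_lin2 (μ := μ) hle _ _ (integrable_indicator_one (hA1meas.inter hB1meas))
      (integrable_indicator_one hB1meas)).trans ?_
    filter_upwards [hfac1', hB1p, hA1m] with ω e1 e2 e3
    rw [e1, e2, e3]
    field_simp
    ring
  have hu0 : μ[u0|𝓖] =ᵐ[μ] fun ω => (1 - p (X ω)) * m0 (X ω) := by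
    have hpt : u0 = fun ω => f0⁻¹ * Set.indicator (A0 ∩ B0) (fun _ => (1:ℝ)) ω
        + (-(τ * f0⁻¹)) * Set.indicator B0 (fun _ => (1:ℝ)) ω := by
      funext ω
      rcases hD01 ω with h | h <;> by_cases h1 : Y0 ω ≤ q0 <;>
        simp [hu0def, Set.indicator_apply, hA0def, hB0def, h, h1, hη0] <;> (field_simp; try ring)
    rw [hpt]
    refine (condexp_lin2 (μ := μ) hle _ _ (integrable_indicator_one (hA0meas.inter hB0meas))
      (integrable_indicator_one hB0meas)).trans ?_
    filter_upwards [hfac0', hB0p, hA0m] with ω e1 e2 e3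
    rw [e1, e2, e3]
    field_simp
    ring
  -- pull-out factors
  set g1 : Ω → ℝ := fun ω => (1 - p (X ω)) / p (X ω) with hg1def
  set g0 : Ω → ℝ := fun ω => p (X ω) / (1 - p (X ω)) with hg0def
  have hg1sm : StronglyMeasurable[𝓖] g1 :=
    ((measurable_const.sub (hp.comp hXm)).div (hp.comp hXm)).stronglyMeasurable
  have hg0sm : StronglyMeasurable[𝓖] g0 :=
    ((hp.comp hXm).div (measurable_const.sub (hp.comp hXm))).stronglyMeasurable
  have hg1b : ∀ᵐ ω ∂μ, ‖g1 ω‖ ≤ 1 / c := by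
    filter_upwards [hoverlap] with ω hov
    obtain ⟨h1, h2⟩ := hov
    have hp0 : (0:ℝ) < p (X ω) := lt_of_lt_of_le hc h1
    rw [Real.norm_eq_abs, hg1def]
    simp only
    rw [abs_div, abs_of_nonneg (by linarith), abs_of_pos hp0]
    exact div_le_div₀ zero_le_one (by linarith) hc h1
  have hg0b : ∀ᵐ ω ∂μ, ‖g0 ω‖ ≤ 1 / c := by
    filter_upwards [hoverlap] with ω hov
    obtain ⟨h1, h2⟩ := hov
    have hp0 : (0:ℝ) < p (X ω) := lt_of_lt_of_le hc h1
    have h1p : (0:ℝ) < 1 - p (X ω) := by linarith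
    rw [Real.norm_eq_abs, hg0def]
    simp only
    rw [abs_div, abs_of_pos hp0, abs_of_pos h1p]
    exact div_le_div₀ zero_le_one (by linarith) hc (by linarith)
  have hu1int : Integrable u1 μ := by
    refine integrable_of_ae_bdd (hD.mul (hη1m.comp hY1)).aestronglyMeasurable R1
      (Filter.Eventually.of_forall fun ω => ?_)
    rcases hD01 ω with h | h <;> simp [hu1def, h]
    exacts [hR1nn, hbη1 _]
  have hu0int : Integrable u0 μ := by
    refine integrable_of_ae_bdd ((measurable_const.sub hD).mul (hη0m.comp hY0)).aestronglyMeasurable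
      R0 (Filter.Eventually.of_forall fun ω => ?_)
    rcases hD01 ω with h | h <;> simp [hu0def, h]
    exacts [hbη0 _, hR0nn]
  have hG1 : μ[g1 * u1|𝓖] =ᵐ[μ] g1 * μ[u1|𝓖] :=
    condExp_stronglyMeasurable_mul_of_bound hle hg1sm hu1int (1/c) hg1b
  have hG0 : μ[g0 * u0|𝓖] =ᵐ[μ] g0 * μ[u0|𝓖] :=
    condExp_stronglyMeasurable_mul_of_bound hle hg0sm hu0int (1/c) hg0b
  have hg1m : Measurable[mΩ] g1 := (measurable_const.sub (hp.comp hX)).div (hp.comp hX)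
  have hg0m : Measurable[mΩ] g0 := (hp.comp hX).div (measurable_const.sub (hp.comp hX))
  have hgu1int : Integrable (g1 * u1) μ := by
    refine integrable_of_ae_bdd (hg1m.mul (hD.mul (hη1m.comp hY1))).aestronglyMeasurable
      ((1/c) * R1) ?_
    filter_upwards [hg1b] with ω hb
    rw [Pi.mul_apply, abs_mul]
    refine mul_le_mul (by rwa [Real.norm_eq_abs] at hb) ?_ (abs_nonneg _)
      (by positivity)
    rcases hD01 ω with h | h <;> simp [hu1def, h]
    exacts [hR1nn, hbη1 _]
  have hgu0int : Integrable (g0 * u0) μ := by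
    refine integrable_of_ae_bdd
      (hg0m.mul ((measurable_const.sub hD).mul (hη0m.comp hY0))).aestronglyMeasurable
      ((1/c) * R0) ?_
    filter_upwards [hg0b] with ω hb
    rw [Pi.mul_apply, abs_mul]
    refine mul_le_mul (by rwa [Real.norm_eq_abs] at hb) ?_ (abs_nonneg _)
      (by positivity)
    rcases hD01 ω with h | h <;> simp [hu0def, h]
    exacts [hbη0 _, hR0nn]
  have hsplit : (fun ω => ψ ω * ε ω) = g1 * u1 + g0 * u0 := by
    funext ω
    rcases hD01 ω with h | h <;>
      simp [Pi.add_apply, Pi.mul_apply, hg1def, hg0def, hu1def, hu0def, hψ, hε, h] <;> ring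
  have hpart1 : μ[(fun ω => ψ ω * ε ω)|𝓖] =ᵐ[μ]
      fun ω => p (X ω) * (1 - p (X ω)) * np (X ω) := by
    rw [hsplit]
    refine (condExp_add hgu1int hgu0int 𝓖).trans ?_
    filter_upwards [hG1, hG0, hu1, hu0, hoverlap] with ω e1 e0 w1 w0 hov
    obtain ⟨h1, h2⟩ := hov
    have hp0 : (0:ℝ) < p (X ω) := lt_of_lt_of_le hc h1
    have h1p : (0:ℝ) < 1 - p (X ω) := by linarith
    simp only [Pi.add_apply, e1, e0, Pi.mul_apply, w1, w0]
    simp only [hg1def, hg0def, hnp]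
    field_simp
  -- a.e. bounds for m_j(X), np(X), ε, ψ
  have hεb : ∀ᵐ ω ∂μ, |ε ω| ≤ 1 := by
    filter_upwards [hoverlap] with ω hov
    obtain ⟨h1, h2⟩ := hov
    rcases hD01 ω with h | h <;> rw [hε, h, abs_le] <;> constructor <;> linarith
  have hm1b : ∀ᵐ ω ∂μ, |m1 (X ω)| ≤ R1 := by
    have h := ae_bdd_condExp_of_ae_bdd (m := 𝓖) (μ := μ) (R := ⟨R1, hR1nn⟩)
      (f := fun ω => η1 (Y1 ω)) (Filter.Eventually.of_forall fun ω => hbη1 _)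
    filter_upwards [h, hm1] with ω h1 h2
    rw [show m1 (X ω) = (μ[(fun ω => η1 (Y1 ω))|𝓖]) ω from h2]
    exact h1
  have hm0b : ∀ᵐ ω ∂μ, |m0 (X ω)| ≤ R0 := by
    have h := ae_bdd_condExp_of_ae_bdd (m := 𝓖) (μ := μ) (R := ⟨R0, hR0nn⟩)
      (f := fun ω => η0 (Y0 ω)) (Filter.Eventually.of_forall fun ω => hbη0 _)
    filter_upwards [h, hm0] with ω h1 h2
    rw [show m0 (X ω) = (μ[(fun ω => η0 (Y0 ω))|𝓖]) ω from h2]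
    exact h1
  set B : ℝ := (R1 + R0) / c with hBdef
  have hBnn : 0 ≤ B := div_nonneg (by linarith) hc.le
  have hnpb : ∀ᵐ ω ∂μ, |np (X ω)| ≤ B := by
    filter_upwards [hm1b, hm0b, hoverlap] with ω b1 b0 hov
    obtain ⟨h1, h2⟩ := hov
    have hp0 : (0:ℝ) < p (X ω) := lt_of_lt_of_le hc h1
    have h1p : (0:ℝ) < 1 - p (X ω) := by linarith
    rw [hnp, hBdef, add_div]
    refine (abs_add_le _ _).trans (add_le_add ?_ ?_)
    · rw [abs_div, abs_of_pos hp0]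
      exact div_le_div₀ hR1nn b1 hc h1
    · rw [abs_div, abs_of_pos h1p]
      exact div_le_div₀ hR0nn b0 hc (by linarith)
  -- the correction term w = np(X) ε²
  set w : Ω → ℝ := fun ω => np (X ω) * (ε ω * ε ω) with hwdef
  have hwint : Integrable w μ := by
    refine integrable_of_ae_bdd ((hnpm.comp hX).mul (hεm.mul hεm)).aestronglyMeasurable B ?_
    filter_upwards [hnpb, hεb] with ω b1 b2
    have h2 : |ε ω * ε ω| ≤ 1 := by
      rw [abs_mul]; exact mul_le_one₀ b2 (abs_nonneg _) b2
    calc |np (X ω) * (ε ω * ε ω)| = |np (X ω)| * |ε ω * ε ω| := abs_mul _ _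
      _ ≤ B * 1 := mul_le_mul b1 h2 (abs_nonneg _) hBnn
      _ = B := mul_one _
  have hψεint : Integrable (fun ω => ψ ω * ε ω) μ := by
    refine integrable_of_ae_bdd (hψm.mul hεm).aestronglyMeasurable (R1/c + R0/c) ?_
    filter_upwards [hoverlap, hεb] with ω hov hb
    obtain ⟨h1, h2⟩ := hov
    have hp0 : (0:ℝ) < p (X ω) := lt_of_lt_of_le hc h1
    have h1p : (0:ℝ) < 1 - p (X ω) := by linarith
    have hψb : |ψ ω| ≤ R1/c + R0/c := by
      rcases hD01 ω with h | h
      · have hval : ψ ω = -(η0 (Y0 ω) / (1 - p (X ω))) := by rw [hψ, h]; ring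
        rw [hval, abs_neg, abs_div, abs_of_pos h1p]
        have : |η0 (Y0 ω)| / (1 - p (X ω)) ≤ R0 / c :=
          div_le_div₀ hR0nn (hbη0 _) hc (by linarith)
        have hR1c : 0 ≤ R1 / c := div_nonneg hR1nn hc.le
        linarith
      · have hval : ψ ω = η1 (Y1 ω) / p (X ω) := by rw [hψ, h]; ring
        rw [hval, abs_div, abs_of_pos hp0]
        have : |η1 (Y1 ω)| / p (X ω) ≤ R1 / c := div_le_div₀ hR1nn (hbη1 _) hc h1
        have hR0c : 0 ≤ R0 / c := div_nonneg hR0nn hc.le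
        linarith
    calc |ψ ω * ε ω| = |ψ ω| * |ε ω| := abs_mul _ _
      _ ≤ (R1/c + R0/c) * 1 := by
          refine mul_le_mul hψb hb (abs_nonneg _) ?_
          have : 0 ≤ R1 / c := div_nonneg hR1nn hc.le
          have : 0 ≤ R0 / c := div_nonneg hR0nn hc.le
          linarith
      _ = R1/c + R0/c := mul_one _
  -- conditional expectation of w
  set c1 : Ω → ℝ := fun ω => np (X ω) * (1 - 2 * p (X ω)) with hc1def
  set c2 : Ω → ℝ := fun ω => np (X ω) * (p (X ω) * p (X ω)) with hc2def
  have hc1sm : StronglyMeasurable[𝓖] c1 :=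
    ((hnpm.comp hXm).mul (measurable_const.sub ((hp.comp hXm).const_mul 2))).stronglyMeasurable
  have hc2sm : StronglyMeasurable[𝓖] c2 :=
    ((hnpm.comp hXm).mul ((hp.comp hXm).mul (hp.comp hXm))).stronglyMeasurable
  have hc1b : ∀ᵐ ω ∂μ, ‖c1 ω‖ ≤ B := by
    filter_upwards [hnpb, hoverlap] with ω b1 hov
    obtain ⟨h1, h2⟩ := hov
    rw [Real.norm_eq_abs, hc1def]
    simp only
    rw [abs_mul]
    have h12 : |1 - 2 * p (X ω)| ≤ 1 := by
      rw [abs_le]; constructor <;> linarith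
    calc |np (X ω)| * |1 - 2 * p (X ω)| ≤ B * 1 :=
        mul_le_mul b1 h12 (abs_nonneg _) hBnn
      _ = B := mul_one _
  have hc2int : Integrable c2 μ := by
    refine integrable_of_ae_bdd ((hnpm.comp hX).mul ((hp.comp hX).mul (hp.comp hX))).aestronglyMeasurable B ?_
    filter_upwards [hnpb, hoverlap] with ω b1 hov
    obtain ⟨h1, h2⟩ := hov
    rw [hc2def]
    simp only
    rw [abs_mul]
    have hpp : |p (X ω) * p (X ω)| ≤ 1 := by
      rw [abs_mul, abs_of_pos (lt_of_lt_of_le hc h1)]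
      nlinarith
    calc |np (X ω)| * |p (X ω) * p (X ω)| ≤ B * 1 :=
        mul_le_mul b1 hpp (abs_nonneg _) hBnn
      _ = B := mul_one _
  have hc1Dint : Integrable (c1 * D) μ := by
    refine integrable_of_ae_bdd
      (((hnpm.comp hX).mul (measurable_const.sub ((hp.comp hX).const_mul 2))).mul hD).aestronglyMeasurable B ?_
    filter_upwards [hc1b] with ω b1
    rw [Pi.mul_apply, abs_mul]
    have hDb : |D ω| ≤ 1 := by rcases hD01 ω with h | h <;> simp [h]
    calc |c1 ω| * |D ω| ≤ B * 1 :=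
        mul_le_mul (by rwa [Real.norm_eq_abs] at b1) hDb (abs_nonneg _) hBnn
      _ = B := mul_one _
  have hwpt : w = c1 * D + c2 := by
    funext ω
    rcases hD01 ω with h | h <;>
      simp [hwdef, hc1def, hc2def, hε, h, Pi.add_apply, Pi.mul_apply] <;> ring
  have hGw : μ[w|𝓖] =ᵐ[μ]
      fun ω => c1 ω * p (X ω) + c2 ω := by
    rw [hwpt]
    refine (condExp_add hc1Dint hc2int 𝓖).trans ?_
    have hmulG : μ[c1 * D|𝓖] =ᵐ[μ] c1 * μ[D|𝓖] :=
      condExp_stronglyMeasurable_mul_of_bound hle hc1sm hDint B hc1b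
    have hc2G : μ[c2|𝓖] = c2 := condExp_of_stronglyMeasurable hle hc2sm hc2int
    rw [hc2G]
    filter_upwards [hmulG, hpX] with ω e1 e2
    rw [Pi.add_apply, e1, Pi.mul_apply, ← e2]
  -- conclusion
  have hpart2 : μ[(fun ω => φ₂ ω * ε ω)|𝓖] =ᵐ[μ] fun _ => (0:ℝ) := by
    have hpt : (fun ω => φ₂ ω * ε ω) = (fun ω => ψ ω * ε ω) - w := by
      funext ω
      simp only [Pi.sub_apply, hφ₂, hwdef]
      ring
    rw [hpt]
    refine (condExp_sub hψεint hwint 𝓖).trans ?_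
    filter_upwards [hpart1, hGw, hoverlap] with ω e1 e2 _
    simp only [Pi.sub_apply, e1, e2, hc1def, hc2def]
    ring
  exact ⟨hpart1, hpart2⟩
end

section
/- (Corollary 2.1, part (1): NCQTE asymptotic variance). Almost surely, E[φ₂² | σ(X₁)] = E[ (m₁(X) − m₀(X))² + σ²_{τ,1}(X)/p(X) + σ²_{τ,0}(X)/(1−p(X)) | σ(X₁) ], where σ²_{τ,j}(X) = E[η_j(Y(j))² | σ(X)] − m_j(X)² is the conditional variance of η_j(Y(j)) given σ(X). -/
open MeasureTheory ProbabilityTheory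

set_option maxHeartbeats 1600000 in
private lemma ncqte_alg1 (τ f0 f1 : ℝ) (hf0' : f0 ≠ 0) (hf1' : f1 ≠ 0) :
    ∀ (pv nv i1 i0 d : ℝ), pv ≠ 0 → 1 - pv ≠ 0 →
    (d = 0 ∨ d = 1) → (i1 = 0 ∨ i1 = 1) → (i0 = 0 ∨ i0 = 1) →
    (d / pv * ((i1 - τ) / f1) - (1 - d) / (1 - pv) * ((i0 - τ) / f0) - nv * (d - pv)) ^ 2
    = τ^2 * (1/f0)^2 * (1/(1 - pv))^2 + nv^2 * pv^2 + 2*nv*pv*τ*(1/(1 - pv))*(1/f0)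
    + (τ^2 * (1/f1)^2 * (1/pv)^2 - τ^2 * (1/f0)^2 * (1/(1 - pv))^2 + nv^2*(1 - 2*pv)
        + 2*nv*(1 - pv)*τ*(1/pv)*(1/f1) - 2*nv*pv*τ*(1/(1 - pv))*(1/f0)) * d
    + ((1 - 2*τ)*(1/f1)^2*(1/pv)^2 - 2*nv*(1 - pv)*(1/f1)*(1/pv)) * (d * i1)
    + ((1 - 2*τ)*(1/f0)^2*(1/(1 - pv))^2 - 2*nv*pv*(1/f0)*(1/(1 - pv))) * i0
    + (-((1 - 2*τ)*(1/f0)^2*(1/(1 - pv))^2 - 2*nv*pv*(1/f0)*(1/(1 - pv)))) * (d * i0) := by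
  rintro pv nv i1 i0 d h0 h1 (rfl | rfl) (rfl | rfl) (rfl | rfl) <;>
    simp only [zero_mul, mul_zero, one_mul, mul_one, zero_add, add_zero, sub_zero,
      zero_sub, zero_div, div_one, neg_neg, neg_zero] <;>
    field_simp <;> ring

set_option maxHeartbeats 1600000 in
private lemma ncqte_alg2 (τ f0 f1 : ℝ) (hf0' : f0 ≠ 0) (hf1' : f1 ≠ 0) :
    ∀ (pv G1v G0v : ℝ), pv ≠ 0 → 1 - pv ≠ 0 →
    τ^2 * (1/f0)^2 * (1/(1 - pv))^2 + (((1/f1) * G1v + (-(τ/f1))) / pv + ((1/f0) * G0v + (-(τ/f0))) / (1 - pv))^2 * pv^2 + 2*(((1/f1) * G1v + (-(τ/f1))) / pv + ((1/f0) * G0v + (-(τ/f0))) / (1 - pv))*pv*τ*(1/(1 - pv))*(1/f0)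
    + (τ^2 * (1/f1)^2 * (1/pv)^2 - τ^2 * (1/f0)^2 * (1/(1 - pv))^2 + (((1/f1) * G1v + (-(τ/f1))) / pv + ((1/f0) * G0v + (-(τ/f0))) / (1 - pv))^2*(1 - 2*pv)
        + 2*(((1/f1) * G1v + (-(τ/f1))) / pv + ((1/f0) * G0v + (-(τ/f0))) / (1 - pv))*(1 - pv)*τ*(1/pv)*(1/f1) - 2*(((1/f1) * G1v + (-(τ/f1))) / pv + ((1/f0) * G0v + (-(τ/f0))) / (1 - pv))*pv*τ*(1/(1 - pv))*(1/f0)) * pv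
    + ((1 - 2*τ)*(1/f1)^2*(1/pv)^2 - 2*(((1/f1) * G1v + (-(τ/f1))) / pv + ((1/f0) * G0v + (-(τ/f0))) / (1 - pv))*(1 - pv)*(1/f1)*(1/pv)) * (G1v * pv)
    + ((1 - 2*τ)*(1/f0)^2*(1/(1 - pv))^2 - 2*(((1/f1) * G1v + (-(τ/f1))) / pv + ((1/f0) * G0v + (-(τ/f0))) / (1 - pv))*pv*(1/f0)*(1/(1 - pv))) * G0v
    + (-((1 - 2*τ)*(1/f0)^2*(1/(1 - pv))^2 - 2*(((1/f1) * G1v + (-(τ/f1))) / pv + ((1/f0) * G0v + (-(τ/f0))) / (1 - pv))*pv*(1/f0)*(1/(1 - pv)))) * (G0v * pv)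
    = (((1/f1) * G1v + (-(τ/f1))) - ((1/f0) * G0v + (-(τ/f0))))^2 + ((((1-2*τ)/f1^2) * G1v + τ^2/f1^2) - ((1/f1) * G1v + (-(τ/f1)))^2)/pv + ((((1-2*τ)/f0^2) * G0v + τ^2/f0^2) - ((1/f0) * G0v + (-(τ/f0)))^2)/(1 - pv) := by
  intro pv G1v G0v h0 h1
  field_simp
  ring

set_option maxHeartbeats 2000000 in
/-- **Corollary 2.1, part (1): NCQTE asymptotic variance.** Almost surely
`E[φ₂² | σ(X₁)] = E[ (m₁(X) − m₀(X))² + σ²_{τ,1}(X)/p(X) + σ²_{τ,0}(X)/(1−p(X)) | σ(X₁) ]`,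
where `σ²_{τ,j}(X) = E[η_j(Y(j))² | σ(X)] − m_j(X)²`. -/
theorem ncqte_asymptotic_variance
    {Ω : Type*} [mΩ : MeasurableSpace Ω] [StandardBorelSpace Ω] [Nonempty Ω]
    (μ : Measure Ω) [IsProbabilityMeasure μ]
    {k l : ℕ} (hk : 2 ≤ k) (hl : 1 ≤ l) (hlk : l < k)
    (D : Ω → ℝ) (Y0 Y1 : Ω → ℝ) (X : Ω → Fin k → ℝ)
    (hD : Measurable D) (hY0 : Measurable Y0) (hY1 : Measurable Y1) (hX : Measurable X)
    (hD01 : ∀ ω, D ω = 0 ∨ D ω = 1)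
    (hY0int : Integrable Y0 μ) (hY1int : Integrable Y1 μ)
    (X₁ : Ω → Fin l → ℝ)
    (hX₁ : ∀ ω i, X₁ ω i = X ω (Fin.castLE hlk.le i))
    -- p(X) is a version of E[D | σ(X)]
    (p : (Fin k → ℝ) → ℝ) (hp : Measurable p)
    (hpX : (fun ω => p (X ω)) =ᵐ[μ] μ[D | MeasurableSpace.comap X inferInstance])
    -- overlap
    (c : ℝ) (hc : 0 < c)
    (hoverlap : ∀ᵐ ω ∂μ, c ≤ p (X ω) ∧ p (X ω) ≤ 1 - c)
    -- unconfoundedness: (Y(0),Y(1)) ⟂ D | σ(X)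
    (hunconf : CondIndepFun (MeasurableSpace.comap X inferInstance) hX.comap_le
      (fun ω => (Y0 ω, Y1 ω)) D μ)
    (τ : ℝ) (hτ : τ ∈ Set.Ioo (0 : ℝ) 1)
    (q0 q1 : ℝ) (f0 f1 : ℝ) (hf0 : 0 < f0) (hf1 : 0 < f1)
    -- η_j(y) = (1{y ≤ q_j} − τ)/f_j
    (η0 η1 : ℝ → ℝ)
    (hη0 : ∀ y, η0 y = ((if y ≤ q0 then (1 : ℝ) else 0) - τ) / f0)
    (hη1 : ∀ y, η1 y = ((if y ≤ q1 then (1 : ℝ) else 0) - τ) / f1)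
    -- ψ = (D/p(X))·η₁(Y(1)) − ((1−D)/(1−p(X)))·η₀(Y(0))
    (ψ : Ω → ℝ)
    (hψ : ∀ ω, ψ ω = (D ω / p (X ω)) * η1 (Y1 ω)
      - ((1 - D ω) / (1 - p (X ω))) * η0 (Y0 ω))
    -- m_j(X) is a version of E[η_j(Y(j)) | σ(X)]
    (m0 m1 : (Fin k → ℝ) → ℝ) (hm0meas : Measurable m0) (hm1meas : Measurable m1)
    (hm0 : (fun ω => m0 (X ω)) =ᵐ[μ]
      μ[(fun ω => η0 (Y0 ω)) | MeasurableSpace.comap X inferInstance])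
    (hm1 : (fun ω => m1 (X ω)) =ᵐ[μ]
      μ[(fun ω => η1 (Y1 ω)) | MeasurableSpace.comap X inferInstance])
    -- n_p(X) = m₁(X)/p(X) + m₀(X)/(1−p(X))
    (np : (Fin k → ℝ) → ℝ)
    (hnp : ∀ x, np x = m1 x / p x + m0 x / (1 - p x))
    -- ε = D − p(X)
    (ε : Ω → ℝ) (hε : ∀ ω, ε ω = D ω - p (X ω))
    -- φ₂ = ψ − n_p(X)·ε
    (φ₂ : Ω → ℝ) (hφ₂ : ∀ ω, φ₂ ω = ψ ω - np (X ω) * ε ω) :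
    μ[(fun ω => (φ₂ ω) ^ 2) | MeasurableSpace.comap X₁ inferInstance]
      =ᵐ[μ]
    μ[(fun ω =>
        (m1 (X ω) - m0 (X ω)) ^ 2
      + (condExp (MeasurableSpace.comap X inferInstance) μ
            (fun ω' => (η1 (Y1 ω')) ^ 2) ω - (m1 (X ω)) ^ 2) / p (X ω)
      + (condExp (MeasurableSpace.comap X inferInstance) μ
            (fun ω' => (η0 (Y0 ω')) ^ 2) ω - (m0 (X ω)) ^ 2) / (1 - p (X ω))) |
      MeasurableSpace.comap X₁ inferInstance] := by
  classical
  -- notation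
  set mX := MeasurableSpace.comap X inferInstance with hmXdef
  have hmX : mX ≤ mΩ := hX.comap_le
  have hXmX : Measurable[mX] X := measurable_iff_comap_le.mpr le_rfl
  -- σ(X₁) ≤ σ(X)
  have hX1eq : X₁ = (fun (x : Fin k → ℝ) (i : Fin l) => x (Fin.castLE hlk.le i)) ∘ X :=
    funext fun ω => funext fun i => hX₁ ω i
  have hπ : Measurable (fun (x : Fin k → ℝ) (i : Fin l) => x (Fin.castLE hlk.le i)) :=
    measurable_pi_lambda _ fun i => measurable_pi_apply _
  have hle1 : MeasurableSpace.comap X₁ inferInstance ≤ mX := by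
    rw [hX1eq, ← MeasurableSpace.comap_comp]
    exact MeasurableSpace.comap_mono hπ.comap_le
  -- elementary constants
  obtain ⟨hτ0, hτ1⟩ := hτ
  have hμne : μ ≠ 0 := IsProbabilityMeasure.ne_zero μ
  have hne : (MeasureTheory.ae μ).NeBot := ae_neBot.mpr hμne
  have hc2 : c ≤ 1 - c := by
    obtain ⟨ω, hω1, hω2⟩ := hoverlap.exists
    linarith
  have hf0' : f0 ≠ 0 := ne_of_gt hf0
  have hf1' : f1 ≠ 0 := ne_of_gt hf1
  set K : ℝ := (1 / f1 + 1 / f0) / c with hKdef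
  have hK0 : 0 < K := by positivity
  -- clamped propensity score and clamped n_p
  set P : Ω → ℝ := fun ω => max c (min (1 - c) (p (X ω))) with hPdef
  set Nc : Ω → ℝ := fun ω => max (-K) (min K (np (X ω))) with hNdef
  have hPlb : ∀ ω, c ≤ P ω := fun ω => le_max_left _ _
  have hPub : ∀ ω, P ω ≤ 1 - c := fun ω => max_le hc2 (min_le_left _ _)
  have hPpos : ∀ ω, 0 < P ω := fun ω => lt_of_lt_of_le hc (hPlb ω)
  have hP1pos : ∀ ω, 0 < 1 - P ω := fun ω => by have := hPub ω; linarith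
  have eqP : (fun ω => P ω) =ᵐ[μ] fun ω => p (X ω) := by
    filter_upwards [hoverlap] with ω hω
    simp only [hPdef]
    rw [min_eq_right hω.2, max_eq_right hω.1]
  -- measurability
  have hnpR : Measurable np := by
    have h : np = fun x => m1 x / p x + m0 x / (1 - p x) := funext hnp
    rw [h]
    exact (hm1meas.div hp).add (hm0meas.div (measurable_const.sub hp))
  have hpm : Measurable[mX] fun ω => p (X ω) := hp.comp hXmX
  have hPmX : Measurable[mX] P :=
    Measurable.max measurable_const (Measurable.min measurable_const hpm)
  have hNmX : Measurable[mX] Nc :=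
    Measurable.max measurable_const (Measurable.min measurable_const (hnpR.comp hXmX))
  -- indicator functions
  set g1 : Ω → ℝ := fun ω => if Y1 ω ≤ q1 then 1 else 0 with hg1def
  set g0 : Ω → ℝ := fun ω => if Y0 ω ≤ q0 then 1 else 0 with hg0def
  have hg1meas : Measurable[mΩ] g1 :=
    Measurable.ite (measurableSet_le hY1 measurable_const) measurable_const measurable_const
  have hg0meas : Measurable[mΩ] g0 :=
    Measurable.ite (measurableSet_le hY0 measurable_const) measurable_const measurable_const
  -- a generic integrability criterion
  have hint : ∀ (f : Ω → ℝ), Measurable[mΩ] f → ∀ C : ℝ, (∀ ω, |f ω| ≤ C) → Integrable f μ := by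
    intro f hf C hC
    exact (integrable_const C).mono' hf.aestronglyMeasurable
      (Filter.Eventually.of_forall fun ω => by simpa [Real.norm_eq_abs] using hC ω)
  have hg1b : ∀ ω, |g1 ω| ≤ 1 := by
    intro ω; simp only [hg1def]; by_cases h : Y1 ω ≤ q1 <;> simp [h]
  have hg0b : ∀ ω, |g0 ω| ≤ 1 := by
    intro ω; simp only [hg0def]; by_cases h : Y0 ω ≤ q0 <;> simp [h]
  have hDb : ∀ ω, |D ω| ≤ 1 := by
    intro ω; rcases hD01 ω with h | h <;> simp [h]
  have hg1int : Integrable g1 μ := hint g1 hg1meas 1 hg1b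
  have hg0int : Integrable g0 μ := hint g0 hg0meas 1 hg0b
  have hDint : Integrable D μ := hint D hD 1 hDb
  have hDg1int : Integrable (D * g1) μ := by
    refine hint (D * g1) (hD.mul hg1meas) 1 fun ω => ?_
    have := (abs_mul (D ω) (g1 ω)) ▸ mul_le_mul (hDb ω) (hg1b ω) (abs_nonneg _) zero_le_one
    simpa [abs_mul] using mul_le_mul (hDb ω) (hg1b ω) (abs_nonneg _) zero_le_one
  have hDg0int : Integrable (D * g0) μ := by
    refine hint (D * g0) (hD.mul hg0meas) 1 fun ω => ?_
    simpa [abs_mul] using mul_le_mul (hDb ω) (hg0b ω) (abs_nonneg _) zero_le_one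
  -- affine rule for conditional expectation
  have haffine : ∀ (W : Ω → ℝ), Integrable W μ → ∀ a b : ℝ,
      μ[(fun ω => a * W ω + b)|mX] =ᵐ[μ] fun ω => a * (μ[W|mX]) ω + b := by
    intro W hW a b
    have h1 : (fun ω => a * W ω + b) = (a • W) + (fun _ => b) := by
      funext ω; simp
    rw [h1]
    have h2 := condExp_add (m := mX) (hW.smul a) (integrable_const b)
    have h3 := condExp_smul (m := mX) (μ := μ) a W
    have h4 : μ[(fun _ => b)|mX] = fun _ => b := condExp_const hmX b
    filter_upwards [h2, h3] with ω e2 e3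
    simp only [Pi.add_apply, Pi.smul_apply, smul_eq_mul] at e2 e3 ⊢
    rw [e2, e3, h4]
  -- conditional expectation of D
  have hcondD : μ[D|mX] =ᵐ[μ] P := hpX.symm.trans eqP.symm
  -- η as affine functions of the indicators
  have hEta1 : (fun ω => η1 (Y1 ω)) = fun ω => (1/f1) * g1 ω + (-(τ/f1)) := by
    funext ω
    by_cases h : Y1 ω ≤ q1 <;> simp only [hη1, hg1def, h, if_true, if_false] <;> ring
  have hEta0 : (fun ω => η0 (Y0 ω)) = fun ω => (1/f0) * g0 ω + (-(τ/f0)) := by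
    funext ω
    by_cases h : Y0 ω ≤ q0 <;> simp only [hη0, hg0def, h, if_true, if_false] <;> ring
  have hEta1sq : (fun ω => η1 (Y1 ω) ^ 2) = fun ω => ((1-2*τ)/f1^2) * g1 ω + τ^2/f1^2 := by
    funext ω
    by_cases h : Y1 ω ≤ q1 <;> simp only [hη1, hg1def, h, if_true, if_false] <;>
      field_simp <;> ring
  have hEta0sq : (fun ω => η0 (Y0 ω) ^ 2) = fun ω => ((1-2*τ)/f0^2) * g0 ω + τ^2/f0^2 := by
    funext ω
    by_cases h : Y0 ω ≤ q0 <;> simp only [hη0, hg0def, h, if_true, if_false] <;>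
      field_simp <;> ring
  have hm1G : (fun ω => m1 (X ω)) =ᵐ[μ] fun ω => (1/f1) * (μ[g1|mX]) ω + (-(τ/f1)) :=
    hm1.trans (by rw [hEta1]; exact haffine g1 hg1int _ _)
  have hm0G : (fun ω => m0 (X ω)) =ᵐ[μ] fun ω => (1/f0) * (μ[g0|mX]) ω + (-(τ/f0)) :=
    hm0.trans (by rw [hEta0]; exact haffine g0 hg0int _ _)
  have hM1 : μ[(fun ω' => η1 (Y1 ω') ^ 2)|mX] =ᵐ[μ]
      fun ω => ((1-2*τ)/f1^2) * (μ[g1|mX]) ω + τ^2/f1^2 := by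
    rw [hEta1sq]; exact haffine g1 hg1int _ _
  have hM0 : μ[(fun ω' => η0 (Y0 ω') ^ 2)|mX] =ᵐ[μ]
      fun ω => ((1-2*τ)/f0^2) * (μ[g0|mX]) ω + τ^2/f0^2 := by
    rw [hEta0sq]; exact haffine g0 hg0int _ _
  -- a.e. bounds on m1 (X ·), m0 (X ·)
  have hm1bdd : ∀ᵐ ω ∂μ, |m1 (X ω)| ≤ 1/f1 := by
    have hb : ∀ᵐ ω ∂μ, |η1 (Y1 ω)| ≤ ((⟨1/f1, by positivity⟩ : NNReal) : ℝ) := by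
      refine Filter.Eventually.of_forall fun ω => ?_
      have hnum : |(if Y1 ω ≤ q1 then (1:ℝ) else 0) - τ| ≤ 1 := by
        by_cases h : Y1 ω ≤ q1 <;> rw [abs_le] <;> constructor <;> simp [h] <;> linarith
      show |η1 (Y1 ω)| ≤ 1/f1
      rw [hη1, abs_div, abs_of_pos hf1]
      gcongr
    have h := ae_bdd_condExp_of_ae_bdd (m := mX) hb
    filter_upwards [hm1, h] with ω e1 e2
    rw [e1]
    exact e2
  have hm0bdd : ∀ᵐ ω ∂μ, |m0 (X ω)| ≤ 1/f0 := by
    have hb : ∀ᵐ ω ∂μ, |η0 (Y0 ω)| ≤ ((⟨1/f0, by positivity⟩ : NNReal) : ℝ) := by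
      refine Filter.Eventually.of_forall fun ω => ?_
      have hnum : |(if Y0 ω ≤ q0 then (1:ℝ) else 0) - τ| ≤ 1 := by
        by_cases h : Y0 ω ≤ q0 <;> rw [abs_le] <;> constructor <;> simp [h] <;> linarith
      show |η0 (Y0 ω)| ≤ 1/f0
      rw [hη0, abs_div, abs_of_pos hf0]
      gcongr
    have h := ae_bdd_condExp_of_ae_bdd (m := mX) hb
    filter_upwards [hm0, h] with ω e1 e2
    rw [e1]
    exact e2
  -- Nc agrees a.e. with np (X ·)
  have hNae : Nc =ᵐ[μ] fun ω => np (X ω) := by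
    filter_upwards [hoverlap, hm1bdd, hm0bdd] with ω hov hb1 hb0
    have hppos : 0 < p (X ω) := lt_of_lt_of_le hc hov.1
    have hp1pos : 0 < 1 - p (X ω) := by linarith [hov.2]
    have hc1p : c ≤ 1 - p (X ω) := by linarith [hov.2]
    have hnb : |np (X ω)| ≤ K := by
      rw [hnp]
      have e1 : |m1 (X ω) / p (X ω)| ≤ (1/f1)/c := by
        rw [abs_div, abs_of_pos hppos]
        exact div_le_div₀ (by positivity) hb1 hc hov.1
      have e0 : |m0 (X ω) / (1 - p (X ω))| ≤ (1/f0)/c := by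
        rw [abs_div, abs_of_pos hp1pos]
        exact div_le_div₀ (by positivity) hb0 hc hc1p
      calc |m1 (X ω)/p (X ω) + m0 (X ω)/(1 - p (X ω))|
          ≤ |m1 (X ω)/p (X ω)| + |m0 (X ω)/(1 - p (X ω))| := abs_add_le _ _
        _ ≤ (1/f1)/c + (1/f0)/c := add_le_add e1 e0
        _ = K := by rw [hKdef]; ring
    simp only [hNdef]
    rw [min_eq_right (abs_le.mp hnb).2, max_eq_right (abs_le.mp hnb).1]
  -- conditional independence: conditional expectations of products
  have hpair : Measurable[mΩ] fun ω => (Y0 ω, Y1 ω) := hY0.prodMk hY1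
  have key := (condIndepFun_iff_condExp_inter_preimage_eq_mul (μ := μ) hpair hD).mp hunconf
  have iA : ((D ⁻¹' {1}).indicator fun _ => (1:ℝ)) = D := by
    funext ω
    rcases hD01 ω with h | h <;> simp [Set.indicator_apply, h]
  have iB1 : (((fun ω => (Y0 ω, Y1 ω)) ⁻¹' (Set.univ ×ˢ Set.Iic q1)).indicator
      fun _ => (1:ℝ)) = g1 := by
    funext ω
    by_cases h : Y1 ω ≤ q1 <;> simp [Set.indicator_apply, h, hg1def]
  have iB0 : (((fun ω => (Y0 ω, Y1 ω)) ⁻¹' (Set.Iic q0 ×ˢ Set.univ)).indicator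
      fun _ => (1:ℝ)) = g0 := by
    funext ω
    by_cases h : Y0 ω ≤ q0 <;> simp [Set.indicator_apply, h, hg0def]
  have iB1A : (((fun ω => (Y0 ω, Y1 ω)) ⁻¹' (Set.univ ×ˢ Set.Iic q1) ∩ D ⁻¹' {1}).indicator
      fun _ => (1:ℝ)) = D * g1 := by
    funext ω
    rcases hD01 ω with h | h <;> by_cases h' : Y1 ω ≤ q1 <;>
      simp [Set.indicator_apply, h, h', hg1def]
  have iB0A : (((fun ω => (Y0 ω, Y1 ω)) ⁻¹' (Set.Iic q0 ×ˢ Set.univ) ∩ D ⁻¹' {1}).indicator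
      fun _ => (1:ℝ)) = D * g0 := by
    funext ω
    rcases hD01 ω with h | h <;> by_cases h' : Y0 ω ≤ q0 <;>
      simp [Set.indicator_apply, h, h', hg0def]
  have k1 := key (Set.univ ×ˢ Set.Iic q1) {1} (MeasurableSet.univ.prod measurableSet_Iic)
    (measurableSet_singleton 1)
  rw [iB1A, iB1, iA] at k1
  have k0 := key (Set.Iic q0 ×ˢ Set.univ) {1} (measurableSet_Iic.prod MeasurableSet.univ)
    (measurableSet_singleton 1)
  rw [iB0A, iB0, iA] at k0
  have hDg1P : μ[D * g1|mX] =ᵐ[μ] fun ω => (μ[g1|mX]) ω * P ω := by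
    refine k1.trans ?_
    filter_upwards [hcondD] with ω h
    rw [h]
  have hDg0P : μ[D * g0|mX] =ᵐ[μ] fun ω => (μ[g0|mX]) ω * P ω := by
    refine k0.trans ?_
    filter_upwards [hcondD] with ω h
    rw [h]
  -- coefficient functions
  set cA : Ω → ℝ := fun ω => τ^2 * (1/f0)^2 * (1/(1 - P ω))^2 + (Nc ω)^2 * (P ω)^2
      + 2 * Nc ω * P ω * τ * (1/(1 - P ω)) * (1/f0) with hcAdef
  set cB : Ω → ℝ := fun ω => τ^2 * (1/f1)^2 * (1/P ω)^2 - τ^2 * (1/f0)^2 * (1/(1 - P ω))^2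
      + (Nc ω)^2 * (1 - 2 * P ω) + 2 * Nc ω * (1 - P ω) * τ * (1/P ω) * (1/f1)
      - 2 * Nc ω * P ω * τ * (1/(1 - P ω)) * (1/f0) with hcBdef
  set cC : Ω → ℝ := fun ω => (1 - 2*τ) * (1/f1)^2 * (1/P ω)^2
      - 2 * Nc ω * (1 - P ω) * (1/f1) * (1/P ω) with hcCdef
  set cF : Ω → ℝ := fun ω => (1 - 2*τ) * (1/f0)^2 * (1/(1 - P ω))^2
      - 2 * Nc ω * P ω * (1/f0) * (1/(1 - P ω)) with hcFdef
  set cE : Ω → ℝ := fun ω => -cF ω with hcEdef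
  -- measurability of coefficients w.r.t. mX
  have hinvP : Measurable[mX] fun ω => 1/P ω := measurable_const.div hPmX
  have hinv1P : Measurable[mX] fun ω => 1/(1 - P ω) :=
    measurable_const.div (measurable_const.sub hPmX)
  have hcAmX : Measurable[mX] cA := by
    rw [hcAdef]
    exact (((measurable_const.mul (hinv1P.pow_const 2)).add
      ((hNmX.pow_const 2).mul (hPmX.pow_const 2))).add
      (((((measurable_const.mul hNmX).mul hPmX).mul measurable_const).mul hinv1P).mul
        measurable_const))
  have hcBmX : Measurable[mX] cB := by
    rw [hcBdef]
    exact (((((measurable_const.mul (hinvP.pow_const 2)).sub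
      (measurable_const.mul (hinv1P.pow_const 2))).add
      ((hNmX.pow_const 2).mul (measurable_const.sub (measurable_const.mul hPmX)))).add
      (((((measurable_const.mul hNmX).mul (measurable_const.sub hPmX)).mul
        measurable_const).mul hinvP).mul measurable_const)).sub
      (((((measurable_const.mul hNmX).mul hPmX).mul measurable_const).mul hinv1P).mul
        measurable_const))
  have hcCmX : Measurable[mX] cC := by
    rw [hcCdef]
    exact (measurable_const.mul (hinvP.pow_const 2)).sub
      ((((measurable_const.mul hNmX).mul (measurable_const.sub hPmX)).mul
        measurable_const).mul hinvP)
  have hcFmX : Measurable[mX] cF := by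
    rw [hcFdef]
    exact (measurable_const.mul (hinv1P.pow_const 2)).sub
      ((((measurable_const.mul hNmX).mul hPmX).mul measurable_const).mul hinv1P)
  have hcEmX : Measurable[mX] cE := by
    rw [hcEdef]; exact hcFmX.neg
  -- bound helpers
  have habs_mul : ∀ {x y a b : ℝ}, |x| ≤ a → |y| ≤ b → |x * y| ≤ a * b := by
    intro x y a b hx hy
    rw [abs_mul]
    exact mul_le_mul hx hy (abs_nonneg _) ((abs_nonneg _).trans hx)
  have habs_add : ∀ {x y a b : ℝ}, |x| ≤ a → |y| ≤ b → |x + y| ≤ a + b :=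
    fun hx hy => (abs_add_le _ _).trans (add_le_add hx hy)
  have habs_sub : ∀ {x y a b : ℝ}, |x| ≤ a → |y| ≤ b → |x - y| ≤ a + b := by
    intro x y a b hx hy
    rw [sub_eq_add_neg]
    exact (abs_add_le _ _).trans (add_le_add hx ((abs_neg y) ▸ hy))
  have habs_pow : ∀ {x a : ℝ}, |x| ≤ a → |x^2| ≤ a^2 := by
    intro x a hx
    rw [abs_pow]
    exact pow_le_pow_left₀ (abs_nonneg _) hx 2
  -- atom bounds
  have hbP : ∀ ω, |P ω| ≤ 1 := fun ω => by
    have h1 := hPlb ω; have h2 := hPub ω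
    rw [abs_le]; constructor <;> linarith
  have hb1P : ∀ ω, |1 - P ω| ≤ 1 := fun ω => by
    have h1 := hPlb ω; have h2 := hPub ω
    rw [abs_le]; constructor <;> linarith
  have hb2P : ∀ ω, |1 - 2 * P ω| ≤ 1 := fun ω => by
    have h1 := hPlb ω; have h2 := hPub ω
    rw [abs_le]; constructor <;> linarith
  have hbiP : ∀ ω, |1/P ω| ≤ 1/c := fun ω => by
    have h0 := hPpos ω
    rw [abs_of_pos (by positivity)]
    exact one_div_le_one_div_of_le hc (hPlb ω)
  have hbi1P : ∀ ω, |1/(1 - P ω)| ≤ 1/c := fun ω => by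
    have h0 := hP1pos ω
    have h2 := hPub ω
    rw [abs_of_pos (by positivity)]
    exact one_div_le_one_div_of_le hc (by linarith)
  have hbN : ∀ ω, |Nc ω| ≤ K := fun ω => by
    simp only [hNdef]
    rw [abs_le]
    refine ⟨le_max_left _ _, max_le (by linarith) (min_le_left _ _)⟩
  have hbτ : |τ| ≤ 1 := by rw [abs_le]; constructor <;> linarith
  have hbτsq : |τ^2| ≤ 1 := by
    rw [abs_of_nonneg (by positivity)]
    calc τ^2 ≤ 1^2 := pow_le_pow_left₀ hτ0.le hτ1.le 2
      _ = 1 := one_pow 2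
  have hb2τ : |1 - 2*τ| ≤ 1 := by rw [abs_le]; constructor <;> linarith
  have hbf0 : |1/f0| ≤ 1/f0 := le_of_eq (abs_of_pos (by positivity))
  have hbf1 : |1/f1| ≤ 1/f1 := le_of_eq (abs_of_pos (by positivity))
  have hbf0sq : |(1/f0)^2| ≤ (1/f0)^2 := le_of_eq (abs_of_pos (by positivity))
  have hbf1sq : |(1/f1)^2| ≤ (1/f1)^2 := le_of_eq (abs_of_pos (by positivity))
  have hb2 : |(2:ℝ)| ≤ 2 := by norm_num
  -- coefficient bounds
  have hcAb : ∀ ω, |cA ω| ≤ 1*(1/f0)^2*(1/c)^2 + K^2*1^2 + 2*K*1*1*(1/c)*(1/f0) := fun ω => by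
    simp only [hcAdef]
    exact habs_add (habs_add (habs_mul (habs_mul hbτsq hbf0sq) (habs_pow (hbi1P ω)))
      (habs_mul (habs_pow (hbN ω)) (habs_pow (hbP ω))))
      (habs_mul (habs_mul (habs_mul (habs_mul (habs_mul hb2 (hbN ω)) (hbP ω)) hbτ)
        (hbi1P ω)) hbf0)
  have hcBb : ∀ ω, |cB ω| ≤ 1*(1/f1)^2*(1/c)^2 + 1*(1/f0)^2*(1/c)^2 + K^2*1
      + 2*K*1*1*(1/c)*(1/f1) + 2*K*1*1*(1/c)*(1/f0) := fun ω => by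
    simp only [hcBdef]
    exact habs_sub (habs_add (habs_add (habs_sub
      (habs_mul (habs_mul hbτsq hbf1sq) (habs_pow (hbiP ω)))
      (habs_mul (habs_mul hbτsq hbf0sq) (habs_pow (hbi1P ω))))
      (habs_mul (habs_pow (hbN ω)) (hb2P ω)))
      (habs_mul (habs_mul (habs_mul (habs_mul (habs_mul hb2 (hbN ω)) (hb1P ω)) hbτ)
        (hbiP ω)) hbf1))
      (habs_mul (habs_mul (habs_mul (habs_mul (habs_mul hb2 (hbN ω)) (hbP ω)) hbτ)
        (hbi1P ω)) hbf0)
  have hcCb : ∀ ω, |cC ω| ≤ 1*(1/f1)^2*(1/c)^2 + 2*K*1*(1/f1)*(1/c) := fun ω => by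
    simp only [hcCdef]
    exact habs_sub (habs_mul (habs_mul hb2τ hbf1sq) (habs_pow (hbiP ω)))
      (habs_mul (habs_mul (habs_mul (habs_mul hb2 (hbN ω)) (hb1P ω)) hbf1) (hbiP ω))
  have hcFb : ∀ ω, |cF ω| ≤ 1*(1/f0)^2*(1/c)^2 + 2*K*1*(1/f0)*(1/c) := fun ω => by
    simp only [hcFdef]
    exact habs_sub (habs_mul (habs_mul hb2τ hbf0sq) (habs_pow (hbi1P ω)))
      (habs_mul (habs_mul (habs_mul (habs_mul hb2 (hbN ω)) (hbP ω)) hbf0) (hbi1P ω))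
  have hcEb : ∀ ω, |cE ω| ≤ 1*(1/f0)^2*(1/c)^2 + 2*K*1*(1/f0)*(1/c) := fun ω => by
    simp only [hcEdef]
    rw [abs_neg]
    exact hcFb ω
  -- integrability of the pieces
  have hcAint : Integrable cA μ := hint cA (hcAmX.mono hmX le_rfl) _ hcAb
  have ht2int : Integrable (cB * D) μ :=
    hint _ ((hcBmX.mono hmX le_rfl).mul hD) _ fun ω => by
      rw [Pi.mul_apply]
      exact habs_mul (hcBb ω) (hDb ω)
  have ht3int : Integrable (cC * (D * g1)) μ :=
    hint _ ((hcCmX.mono hmX le_rfl).mul (hD.mul hg1meas)) _ fun ω => by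
      rw [Pi.mul_apply, Pi.mul_apply]
      exact habs_mul (hcCb ω) (habs_mul (hDb ω) (hg1b ω))
  have ht4int : Integrable (cF * g0) μ :=
    hint _ ((hcFmX.mono hmX le_rfl).mul hg0meas) _ fun ω => by
      rw [Pi.mul_apply]
      exact habs_mul (hcFb ω) (hg0b ω)
  have ht5int : Integrable (cE * (D * g0)) μ :=
    hint _ ((hcEmX.mono hmX le_rfl).mul (hD.mul hg0meas)) _ fun ω => by
      rw [Pi.mul_apply, Pi.mul_apply]
      exact habs_mul (hcEb ω) (habs_mul (hDb ω) (hg0b ω))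
  -- a.e. pointwise decomposition of φ₂²
  have hdecomp : (fun ω => φ₂ ω ^ 2) =ᵐ[μ]
      cA + cB * D + cC * (D * g1) + cF * g0 + cE * (D * g0) := by
    filter_upwards [hoverlap, eqP, hNae] with ω hov hPe hNe
    have hppos : 0 < p (X ω) := lt_of_lt_of_le hc hov.1
    have hp1pos : 0 < 1 - p (X ω) := by linarith [hov.2]
    have hp0 : p (X ω) ≠ 0 := ne_of_gt hppos
    have hp1 : 1 - p (X ω) ≠ 0 := ne_of_gt hp1pos
    have h := ncqte_alg1 τ f0 f1 hf0' hf1' (p (X ω)) (np (X ω)) (if Y1 ω ≤ q1 then 1 else 0)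
      (if Y0 ω ≤ q0 then 1 else 0) (D ω) hp0 hp1 (hD01 ω)
      (by by_cases h : Y1 ω ≤ q1 <;> simp [h]) (by by_cases h : Y0 ω ≤ q0 <;> simp [h])
    simp only [Pi.add_apply, Pi.mul_apply, hcAdef, hcBdef, hcCdef, hcFdef, hcEdef,
      hg1def, hg0def]
    rw [hφ₂ ω, hψ ω, hε ω, hη1 (Y1 ω), hη0 (Y0 ω), hPe, hNe]
    exact h
  -- pull-out identities
  have e1 : μ[cA|mX] = cA :=
    condExp_of_stronglyMeasurable hmX hcAmX.stronglyMeasurable hcAint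
  have e2 : μ[cB * D|mX] =ᵐ[μ] cB * μ[D|mX] :=
    condExp_mul_of_stronglyMeasurable_left hcBmX.stronglyMeasurable ht2int hDint
  have e3 : μ[cC * (D * g1)|mX] =ᵐ[μ] cC * μ[D * g1|mX] :=
    condExp_mul_of_stronglyMeasurable_left hcCmX.stronglyMeasurable ht3int hDg1int
  have e4 : μ[cF * g0|mX] =ᵐ[μ] cF * μ[g0|mX] :=
    condExp_mul_of_stronglyMeasurable_left hcFmX.stronglyMeasurable ht4int hg0int
  have e5 : μ[cE * (D * g0)|mX] =ᵐ[μ] cE * μ[D * g0|mX] :=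
    condExp_mul_of_stronglyMeasurable_left hcEmX.stronglyMeasurable ht5int hDg0int
  -- main identity: conditional variance given σ(X)
  have hmain : μ[(fun ω => φ₂ ω ^ 2)|mX] =ᵐ[μ] (fun ω =>
        (m1 (X ω) - m0 (X ω)) ^ 2
      + (condExp mX μ (fun ω' => (η1 (Y1 ω')) ^ 2) ω - (m1 (X ω)) ^ 2) / p (X ω)
      + (condExp mX μ (fun ω' => (η0 (Y0 ω')) ^ 2) ω - (m0 (X ω)) ^ 2) / (1 - p (X ω))) := by
    have h0 := condExp_congr_ae (m := mX) hdecomp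
    have hsplit1 := condExp_add (m := mX)
      (((hcAint.add ht2int).add ht3int).add ht4int) ht5int
    have hsplit2 := condExp_add (m := mX) ((hcAint.add ht2int).add ht3int) ht4int
    have hsplit3 := condExp_add (m := mX) (hcAint.add ht2int) ht3int
    have hsplit4 := condExp_add (m := mX) hcAint ht2int
    filter_upwards [h0, hsplit1, hsplit2, hsplit3, hsplit4, e2, e3, e4, e5, hDg1P, hDg0P,
      hcondD, eqP, hNae, hm1G, hm0G, hM1, hM0, hoverlap] with ω a0 a1 a2 a3 a4 b2 b3 b4 b5
      c1 c0 cd ep en em1 em0 eM1 eM0 hov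
    have hppos : 0 < p (X ω) := lt_of_lt_of_le hc hov.1
    have hp1pos : 0 < 1 - p (X ω) := by linarith [hov.2]
    have hp0 : p (X ω) ≠ 0 := ne_of_gt hppos
    have hp1 : 1 - p (X ω) ≠ 0 := ne_of_gt hp1pos
    simp only [Pi.add_apply] at a1 a2 a3 a4
    simp only [Pi.mul_apply] at b2 b3 b4 b5
    rw [a0, a1, a2, a3, a4, e1, b2, b3, b4, b5, c1, c0, cd, eM1, eM0, em1, em0]
    simp only [Pi.mul_apply, hcAdef, hcBdef, hcCdef, hcFdef, hcEdef]
    rw [ep, en, hnp (X ω)]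
    rw [em1, em0]
    exact ncqte_alg2 τ f0 f1 hf0' hf1' (p (X ω)) ((μ[g1|mX]) ω) ((μ[g0|mX]) ω) hp0 hp1
  exact (condExp_condExp_of_le hle1 hmX).symm.trans (condExp_congr_ae hmain)
end

section
/- (Corollary 2.1, part (2): PCQTE versus NCQTE variance comparison). Almost surely, E[ψ² | σ(X₁)] = E[φ₂² | σ(X₁)] + E[ p(X)(1−p(X)) · ( m₁(X)/p(X) + m₀(X)/(1−p(X)) )² | σ(X₁) ]; in particular E[φ₂² | σ(X₁)] ≤ E[ψ² | σ(X₁)] a.s., so the asymptotic variance σ²_{ncqte}* of NCQTE never exceeds the asymptotic variance σ²_{pcqte} = σ²_{ocqte} of PCQTE. -/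
open MeasureTheory ProbabilityTheory

set_option maxHeartbeats 1000000

/-- **Corollary 2.1, part (2): PCQTE versus NCQTE variance comparison.** Almost surely
`E[ψ² | σ(X₁)] = E[φ₂² | σ(X₁)] + E[ p(X)(1−p(X))·(m₁(X)/p(X) + m₀(X)/(1−p(X)))² | σ(X₁) ]`;
in particular `E[φ₂² | σ(X₁)] ≤ E[ψ² | σ(X₁)]` a.s., so the asymptotic variance of NCQTE
never exceeds that of PCQTE (which equals that of OCQTE). -/
theorem pcqte_vs_ncqte_variance_comparison
    {Ω : Type*} [mΩ : MeasurableSpace Ω] [StandardBorelSpace Ω] [Nonempty Ω]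
    (μ : Measure Ω) [IsProbabilityMeasure μ]
    {k l : ℕ} (hk : 2 ≤ k) (hl : 1 ≤ l) (hlk : l < k)
    (D : Ω → ℝ) (Y0 Y1 : Ω → ℝ) (X : Ω → Fin k → ℝ)
    (hD : Measurable D) (hY0 : Measurable Y0) (hY1 : Measurable Y1) (hX : Measurable X)
    (hD01 : ∀ ω, D ω = 0 ∨ D ω = 1)
    (hY0int : Integrable Y0 μ) (hY1int : Integrable Y1 μ)
    (X₁ : Ω → Fin l → ℝ)
    (hX₁ : ∀ ω i, X₁ ω i = X ω (Fin.castLE hlk.le i))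
    -- p(X) is a version of E[D | σ(X)]
    (p : (Fin k → ℝ) → ℝ) (hp : Measurable p)
    (hpX : (fun ω => p (X ω)) =ᵐ[μ] μ[D | MeasurableSpace.comap X inferInstance])
    -- overlap
    (c : ℝ) (hc : 0 < c)
    (hoverlap : ∀ᵐ ω ∂μ, c ≤ p (X ω) ∧ p (X ω) ≤ 1 - c)
    -- unconfoundedness: (Y(0),Y(1)) ⟂ D | σ(X)
    (hunconf : CondIndepFun (MeasurableSpace.comap X inferInstance) hX.comap_le
      (fun ω => (Y0 ω, Y1 ω)) D μ)
    (τ : ℝ) (hτ : τ ∈ Set.Ioo (0 : ℝ) 1)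
    (q0 q1 : ℝ) (f0 f1 : ℝ) (hf0 : 0 < f0) (hf1 : 0 < f1)
    -- η_j(y) = (1{y ≤ q_j} − τ)/f_j
    (η0 η1 : ℝ → ℝ)
    (hη0 : ∀ y, η0 y = ((if y ≤ q0 then (1 : ℝ) else 0) - τ) / f0)
    (hη1 : ∀ y, η1 y = ((if y ≤ q1 then (1 : ℝ) else 0) - τ) / f1)
    -- ψ = (D/p(X))·η₁(Y(1)) − ((1−D)/(1−p(X)))·η₀(Y(0))
    (ψ : Ω → ℝ)
    (hψ : ∀ ω, ψ ω = (D ω / p (X ω)) * η1 (Y1 ω)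
      - ((1 - D ω) / (1 - p (X ω))) * η0 (Y0 ω))
    -- m_j(X) is a version of E[η_j(Y(j)) | σ(X)]
    (m0 m1 : (Fin k → ℝ) → ℝ) (hm0meas : Measurable m0) (hm1meas : Measurable m1)
    (hm0 : (fun ω => m0 (X ω)) =ᵐ[μ]
      μ[(fun ω => η0 (Y0 ω)) | MeasurableSpace.comap X inferInstance])
    (hm1 : (fun ω => m1 (X ω)) =ᵐ[μ]
      μ[(fun ω => η1 (Y1 ω)) | MeasurableSpace.comap X inferInstance])
    -- n_p(X) = m₁(X)/p(X) + m₀(X)/(1−p(X))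
    (np : (Fin k → ℝ) → ℝ)
    (hnp : ∀ x, np x = m1 x / p x + m0 x / (1 - p x))
    -- ε = D − p(X)
    (ε : Ω → ℝ) (hε : ∀ ω, ε ω = D ω - p (X ω))
    -- φ₂ = ψ − n_p(X)·ε
    (φ₂ : Ω → ℝ) (hφ₂ : ∀ ω, φ₂ ω = ψ ω - np (X ω) * ε ω) :
    (μ[(fun ω => (ψ ω) ^ 2) | MeasurableSpace.comap X₁ inferInstance]
        =ᵐ[μ]
      μ[(fun ω => (φ₂ ω) ^ 2) | MeasurableSpace.comap X₁ inferInstance]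
        + μ[(fun ω => p (X ω) * (1 - p (X ω)) * (np (X ω)) ^ 2) |
            MeasurableSpace.comap X₁ inferInstance])
      ∧
    (∀ᵐ ω ∂μ,
      (μ[(fun ω' => (φ₂ ω') ^ 2) | MeasurableSpace.comap X₁ inferInstance]) ω
        ≤ (μ[(fun ω' => (ψ ω') ^ 2) | MeasurableSpace.comap X₁ inferInstance]) ω) := by
  classical
  have hmX : (MeasurableSpace.comap X inferInstance) ≤ mΩ := hX.comap_le
  have hπ : Measurable fun (x : Fin k → ℝ) (i : Fin l) => x (Fin.castLE hlk.le i) :=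
    measurable_pi_lambda _ fun i => measurable_pi_apply _
  have hX₁comp : X₁ = (fun (x : Fin k → ℝ) (i : Fin l) => x (Fin.castLE hlk.le i)) ∘ X :=
    funext fun ω => funext fun i => hX₁ ω i
  have hmX₁X : (MeasurableSpace.comap X₁ inferInstance) ≤ (MeasurableSpace.comap X inferInstance) := by
    rw [hX₁comp, ← MeasurableSpace.comap_comp]
    exact MeasurableSpace.comap_mono hπ.comap_le
  have hmX₁ : (MeasurableSpace.comap X₁ inferInstance) ≤ mΩ := hmX₁X.trans hmX
  have hXmX : Measurable[(MeasurableSpace.comap X inferInstance)] X := by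
    intro s hs
    exact ⟨s, hs, rfl⟩
  -- the basic building-block functions
  set u1 : Ω → ℝ := fun ω => ((if Y1 ω ≤ q1 then (1 : ℝ) else 0) - τ) / f1 with hu1def
  set u0 : Ω → ℝ := fun ω => ((if Y0 ω ≤ q0 then (1 : ℝ) else 0) - τ) / f0 with hu0def
  have hu1Y : ∀ ω, η1 (Y1 ω) = u1 ω := by
    intro ω; simp only [hu1def]; exact hη1 _
  have hu0Y : ∀ ω, η0 (Y0 ω) = u0 ω := by
    intro ω; simp only [hu0def]; exact hη0 _
  rw [show (fun ω => η1 (Y1 ω)) = u1 from funext hu1Y] at hm1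
  rw [show (fun ω => η0 (Y0 ω)) = u0 from funext hu0Y] at hm0
  have hite1 : Measurable fun ω => (if Y1 ω ≤ q1 then (1 : ℝ) else 0) :=
    Measurable.ite (hY1 measurableSet_Iic) measurable_const measurable_const
  have hite0 : Measurable fun ω => (if Y0 ω ≤ q0 then (1 : ℝ) else 0) :=
    Measurable.ite (hY0 measurableSet_Iic) measurable_const measurable_const
  have hu1m : Measurable u1 := by
    rw [hu1def]; exact (hite1.sub measurable_const).div_const f1
  have hu0m : Measurable u0 := by
    rw [hu0def]; exact (hite0.sub measurable_const).div_const f0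
  have hnpeq : np = fun x => m1 x / p x + m0 x / (1 - p x) := funext hnp
  have hnpm : Measurable np := by
    rw [hnpeq]; exact (hm1meas.div hp).add (hm0meas.div (measurable_const.sub hp))
  have hψeq : ψ = fun ω => (D ω / p (X ω)) * u1 ω - ((1 - D ω) / (1 - p (X ω))) * u0 ω := by
    funext ω; rw [hψ ω, hu1Y ω, hu0Y ω]
  have hψm : Measurable ψ := by
    rw [hψeq]
    exact ((hD.div (hp.comp hX)).mul hu1m).sub
      (((measurable_const.sub hD).div (measurable_const.sub (hp.comp hX))).mul hu0m)
  have hεeq : ε = fun ω => D ω - p (X ω) := funext hε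
  have hεm : Measurable ε := by rw [hεeq]; exact hD.sub (hp.comp hX)
  have hφ₂eq : φ₂ = fun ω => ψ ω - np (X ω) * ε ω := funext hφ₂
  have hφ₂m : Measurable φ₂ := by
    rw [hφ₂eq]; exact hψm.sub ((hnpm.comp hX).mul hεm)
  -- integrability from a.e. bounds
  have hint : ∀ (f : Ω → ℝ) (C : ℝ), AEStronglyMeasurable f μ →
      (∀ᵐ ω ∂μ, |f ω| ≤ C) → Integrable f μ := by
    intro f C hf hb
    refine (integrable_const C).mono' hf ?_
    simpa [Real.norm_eq_abs] using hb
  -- pointwise bounds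
  have hb1 : ∀ ω, |u1 ω| ≤ 1 / f1 := by
    intro ω
    simp only [hu1def]
    rw [abs_div, abs_of_pos hf1, div_le_div_iff₀ hf1 hf1]
    have h1 : |(if Y1 ω ≤ q1 then (1 : ℝ) else 0) - τ| ≤ 1 := by
      split_ifs <;> exact abs_le.mpr ⟨by linarith [hτ.1, hτ.2], by linarith [hτ.1, hτ.2]⟩
    nlinarith [abs_nonneg ((if Y1 ω ≤ q1 then (1 : ℝ) else 0) - τ)]
  have hb0 : ∀ ω, |u0 ω| ≤ 1 / f0 := by
    intro ω
    simp only [hu0def]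
    rw [abs_div, abs_of_pos hf0, div_le_div_iff₀ hf0 hf0]
    have h1 : |(if Y0 ω ≤ q0 then (1 : ℝ) else 0) - τ| ≤ 1 := by
      split_ifs <;> exact abs_le.mpr ⟨by linarith [hτ.1, hτ.2], by linarith [hτ.1, hτ.2]⟩
    nlinarith [abs_nonneg ((if Y0 ω ≤ q0 then (1 : ℝ) else 0) - τ)]
  have hbD : ∀ ω, 0 ≤ D ω ∧ D ω ≤ 1 := by
    intro ω; rcases hD01 ω with h | h <;> rw [h] <;> norm_num
  have hDint : Integrable D μ := by
    refine hint D 1 hD.aestronglyMeasurable (Filter.Eventually.of_forall fun ω => ?_)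
    rcases hD01 ω with h | h <;> rw [h] <;> norm_num
  have hu1int : Integrable u1 μ :=
    hint u1 (1 / f1) hu1m.aestronglyMeasurable (Filter.Eventually.of_forall hb1)
  have hu0int : Integrable u0 μ :=
    hint u0 (1 / f0) hu0m.aestronglyMeasurable (Filter.Eventually.of_forall hb0)
  -- a.e. bounds on m1, m0
  have hm1b : ∀ᵐ ω ∂μ, |m1 (X ω)| ≤ 1 / f1 := by
    have hb : ∀ᵐ ω ∂μ, |u1 ω| ≤ ((1 / f1).toNNReal : ℝ) := by
      refine Filter.Eventually.of_forall fun ω => ?_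
      rw [Real.coe_toNNReal _ (by positivity : (0:ℝ) ≤ 1 / f1)]
      exact hb1 ω
    have h := ae_bdd_condExp_of_ae_bdd (m := (MeasurableSpace.comap X inferInstance)) hb
    filter_upwards [h, hm1] with ω h1 h2
    rw [h2]
    rwa [Real.coe_toNNReal _ (by positivity : (0:ℝ) ≤ 1 / f1)] at h1
  have hm0b : ∀ᵐ ω ∂μ, |m0 (X ω)| ≤ 1 / f0 := by
    have hb : ∀ᵐ ω ∂μ, |u0 ω| ≤ ((1 / f0).toNNReal : ℝ) := by
      refine Filter.Eventually.of_forall fun ω => ?_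
      rw [Real.coe_toNNReal _ (by positivity : (0:ℝ) ≤ 1 / f0)]
      exact hb0 ω
    have h := ae_bdd_condExp_of_ae_bdd (m := (MeasurableSpace.comap X inferInstance)) hb
    filter_upwards [h, hm0] with ω h1 h2
    rw [h2]
    rwa [Real.coe_toNNReal _ (by positivity : (0:ℝ) ≤ 1 / f0)] at h1
  set Cn : ℝ := (1 / f1 + 1 / f0) / c with hCndef
  have hCnpos : 0 < Cn := by
    rw [hCndef]
    exact div_pos (add_pos (one_div_pos.mpr hf1) (one_div_pos.mpr hf0)) hc
  have hnpb : ∀ᵐ ω ∂μ, |np (X ω)| ≤ Cn := by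
    filter_upwards [hoverlap, hm1b, hm0b] with ω hov h1 h0
    obtain ⟨hpc, hpc'⟩ := hov
    have hp0 : 0 < p (X ω) := lt_of_lt_of_le hc hpc
    have hp1 : (0:ℝ) < 1 - p (X ω) := by linarith
    rw [hnp]
    calc |m1 (X ω) / p (X ω) + m0 (X ω) / (1 - p (X ω))|
        ≤ |m1 (X ω)| / p (X ω) + |m0 (X ω)| / (1 - p (X ω)) := by
          refine (abs_add_le _ _).trans ?_
          rw [abs_div, abs_div, abs_of_pos hp0, abs_of_pos hp1]
      _ ≤ (1 / f1) / c + (1 / f0) / c := by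
          have e1 : |m1 (X ω)| / p (X ω) ≤ (1 / f1) / c :=
            div_le_div₀ (by positivity) h1 hc hpc
          have e0 : |m0 (X ω)| / (1 - p (X ω)) ≤ (1 / f0) / c :=
            div_le_div₀ (by positivity) h0 hc (by linarith)
          linarith
      _ = Cn := by rw [hCndef]; ring
  have hψb : ∀ᵐ ω ∂μ, |ψ ω| ≤ Cn := by
    filter_upwards [hoverlap] with ω hov
    obtain ⟨hpc, hpc'⟩ := hov
    have hp0 : 0 < p (X ω) := lt_of_lt_of_le hc hpc
    have hp1 : (0:ℝ) < 1 - p (X ω) := by linarith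
    obtain ⟨hd0, hd1⟩ := hbD ω
    have hA : |D ω / p (X ω)| ≤ 1 / c := by
      rw [abs_div, abs_of_nonneg hd0, abs_of_pos hp0]
      exact div_le_div₀ zero_le_one hd1 hc hpc
    have hB : |(1 - D ω) / (1 - p (X ω))| ≤ 1 / c := by
      rw [abs_div, abs_of_nonneg (by linarith), abs_of_pos hp1]
      exact div_le_div₀ zero_le_one (by linarith) hc (by linarith)
    rw [hψeq]
    simp only
    calc |D ω / p (X ω) * u1 ω - (1 - D ω) / (1 - p (X ω)) * u0 ω|
        ≤ |D ω / p (X ω) * u1 ω| + |(1 - D ω) / (1 - p (X ω)) * u0 ω| := abs_sub _ _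
      _ ≤ (1 / c) * (1 / f1) + (1 / c) * (1 / f0) := by
          rw [abs_mul, abs_mul]
          have e1 : |D ω / p (X ω)| * |u1 ω| ≤ (1 / c) * (1 / f1) :=
            mul_le_mul hA (hb1 ω) (abs_nonneg _) (by positivity)
          have e0 : |(1 - D ω) / (1 - p (X ω))| * |u0 ω| ≤ (1 / c) * (1 / f0) :=
            mul_le_mul hB (hb0 ω) (abs_nonneg _) (by positivity)
          linarith
      _ = Cn := by rw [hCndef]; ring
  have hεb : ∀ᵐ ω ∂μ, |ε ω| ≤ 1 := by
    filter_upwards [hoverlap] with ω hov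
    obtain ⟨hpc, hpc'⟩ := hov
    obtain ⟨hd0, hd1⟩ := hbD ω
    rw [hε ω]
    exact abs_le.mpr ⟨by nlinarith, by nlinarith⟩
  have hφ₂b : ∀ᵐ ω ∂μ, |φ₂ ω| ≤ 2 * Cn := by
    filter_upwards [hψb, hnpb, hεb] with ω h1 h2 h3
    rw [hφ₂ ω]
    have : |np (X ω) * ε ω| ≤ Cn * 1 :=
      (abs_mul _ _).le.trans (mul_le_mul h2 h3 (abs_nonneg _) hCnpos.le)
    calc |ψ ω - np (X ω) * ε ω| ≤ |ψ ω| + |np (X ω) * ε ω| := abs_sub _ _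
      _ ≤ 2 * Cn := by linarith
  -- the product functions
  set Du1 : Ω → ℝ := fun ω => D ω * u1 ω with hDu1def
  set Du0 : Ω → ℝ := fun ω => D ω * u0 ω with hDu0def
  set w0 : Ω → ℝ := fun ω => (1 - D ω) * u0 ω with hw0def
  have hDu1m : Measurable Du1 := by rw [hDu1def]; exact hD.mul hu1m
  have hDu0m : Measurable Du0 := by rw [hDu0def]; exact hD.mul hu0m
  have hw0m : Measurable w0 := by rw [hw0def]; exact (measurable_const.sub hD).mul hu0m
  have hDu1b : ∀ ω, |Du1 ω| ≤ 1 / f1 := by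
    intro ω
    simp only [hDu1def]
    rcases hD01 ω with h | h <;> rw [h]
    · simpa using (by positivity : (0:ℝ) ≤ 1 / f1)
    · simpa using hb1 ω
  have hDu0b : ∀ ω, |Du0 ω| ≤ 1 / f0 := by
    intro ω
    simp only [hDu0def]
    rcases hD01 ω with h | h <;> rw [h]
    · simpa using (by positivity : (0:ℝ) ≤ 1 / f0)
    · simpa using hb0 ω
  have hw0b : ∀ ω, |w0 ω| ≤ 1 / f0 := by
    intro ω
    simp only [hw0def]
    rcases hD01 ω with h | h <;> rw [h]
    · simpa using hb0 ω
    · simpa using (by positivity : (0:ℝ) ≤ 1 / f0)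
  have hDu1int : Integrable Du1 μ :=
    hint Du1 (1 / f1) hDu1m.aestronglyMeasurable (Filter.Eventually.of_forall hDu1b)
  have hDu0int : Integrable Du0 μ :=
    hint Du0 (1 / f0) hDu0m.aestronglyMeasurable (Filter.Eventually.of_forall hDu0b)
  have hw0int : Integrable w0 μ :=
    hint w0 (1 / f0) hw0m.aestronglyMeasurable (Filter.Eventually.of_forall hw0b)
  -- indicator identities and conditional independence
  have hBset : MeasurableSet (D ⁻¹' {1}) := hD (measurableSet_singleton 1)
  have hA1set : MeasurableSet {ω | Y1 ω ≤ q1} := hY1 measurableSet_Iic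
  have hA0set : MeasurableSet {ω | Y0 ω ≤ q0} := hY0 measurableSet_Iic
  have hindB : Set.indicator (D ⁻¹' {1}) (fun _ => (1 : ℝ)) = D := by
    funext ω
    rcases hD01 ω with h | h
    · have hmem : ω ∉ D ⁻¹' {1} := by simp [Set.mem_preimage, h]
      simp [Set.indicator_of_notMem hmem, h]
    · have hmem : ω ∈ D ⁻¹' {1} := by simp [Set.mem_preimage, h]
      simp [Set.indicator_of_mem hmem, h]
  have hindA1 : Set.indicator {ω | Y1 ω ≤ q1} (fun _ => (1 : ℝ))
      = fun ω => if Y1 ω ≤ q1 then (1 : ℝ) else 0 := by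
    funext ω
    by_cases h : Y1 ω ≤ q1 <;> simp [Set.indicator_apply, Set.mem_setOf_eq, h]
  have hindA0 : Set.indicator {ω | Y0 ω ≤ q0} (fun _ => (1 : ℝ))
      = fun ω => if Y0 ω ≤ q0 then (1 : ℝ) else 0 := by
    funext ω
    by_cases h : Y0 ω ≤ q0 <;> simp [Set.indicator_apply, Set.mem_setOf_eq, h]
  have hindA1B : Set.indicator ({ω | Y1 ω ≤ q1} ∩ D ⁻¹' {1}) (fun _ => (1 : ℝ))
      = fun ω => D ω * (if Y1 ω ≤ q1 then (1 : ℝ) else 0) := by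
    funext ω
    rcases hD01 ω with h | h <;> by_cases h' : Y1 ω ≤ q1 <;>
      simp [Set.indicator_apply, Set.mem_inter_iff, Set.mem_setOf_eq, Set.mem_preimage, h, h']
  have hindA0B : Set.indicator ({ω | Y0 ω ≤ q0} ∩ D ⁻¹' {1}) (fun _ => (1 : ℝ))
      = fun ω => D ω * (if Y0 ω ≤ q0 then (1 : ℝ) else 0) := by
    funext ω
    rcases hD01 ω with h | h <;> by_cases h' : Y0 ω ≤ q0 <;>
      simp [Set.indicator_apply, Set.mem_inter_iff, Set.mem_setOf_eq, Set.mem_preimage, h, h']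
  have hindint : ∀ (s : Set Ω), MeasurableSet s →
      Integrable (Set.indicator s fun _ => (1 : ℝ)) μ :=
    fun s hs => (integrable_const 1).indicator hs
  have hpair : Measurable fun ω => (Y0 ω, Y1 ω) := hY0.prodMk hY1
  have hCI := (condIndepFun_iff_condExp_inter_preimage_eq_mul hpair hD).mp hunconf
  have hpre1 : (fun ω => (Y0 ω, Y1 ω)) ⁻¹' (Set.univ ×ˢ Set.Iic q1) = {ω | Y1 ω ≤ q1} := by
    ext ω; simp
  have hpre0 : (fun ω => (Y0 ω, Y1 ω)) ⁻¹' (Set.Iic q0 ×ˢ Set.univ) = {ω | Y0 ω ≤ q0} := by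
    ext ω; simp
  have h1 := hCI (Set.univ ×ˢ Set.Iic q1) {1}
    (MeasurableSet.univ.prod measurableSet_Iic) (measurableSet_singleton 1)
  have h0 := hCI (Set.Iic q0 ×ˢ Set.univ) {1}
    (measurableSet_Iic.prod MeasurableSet.univ) (measurableSet_singleton 1)
  rw [hpre1, hindB] at h1
  rw [hpre0, hindB] at h0
  -- conditional expectations of u1, u0, Du1, Du0, w0
  have hf1ne : f1 ≠ 0 := ne_of_gt hf1
  have hf0ne : f0 ≠ 0 := ne_of_gt hf0
  have hu1split : u1 = f1⁻¹ • (Set.indicator {ω | Y1 ω ≤ q1} fun _ => (1 : ℝ))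
      - fun _ => τ / f1 := by
    rw [hindA1]
    funext ω
    simp only [hu1def, Pi.sub_apply, Pi.smul_apply, smul_eq_mul]
    ring
  have hu0split : u0 = f0⁻¹ • (Set.indicator {ω | Y0 ω ≤ q0} fun _ => (1 : ℝ))
      - fun _ => τ / f0 := by
    rw [hindA0]
    funext ω
    simp only [hu0def, Pi.sub_apply, Pi.smul_apply, smul_eq_mul]
    ring
  have hu1ce : μ[u1|(MeasurableSpace.comap X inferInstance)] =ᵐ[μ]
      f1⁻¹ • μ[Set.indicator {ω | Y1 ω ≤ q1} fun _ => (1 : ℝ)|(MeasurableSpace.comap X inferInstance)] - fun _ => τ / f1 := by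
    calc μ[u1|(MeasurableSpace.comap X inferInstance)]
        = μ[f1⁻¹ • (Set.indicator {ω | Y1 ω ≤ q1} fun _ => (1 : ℝ)) - fun _ => τ / f1|(MeasurableSpace.comap X inferInstance)] := by
          rw [← hu1split]
      _ =ᵐ[μ] μ[f1⁻¹ • (Set.indicator {ω | Y1 ω ≤ q1} fun _ => (1 : ℝ))|(MeasurableSpace.comap X inferInstance)]
            - μ[fun _ => τ / f1|(MeasurableSpace.comap X inferInstance)] :=
          condExp_sub (Integrable.smul _ (hindint _ hA1set)) (integrable_const _) _
      _ =ᵐ[μ] f1⁻¹ • μ[Set.indicator {ω | Y1 ω ≤ q1} fun _ => (1 : ℝ)|(MeasurableSpace.comap X inferInstance)] - fun _ => τ / f1 := by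
          refine (condExp_smul _ _ _).sub ?_
          rw [condExp_const hmX]
  have hu0ce : μ[u0|(MeasurableSpace.comap X inferInstance)] =ᵐ[μ]
      f0⁻¹ • μ[Set.indicator {ω | Y0 ω ≤ q0} fun _ => (1 : ℝ)|(MeasurableSpace.comap X inferInstance)] - fun _ => τ / f0 := by
    calc μ[u0|(MeasurableSpace.comap X inferInstance)]
        = μ[f0⁻¹ • (Set.indicator {ω | Y0 ω ≤ q0} fun _ => (1 : ℝ)) - fun _ => τ / f0|(MeasurableSpace.comap X inferInstance)] := by
          rw [← hu0split]
      _ =ᵐ[μ] μ[f0⁻¹ • (Set.indicator {ω | Y0 ω ≤ q0} fun _ => (1 : ℝ))|(MeasurableSpace.comap X inferInstance)]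
            - μ[fun _ => τ / f0|(MeasurableSpace.comap X inferInstance)] :=
          condExp_sub (Integrable.smul _ (hindint _ hA0set)) (integrable_const _) _
      _ =ᵐ[μ] f0⁻¹ • μ[Set.indicator {ω | Y0 ω ≤ q0} fun _ => (1 : ℝ)|(MeasurableSpace.comap X inferInstance)] - fun _ => τ / f0 := by
          refine (condExp_smul _ _ _).sub ?_
          rw [condExp_const hmX]
  have hDu1split : Du1 = f1⁻¹ • (Set.indicator ({ω | Y1 ω ≤ q1} ∩ D ⁻¹' {1}) fun _ => (1 : ℝ))
      - (τ / f1) • D := by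
    rw [hindA1B]
    funext ω
    simp only [hDu1def, hu1def, Pi.sub_apply, Pi.smul_apply, smul_eq_mul]
    ring
  have hDu0split : Du0 = f0⁻¹ • (Set.indicator ({ω | Y0 ω ≤ q0} ∩ D ⁻¹' {1}) fun _ => (1 : ℝ))
      - (τ / f0) • D := by
    rw [hindA0B]
    funext ω
    simp only [hDu0def, hu0def, Pi.sub_apply, Pi.smul_apply, smul_eq_mul]
    ring
  have hDu1ce1 : μ[Du1|(MeasurableSpace.comap X inferInstance)] =ᵐ[μ]
      f1⁻¹ • μ[Set.indicator ({ω | Y1 ω ≤ q1} ∩ D ⁻¹' {1}) fun _ => (1 : ℝ)|(MeasurableSpace.comap X inferInstance)]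
        - (τ / f1) • μ[D|(MeasurableSpace.comap X inferInstance)] := by
    calc μ[Du1|(MeasurableSpace.comap X inferInstance)]
        = μ[f1⁻¹ • (Set.indicator ({ω | Y1 ω ≤ q1} ∩ D ⁻¹' {1}) fun _ => (1 : ℝ))
            - (τ / f1) • D|(MeasurableSpace.comap X inferInstance)] := by rw [← hDu1split]
      _ =ᵐ[μ] μ[f1⁻¹ • (Set.indicator ({ω | Y1 ω ≤ q1} ∩ D ⁻¹' {1}) fun _ => (1 : ℝ))|(MeasurableSpace.comap X inferInstance)]
            - μ[(τ / f1) • D|(MeasurableSpace.comap X inferInstance)] :=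
          condExp_sub (Integrable.smul _ (hindint _ (hA1set.inter hBset)))
            (Integrable.smul _ hDint) _
      _ =ᵐ[μ] f1⁻¹ • μ[Set.indicator ({ω | Y1 ω ≤ q1} ∩ D ⁻¹' {1}) fun _ => (1 : ℝ)|(MeasurableSpace.comap X inferInstance)]
            - (τ / f1) • μ[D|(MeasurableSpace.comap X inferInstance)] := (condExp_smul _ _ _).sub (condExp_smul _ _ _)
  have hDu0ce1 : μ[Du0|(MeasurableSpace.comap X inferInstance)] =ᵐ[μ]
      f0⁻¹ • μ[Set.indicator ({ω | Y0 ω ≤ q0} ∩ D ⁻¹' {1}) fun _ => (1 : ℝ)|(MeasurableSpace.comap X inferInstance)]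
        - (τ / f0) • μ[D|(MeasurableSpace.comap X inferInstance)] := by
    calc μ[Du0|(MeasurableSpace.comap X inferInstance)]
        = μ[f0⁻¹ • (Set.indicator ({ω | Y0 ω ≤ q0} ∩ D ⁻¹' {1}) fun _ => (1 : ℝ))
            - (τ / f0) • D|(MeasurableSpace.comap X inferInstance)] := by rw [← hDu0split]
      _ =ᵐ[μ] μ[f0⁻¹ • (Set.indicator ({ω | Y0 ω ≤ q0} ∩ D ⁻¹' {1}) fun _ => (1 : ℝ))|(MeasurableSpace.comap X inferInstance)]
            - μ[(τ / f0) • D|(MeasurableSpace.comap X inferInstance)] :=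
          condExp_sub (Integrable.smul _ (hindint _ (hA0set.inter hBset)))
            (Integrable.smul _ hDint) _
      _ =ᵐ[μ] f0⁻¹ • μ[Set.indicator ({ω | Y0 ω ≤ q0} ∩ D ⁻¹' {1}) fun _ => (1 : ℝ)|(MeasurableSpace.comap X inferInstance)]
            - (τ / f0) • μ[D|(MeasurableSpace.comap X inferInstance)] := (condExp_smul _ _ _).sub (condExp_smul _ _ _)
  have hDu1ce : μ[Du1|(MeasurableSpace.comap X inferInstance)] =ᵐ[μ] fun ω => p (X ω) * m1 (X ω) := by
    filter_upwards [hDu1ce1, h1, hpX, hm1, hu1ce] with ω e1 e2 e3 e4 e5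
    simp only [Pi.sub_apply, Pi.smul_apply, smul_eq_mul] at e1 e5
    rw [e1, e2, ← e3, e4, e5]
    ring
  have hDu0ce : μ[Du0|(MeasurableSpace.comap X inferInstance)] =ᵐ[μ] fun ω => p (X ω) * m0 (X ω) := by
    filter_upwards [hDu0ce1, h0, hpX, hm0, hu0ce] with ω e1 e2 e3 e4 e5
    simp only [Pi.sub_apply, Pi.smul_apply, smul_eq_mul] at e1 e5
    rw [e1, e2, ← e3, e4, e5]
    ring
  have hw0sub : w0 = u0 - Du0 := by
    funext ω
    simp only [hw0def, hDu0def, Pi.sub_apply]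
    ring
  have hw0ce : μ[w0|(MeasurableSpace.comap X inferInstance)] =ᵐ[μ] fun ω => (1 - p (X ω)) * m0 (X ω) := by
    have e : μ[w0|(MeasurableSpace.comap X inferInstance)] =ᵐ[μ] μ[u0|(MeasurableSpace.comap X inferInstance)] - μ[Du0|(MeasurableSpace.comap X inferInstance)] := by
      rw [hw0sub]; exact condExp_sub hu0int hDu0int _
    filter_upwards [e, hm0, hDu0ce] with ω e1 e2 e3
    simp only [Pi.sub_apply] at e1
    rw [e1, ← e2, e3]
    ring
  have hDce : μ[D|(MeasurableSpace.comap X inferInstance)] =ᵐ[μ] fun ω => p (X ω) := hpX.symm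
  -- the coefficient functions
  set aX : Ω → ℝ := fun ω => 2 * np (X ω) * (1 - p (X ω)) / p (X ω) with haXdef
  set bX : Ω → ℝ := fun ω => 2 * np (X ω) * p (X ω) / (1 - p (X ω)) with hbXdef
  set rX : Ω → ℝ := fun ω => -(np (X ω) ^ 2 * ((1 - p (X ω)) ^ 2 - p (X ω) ^ 2)) with hrXdef
  set sX : Ω → ℝ := fun ω => -(np (X ω) ^ 2 * p (X ω) ^ 2)
    - p (X ω) * (1 - p (X ω)) * np (X ω) ^ 2 with hsXdef
  have haXs : StronglyMeasurable[(MeasurableSpace.comap X inferInstance)] aX := by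
    rw [haXdef]
    exact ((((measurable_const.mul hnpm).mul (measurable_const.sub hp)).div hp).comp
      hXmX).stronglyMeasurable
  have hbXs : StronglyMeasurable[(MeasurableSpace.comap X inferInstance)] bX := by
    rw [hbXdef]
    exact ((((measurable_const.mul hnpm).mul hp).div (measurable_const.sub hp)).comp
      hXmX).stronglyMeasurable
  have hrXs : StronglyMeasurable[(MeasurableSpace.comap X inferInstance)] rX := by
    rw [hrXdef]
    exact ((((hnpm.pow_const 2).mul (((measurable_const.sub hp).pow_const 2).sub
      (hp.pow_const 2))).neg).comp hXmX).stronglyMeasurable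
  have hsXs : StronglyMeasurable[(MeasurableSpace.comap X inferInstance)] sX := by
    rw [hsXdef]
    exact (((((hnpm.pow_const 2).mul (hp.pow_const 2)).neg).sub
      ((hp.mul (measurable_const.sub hp)).mul (hnpm.pow_const 2))).comp
      hXmX).stronglyMeasurable
  -- a.e. bounds for coefficient functions
  have haXb : ∀ᵐ ω ∂μ, |aX ω| ≤ 2 * Cn / c := by
    filter_upwards [hoverlap, hnpb] with ω hov hn
    obtain ⟨hpc, hpc'⟩ := hov
    have hp0 : 0 < p (X ω) := lt_of_lt_of_le hc hpc
    have hp1 : (0:ℝ) < 1 - p (X ω) := by linarith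
    simp only [haXdef]
    rw [abs_div, abs_of_pos hp0, div_le_div_iff₀ hp0 hc]
    have h2 : |2 * np (X ω) * (1 - p (X ω))| = 2 * |np (X ω)| * (1 - p (X ω)) := by
      rw [abs_mul, abs_mul, abs_two, abs_of_pos hp1]
    rw [h2]
    have e1 : |np (X ω)| * (1 - p (X ω)) ≤ Cn := by
      nlinarith [mul_nonneg (abs_nonneg (np (X ω))) hp0.le]
    have e2 : 0 ≤ (Cn - |np (X ω)| * (1 - p (X ω))) * c := mul_nonneg (by linarith) hc.le
    have e3 : 0 ≤ (p (X ω) - c) * Cn := mul_nonneg (by linarith) hCnpos.le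
    nlinarith [e2, e3]
  have hbXb : ∀ᵐ ω ∂μ, |bX ω| ≤ 2 * Cn / c := by
    filter_upwards [hoverlap, hnpb] with ω hov hn
    obtain ⟨hpc, hpc'⟩ := hov
    have hp0 : 0 < p (X ω) := lt_of_lt_of_le hc hpc
    have hp1 : (0:ℝ) < 1 - p (X ω) := by linarith
    simp only [hbXdef]
    rw [abs_div, abs_of_pos hp1, div_le_div_iff₀ hp1 hc]
    have h2 : |2 * np (X ω) * p (X ω)| = 2 * |np (X ω)| * p (X ω) := by
      rw [abs_mul, abs_mul, abs_two, abs_of_pos hp0]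
    rw [h2]
    have e1 : |np (X ω)| * p (X ω) ≤ Cn := by
      nlinarith [mul_nonneg (abs_nonneg (np (X ω))) hp1.le]
    have e2 : 0 ≤ (Cn - |np (X ω)| * p (X ω)) * c := mul_nonneg (by linarith) hc.le
    have e3 : 0 ≤ (1 - p (X ω) - c) * Cn := mul_nonneg (by linarith) hCnpos.le
    nlinarith [e2, e3]
  have hnp2 : ∀ᵐ ω ∂μ, np (X ω) ^ 2 ≤ Cn ^ 2 := by
    filter_upwards [hnpb] with ω hn
    nlinarith [sq_abs (np (X ω)), abs_nonneg (np (X ω))]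
  have hrXb : ∀ᵐ ω ∂μ, |rX ω| ≤ Cn ^ 2 := by
    filter_upwards [hoverlap, hnp2] with ω hov hn2
    obtain ⟨hpc, hpc'⟩ := hov
    have hp0 : 0 < p (X ω) := lt_of_lt_of_le hc hpc
    have hp1 : (0:ℝ) < 1 - p (X ω) := by linarith
    simp only [hrXdef]
    rw [abs_neg, abs_mul, abs_of_nonneg (sq_nonneg _)]
    have h2 : |(1 - p (X ω)) ^ 2 - p (X ω) ^ 2| ≤ 1 := by
      rw [abs_le]; constructor <;> nlinarith
    nlinarith [sq_nonneg (np (X ω)), abs_nonneg ((1 - p (X ω)) ^ 2 - p (X ω) ^ 2)]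
  have hsXb : ∀ᵐ ω ∂μ, |sX ω| ≤ Cn ^ 2 := by
    filter_upwards [hoverlap, hnp2] with ω hov hn2
    obtain ⟨hpc, hpc'⟩ := hov
    have hp0 : 0 < p (X ω) := lt_of_lt_of_le hc hpc
    have hp1 : (0:ℝ) < 1 - p (X ω) := by linarith
    have heq : sX ω = -(np (X ω) ^ 2 * p (X ω)) := by
      simp only [hsXdef]; ring
    rw [heq, abs_neg, abs_of_nonneg (mul_nonneg (sq_nonneg _) hp0.le)]
    nlinarith [sq_nonneg (np (X ω))]
  -- integrability of the pieces
  have haDu1int : Integrable (aX * Du1) μ := by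
    refine hint _ ((2 * Cn / c) * (1 / f1))
      (((haXs.mono hmX).mul hDu1m.stronglyMeasurable).aestronglyMeasurable) ?_
    filter_upwards [haXb] with ω ha
    rw [Pi.mul_apply, abs_mul]
    exact mul_le_mul ha (hDu1b ω) (abs_nonneg _) (by positivity)
  have hbw0int : Integrable (bX * w0) μ := by
    refine hint _ ((2 * Cn / c) * (1 / f0))
      (((hbXs.mono hmX).mul hw0m.stronglyMeasurable).aestronglyMeasurable) ?_
    filter_upwards [hbXb] with ω hb
    rw [Pi.mul_apply, abs_mul]
    exact mul_le_mul hb (hw0b ω) (abs_nonneg _) (by positivity)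
  have hrDint : Integrable (rX * D) μ := by
    refine hint _ (Cn ^ 2 * 1)
      (((hrXs.mono hmX).mul hD.stronglyMeasurable).aestronglyMeasurable) ?_
    filter_upwards [hrXb] with ω hr
    rw [Pi.mul_apply, abs_mul]
    refine mul_le_mul hr ?_ (abs_nonneg _) (by positivity)
    rcases hD01 ω with h | h <;> rw [h] <;> norm_num
  have hsXint : Integrable sX μ :=
    hint sX (Cn ^ 2) ((hsXs.mono hmX).aestronglyMeasurable) hsXb
  have hHint : Integrable (aX * Du1 + bX * w0 + rX * D + sX) μ :=
    ((haDu1int.add hbw0int).add hrDint).add hsXint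
  -- integrability of ψ², φ₂², G
  have hGm : Measurable fun ω => p (X ω) * (1 - p (X ω)) * np (X ω) ^ 2 :=
    ((hp.comp hX).mul (measurable_const.sub (hp.comp hX))).mul ((hnpm.comp hX).pow_const 2)
  have hGint : Integrable (fun ω => p (X ω) * (1 - p (X ω)) * np (X ω) ^ 2) μ := by
    refine hint _ (Cn ^ 2) hGm.aestronglyMeasurable ?_
    filter_upwards [hoverlap, hnp2] with ω hov hn2
    obtain ⟨hpc, hpc'⟩ := hov
    have hp0 : 0 < p (X ω) := lt_of_lt_of_le hc hpc
    have hp1 : (0:ℝ) < 1 - p (X ω) := by linarith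
    rw [abs_of_nonneg (by positivity)]
    have e1 : p (X ω) * (1 - p (X ω)) ≤ 1 := by nlinarith [sq_nonneg (p (X ω))]
    have e2 := mul_le_mul e1 hn2 (sq_nonneg _) zero_le_one
    nlinarith [e2]
  have hψ2int : Integrable (fun ω => ψ ω ^ 2) μ := by
    refine hint _ (Cn ^ 2) ((hψm.pow_const 2).aestronglyMeasurable) ?_
    filter_upwards [hψb] with ω h
    rw [abs_of_nonneg (sq_nonneg _)]
    nlinarith [abs_nonneg (ψ ω), sq_abs (ψ ω)]
  have hφ₂2int : Integrable (fun ω => φ₂ ω ^ 2) μ := by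
    refine hint _ ((2 * Cn) ^ 2) ((hφ₂m.pow_const 2).aestronglyMeasurable) ?_
    filter_upwards [hφ₂b] with ω h
    rw [abs_of_nonneg (sq_nonneg _)]
    nlinarith [abs_nonneg (φ₂ ω), sq_abs (φ₂ ω)]
  -- key pointwise identity
  have hkey : (fun ω => ψ ω ^ 2) =ᵐ[μ] (fun ω => φ₂ ω ^ 2)
      + (fun ω => p (X ω) * (1 - p (X ω)) * np (X ω) ^ 2)
      + (aX * Du1 + bX * w0 + rX * D + sX) := by
    filter_upwards [hoverlap] with ω hov
    obtain ⟨hpc, hpc'⟩ := hov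
    have hp0 : 0 < p (X ω) := lt_of_lt_of_le hc hpc
    have hp1 : (0:ℝ) < 1 - p (X ω) := by linarith
    simp only [Pi.add_apply, Pi.mul_apply, haXdef, hbXdef, hrXdef, hsXdef, hDu1def, hw0def]
    rw [hφ₂ ω, hψ ω, hε ω, hu1Y ω, hu0Y ω]
    rcases hD01 ω with h | h <;> rw [h] <;> field_simp <;> ring
  -- conditional expectation of the remainder is zero
  have hce0 : μ[aX * Du1 + bX * w0 + rX * D + sX|(MeasurableSpace.comap X inferInstance)] =ᵐ[μ] 0 := by
    have e0 := condExp_add (μ := μ) (m := (MeasurableSpace.comap X inferInstance)) ((haDu1int.add hbw0int).add hrDint) hsXint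
    have e1 := condExp_add (μ := μ) (m := (MeasurableSpace.comap X inferInstance)) (haDu1int.add hbw0int) hrDint
    have e2 := condExp_add (μ := μ) (m := (MeasurableSpace.comap X inferInstance)) haDu1int hbw0int
    have eA := condExp_mul_of_stronglyMeasurable_left haXs haDu1int hDu1int
    have eB := condExp_mul_of_stronglyMeasurable_left hbXs hbw0int hw0int
    have eC := condExp_mul_of_stronglyMeasurable_left hrXs hrDint hDint
    have eS : μ[sX|(MeasurableSpace.comap X inferInstance)] = sX := condExp_of_stronglyMeasurable hmX hsXs hsXint
    filter_upwards [e0, e1, e2, eA, eB, eC, hDu1ce, hw0ce, hDce, hoverlap]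
      with ω he0 he1 he2 heA heB heC hce1 hce2 hce3 hov
    obtain ⟨hpc, hpc'⟩ := hov
    have hp0 : 0 < p (X ω) := lt_of_lt_of_le hc hpc
    have hp1 : (0:ℝ) < 1 - p (X ω) := by linarith
    simp only [Pi.add_apply, Pi.mul_apply] at he0 he1 he2 heA heB heC
    rw [Pi.zero_apply, he0, he1, he2, heA, heB, heC, hce1, hce2, hce3, congrFun eS ω]
    simp only [haXdef, hbXdef, hrXdef, hsXdef]
    rw [hnp (X ω)]
    field_simp
    ring
  -- move down to the σ-algebra generated by X₁
  have hceX₁0 : μ[aX * Du1 + bX * w0 + rX * D + sX|(MeasurableSpace.comap X₁ inferInstance)] =ᵐ[μ] 0 := by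
    have htower := condExp_condExp_of_le (μ := μ)
      (f := aX * Du1 + bX * w0 + rX * D + sX) hmX₁X hmX
    have h0' : μ[μ[aX * Du1 + bX * w0 + rX * D + sX|(MeasurableSpace.comap X inferInstance)]|(MeasurableSpace.comap X₁ inferInstance)] =ᵐ[μ] μ[(0 : Ω → ℝ)|(MeasurableSpace.comap X₁ inferInstance)] :=
      condExp_congr_ae hce0
    refine htower.symm.trans (h0'.trans ?_)
    rw [condExp_zero]
  have heqmain : μ[(fun ω => ψ ω ^ 2)|(MeasurableSpace.comap X₁ inferInstance)] =ᵐ[μ]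
      μ[(fun ω => φ₂ ω ^ 2)|(MeasurableSpace.comap X₁ inferInstance)]
        + μ[(fun ω => p (X ω) * (1 - p (X ω)) * np (X ω) ^ 2)|(MeasurableSpace.comap X₁ inferInstance)] := by
    have s0 : μ[(fun ω => ψ ω ^ 2)|(MeasurableSpace.comap X₁ inferInstance)] =ᵐ[μ]
        μ[(fun ω => φ₂ ω ^ 2) + (fun ω => p (X ω) * (1 - p (X ω)) * np (X ω) ^ 2)
          + (aX * Du1 + bX * w0 + rX * D + sX)|(MeasurableSpace.comap X₁ inferInstance)] :=
      condExp_congr_ae hkey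
    have s1 := condExp_add (μ := μ) (m := MeasurableSpace.comap X₁ inferInstance)
      (hφ₂2int.add hGint) hHint
    have s2 := condExp_add (μ := μ) (m := MeasurableSpace.comap X₁ inferInstance)
      hφ₂2int hGint
    filter_upwards [s0, s1, s2, hceX₁0] with ω e0 e1 e2 hz
    simp only [Pi.add_apply] at e1 e2 ⊢
    simp only [Pi.zero_apply] at hz
    rw [e0, e1, e2, hz, add_zero]
  refine ⟨heqmain, ?_⟩
  have hGnn : 0 ≤ᵐ[μ] fun ω => p (X ω) * (1 - p (X ω)) * np (X ω) ^ 2 := by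
    filter_upwards [hoverlap] with ω hov
    obtain ⟨hpc, hpc'⟩ := hov
    have hp0 : 0 < p (X ω) := lt_of_lt_of_le hc hpc
    have hp1 : (0:ℝ) < 1 - p (X ω) := by linarith
    exact mul_nonneg (mul_nonneg hp0.le hp1.le) (sq_nonneg _)
  have hGce : 0 ≤ᵐ[μ] μ[(fun ω => p (X ω) * (1 - p (X ω)) * np (X ω) ^ 2)|(MeasurableSpace.comap X₁ inferInstance)] :=
    condExp_nonneg hGnn
  filter_upwards [heqmain, hGce] with ω h1 h2
  simp only [Pi.add_apply] at h1
  simp only [Pi.zero_apply] at h2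
  rw [h1]
  linarith
end

section
/- (Corollary 2.4: SCQTE versus NCQTE variance comparison). Suppose additionally D is conditionally independent of X given σ(αᵀX) and p(X) agrees a.s. with a σ(αᵀX)-measurable function. Then almost surely E[φ₃*² | σ(X₁)] = E[φ₂² | σ(X₁)] + E[ p(X)(1−p(X)) · ( (m₁(X) − m₁ᵅ)/p(X) + (m₀(X) − m₀ᵅ)/(1−p(X)) )² | σ(X₁) ]; in particular σ²_{scqte}* ≥ σ²_{ncqte}*. -/
open MeasureTheory ProbabilityTheory


private lemma aux_integrable_of_ae_bound {Ω : Type*} [MeasurableSpace Ω] {μ : MeasureTheory.Measure Ω}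
    [MeasureTheory.IsFiniteMeasure μ] {f : Ω → ℝ} {C : ℝ}
    (hf : MeasureTheory.AEStronglyMeasurable f μ)
    (h : ∀ᵐ ω ∂μ, |f ω| ≤ C) : MeasureTheory.Integrable f μ :=
  MeasureTheory.Integrable.mono' (MeasureTheory.integrable_const C) hf
    (h.mono fun ω hω => by rwa [Real.norm_eq_abs])

set_option maxHeartbeats 2000000 in
/-- **Corollary 2.4: SCQTE versus NCQTE variance comparison.** If `D ⟂ X | σ(αᵀX)` and
`p(X)` agrees a.s. with a `σ(αᵀX)`-measurable function, then almost surely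
`E[φ₃*² | σ(X₁)] = E[φ₂² | σ(X₁)]
  + E[ p(X)(1−p(X))·((m₁(X) − m₁ᵅ)/p(X) + (m₀(X) − m₀ᵅ)/(1−p(X)))² | σ(X₁) ]`;
in particular `σ²_scqte* ≥ σ²_ncqte*`. -/
theorem scqte_vs_ncqte_variance_comparison
    {Ω : Type*} [mΩ : MeasurableSpace Ω] [StandardBorelSpace Ω] [Nonempty Ω]
    (μ : Measure Ω) [IsProbabilityMeasure μ]
    {k l q : ℕ} (hk : 2 ≤ k) (hl : 1 ≤ l) (hlk : l < k) (hlq : l ≤ q) (hqk : q < k)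
    (D : Ω → ℝ) (Y0 Y1 : Ω → ℝ) (X : Ω → Fin k → ℝ)
    (hD : Measurable D) (hY0 : Measurable Y0) (hY1 : Measurable Y1) (hX : Measurable X)
    (hD01 : ∀ ω, D ω = 0 ∨ D ω = 1)
    (hY0int : Integrable Y0 μ) (hY1int : Integrable Y1 μ)
    (X₁ : Ω → Fin l → ℝ)
    (hX₁ : ∀ ω i, X₁ ω i = X ω (Fin.castLE hlk.le i))
    -- p(X) is a version of E[D | σ(X)]
    (p : (Fin k → ℝ) → ℝ) (hp : Measurable p)
    (hpX : (fun ω => p (X ω)) =ᵐ[μ] μ[D | MeasurableSpace.comap X inferInstance])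
    -- overlap
    (c : ℝ) (hc : 0 < c)
    (hoverlap : ∀ᵐ ω ∂μ, c ≤ p (X ω) ∧ p (X ω) ≤ 1 - c)
    -- unconfoundedness: (Y(0),Y(1)) ⟂ D | σ(X)
    (hunconf : CondIndepFun (MeasurableSpace.comap X inferInstance) hX.comap_le
      (fun ω => (Y0 ω, Y1 ω)) D μ)
    -- the linear index αᵀX
    (α : Matrix (Fin k) (Fin q) ℝ)
    (hαX : Measurable (fun ω => α.transpose.mulVec (X ω)))
    -- D ⟂ X | σ(αᵀX)
    (hconstraint : CondIndepFun
      (MeasurableSpace.comap (fun ω => α.transpose.mulVec (X ω)) inferInstance)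
      hαX.comap_le D X μ)
    -- p(X) agrees a.s. with a σ(αᵀX)-measurable function
    (pα : (Fin q → ℝ) → ℝ) (hpα : Measurable pα)
    (hppα : (fun ω => p (X ω)) =ᵐ[μ] fun ω => pα (α.transpose.mulVec (X ω)))
    (τ : ℝ) (hτ : τ ∈ Set.Ioo (0 : ℝ) 1)
    (q0 q1 : ℝ) (f0 f1 : ℝ) (hf0 : 0 < f0) (hf1 : 0 < f1)
    -- η_j(y) = (1{y ≤ q_j} − τ)/f_j
    (η0 η1 : ℝ → ℝ)
    (hη0 : ∀ y, η0 y = ((if y ≤ q0 then (1 : ℝ) else 0) - τ) / f0)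
    (hη1 : ∀ y, η1 y = ((if y ≤ q1 then (1 : ℝ) else 0) - τ) / f1)
    -- ψ = (D/p(X))·η₁(Y(1)) − ((1−D)/(1−p(X)))·η₀(Y(0))
    (ψ : Ω → ℝ)
    (hψ : ∀ ω, ψ ω = (D ω / p (X ω)) * η1 (Y1 ω)
      - ((1 - D ω) / (1 - p (X ω))) * η0 (Y0 ω))
    -- m_j(X) is a version of E[η_j(Y(j)) | σ(X)]
    (m0 m1 : (Fin k → ℝ) → ℝ) (hm0meas : Measurable m0) (hm1meas : Measurable m1)
    (hm0 : (fun ω => m0 (X ω)) =ᵐ[μ]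
      μ[(fun ω => η0 (Y0 ω)) | MeasurableSpace.comap X inferInstance])
    (hm1 : (fun ω => m1 (X ω)) =ᵐ[μ]
      μ[(fun ω => η1 (Y1 ω)) | MeasurableSpace.comap X inferInstance])
    -- n_p(X) = m₁(X)/p(X) + m₀(X)/(1−p(X))
    (np : (Fin k → ℝ) → ℝ)
    (hnp : ∀ x, np x = m1 x / p x + m0 x / (1 - p x))
    -- m_jᵅ is a version of E[η_j(Y(j)) | σ(αᵀX)]
    (mα0 mα1 : (Fin q → ℝ) → ℝ) (hmα0meas : Measurable mα0) (hmα1meas : Measurable mα1)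
    (hmα0 : (fun ω => mα0 (α.transpose.mulVec (X ω))) =ᵐ[μ]
      μ[(fun ω => η0 (Y0 ω)) |
        MeasurableSpace.comap (fun ω => α.transpose.mulVec (X ω)) inferInstance])
    (hmα1 : (fun ω => mα1 (α.transpose.mulVec (X ω))) =ᵐ[μ]
      μ[(fun ω => η1 (Y1 ω)) |
        MeasurableSpace.comap (fun ω => α.transpose.mulVec (X ω)) inferInstance])
    -- e_p = m₁ᵅ/p(X) + m₀ᵅ/(1−p(X))
    (ep : Ω → ℝ)
    (hep : ∀ ω, ep ω = mα1 (α.transpose.mulVec (X ω)) / p (X ω)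
      + mα0 (α.transpose.mulVec (X ω)) / (1 - p (X ω)))
    -- ε = D − p(X)
    (ε : Ω → ℝ) (hε : ∀ ω, ε ω = D ω - p (X ω))
    -- φ₂ = ψ − n_p(X)·ε
    (φ₂ : Ω → ℝ) (hφ₂ : ∀ ω, φ₂ ω = ψ ω - np (X ω) * ε ω)
    -- φ₃* = ψ − e_p·ε
    (φ₃ : Ω → ℝ) (hφ₃ : ∀ ω, φ₃ ω = ψ ω - ep ω * ε ω) :
    (μ[(fun ω => (φ₃ ω) ^ 2) | MeasurableSpace.comap X₁ inferInstance]
        =ᵐ[μ]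
      μ[(fun ω => (φ₂ ω) ^ 2) | MeasurableSpace.comap X₁ inferInstance]
        + μ[(fun ω => p (X ω) * (1 - p (X ω))
            * ((m1 (X ω) - mα1 (α.transpose.mulVec (X ω))) / p (X ω)
              + (m0 (X ω) - mα0 (α.transpose.mulVec (X ω))) / (1 - p (X ω))) ^ 2) |
            MeasurableSpace.comap X₁ inferInstance])
      ∧
    (∀ᵐ ω ∂μ,
      (μ[(fun ω' => (φ₂ ω') ^ 2) | MeasurableSpace.comap X₁ inferInstance]) ω
        ≤ (μ[(fun ω' => (φ₃ ω') ^ 2) | MeasurableSpace.comap X₁ inferInstance]) ω) := by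
  classical
  have hτ0 : (0:ℝ) < τ := hτ.1
  have hτ1 : τ < 1 := hτ.2
  have hf0' : f0 ≠ 0 := ne_of_gt hf0
  have hf1' : f1 ≠ 0 := ne_of_gt hf1
  set mX : MeasurableSpace Ω := MeasurableSpace.comap X inferInstance with hmX_def
  set mX1 : MeasurableSpace Ω := MeasurableSpace.comap X₁ inferInstance with hmX1_def
  letI mΩ' : MeasurableSpace Ω := mΩ
  have hmXle : mX ≤ mΩ := hX.comap_le
  haveI : IsFiniteMeasure (μ.trim hmXle) := by
    apply isFiniteMeasure_trim
  have hle : mX1 ≤ mX := by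
    rintro s ⟨t, ht, rfl⟩
    have hX₁fun : X₁ = fun ω => fun i => X ω (Fin.castLE hlk.le i) :=
      funext fun ω => funext fun i => hX₁ ω i
    refine ⟨(fun v : Fin k → ℝ => fun i : Fin l => v (Fin.castLE hlk.le i)) ⁻¹' t,
      (measurable_pi_lambda _ fun i => measurable_pi_apply _) ht, ?_⟩
    rw [hX₁fun]; rfl
  haveI : IsFiniteMeasure (μ.trim (hle.trans hmXle)) := by
    apply isFiniteMeasure_trim
  -- goal abbreviation for the quadratic form G
  set Gf : Ω → ℝ := fun ω => p (X ω) * (1 - p (X ω))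
      * ((m1 (X ω) - mα1 (α.transpose.mulVec (X ω))) / p (X ω)
        + (m0 (X ω) - mα0 (α.transpose.mulVec (X ω))) / (1 - p (X ω))) ^ 2 with hGf_def
  -- measurability facts
  have hXm : Measurable[mX] X := fun s hs => ⟨s, hs, rfl⟩
  have hαm : Measurable fun x : Fin k → ℝ => α.transpose.mulVec x := by
    apply measurable_pi_lambda
    intro i
    simp only [Matrix.mulVec, dotProduct]
    exact Finset.measurable_sum _ fun j _ => (measurable_pi_apply j).const_mul _
  have hη1m : Measurable η1 := by
    have h : η1 = fun y => ((if y ≤ q1 then (1:ℝ) else 0) - τ) / f1 := funext hη1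
    rw [h]
    exact ((Measurable.ite measurableSet_Iic measurable_const measurable_const).sub
      measurable_const).div_const _
  have hη0m : Measurable η0 := by
    have h : η0 = fun y => ((if y ≤ q0 then (1:ℝ) else 0) - τ) / f0 := funext hη0
    rw [h]
    exact ((Measurable.ite measurableSet_Iic measurable_const measurable_const).sub
      measurable_const).div_const _
  have hψm : Measurable[mΩ] ψ := by
    have h : ψ = fun ω => (D ω / p (X ω)) * η1 (Y1 ω)
        - ((1 - D ω) / (1 - p (X ω))) * η0 (Y0 ω) := funext hψ
    rw [h]
    exact ((hD.div (hp.comp hX)).mul (hη1m.comp hY1)).sub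
      (((measurable_const.sub hD).div (measurable_const.sub (hp.comp hX))).mul (hη0m.comp hY0))
  have hεm : Measurable[mΩ] ε := by
    have h : ε = fun ω => D ω - p (X ω) := funext hε
    rw [h]; exact hD.sub (hp.comp hX)
  have hnpm : Measurable np := by
    have h : np = fun x => m1 x / p x + m0 x / (1 - p x) := funext hnp
    rw [h]; exact (hm1meas.div hp).add (hm0meas.div (measurable_const.sub hp))
  have hepm : Measurable[mΩ] ep := by
    have h : ep = fun ω => mα1 (α.transpose.mulVec (X ω)) / p (X ω)
        + mα0 (α.transpose.mulVec (X ω)) / (1 - p (X ω)) := funext hep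
    rw [h]
    exact ((hmα1meas.comp (hαm.comp hX)).div (hp.comp hX)).add
      ((hmα0meas.comp (hαm.comp hX)).div (measurable_const.sub (hp.comp hX)))
  have hφ₂m : Measurable[mΩ] φ₂ := by
    have h : φ₂ = fun ω => ψ ω - np (X ω) * ε ω := funext hφ₂
    rw [h]; exact hψm.sub ((hnpm.comp hX).mul hεm)
  have hφ₃m : Measurable[mΩ] φ₃ := by
    have h : φ₃ = fun ω => ψ ω - ep ω * ε ω := funext hφ₃
    rw [h]; exact hψm.sub (hepm.mul hεm)
  have hGfm : Measurable[mΩ] Gf := by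
    rw [hGf_def]
    apply Measurable.mul
    · exact (hp.comp hX).mul (measurable_const.sub (hp.comp hX))
    · exact (((hm1meas.comp hX).sub (hmα1meas.comp (hαm.comp hX))).div (hp.comp hX)).add
        (((hm0meas.comp hX).sub (hmα0meas.comp (hαm.comp hX))).div
          (measurable_const.sub (hp.comp hX))) |>.pow measurable_const
  -- basic bounds
  have hD01' : ∀ ω, 0 ≤ D ω ∧ D ω ≤ 1 := fun ω => by
    rcases hD01 ω with h | h <;> rw [h] <;> norm_num
  have hη1b : ∀ y, |η1 y| ≤ 1 / f1 := by
    intro y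
    rw [hη1, abs_div, abs_of_pos hf1]
    gcongr
    split_ifs <;> rw [abs_le] <;> constructor <;> linarith
  have hη0b : ∀ y, |η0 y| ≤ 1 / f0 := by
    intro y
    rw [hη0, abs_div, abs_of_pos hf0]
    gcongr
    split_ifs <;> rw [abs_le] <;> constructor <;> linarith
  -- a.e. bounds for the conditional means
  have hm1b : ∀ᵐ ω ∂μ, |m1 (X ω)| ≤ 1 / f1 := by
    have hb : ∀ᵐ ω ∂μ, |η1 (Y1 ω)| ≤ ((⟨1/f1, by positivity⟩ : NNReal) : ℝ) :=
      Filter.Eventually.of_forall fun ω => hη1b (Y1 ω)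
    have h2 := ae_bdd_condExp_of_ae_bdd (m := mX) hb
    filter_upwards [hm1, h2] with ω h h'
    rw [h]; exact h'
  have hm0b : ∀ᵐ ω ∂μ, |m0 (X ω)| ≤ 1 / f0 := by
    have hb : ∀ᵐ ω ∂μ, |η0 (Y0 ω)| ≤ ((⟨1/f0, by positivity⟩ : NNReal) : ℝ) :=
      Filter.Eventually.of_forall fun ω => hη0b (Y0 ω)
    have h2 := ae_bdd_condExp_of_ae_bdd (m := mX) hb
    filter_upwards [hm0, h2] with ω h h'
    rw [h]; exact h'
  have hmα1b : ∀ᵐ ω ∂μ, |mα1 (α.transpose.mulVec (X ω))| ≤ 1 / f1 := by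
    have hb : ∀ᵐ ω ∂μ, |η1 (Y1 ω)| ≤ ((⟨1/f1, by positivity⟩ : NNReal) : ℝ) :=
      Filter.Eventually.of_forall fun ω => hη1b (Y1 ω)
    have h2 := ae_bdd_condExp_of_ae_bdd
      (m := MeasurableSpace.comap (fun ω => α.transpose.mulVec (X ω)) inferInstance) hb
    filter_upwards [hmα1, h2] with ω h h'
    rw [h]; exact h'
  have hmα0b : ∀ᵐ ω ∂μ, |mα0 (α.transpose.mulVec (X ω))| ≤ 1 / f0 := by
    have hb : ∀ᵐ ω ∂μ, |η0 (Y0 ω)| ≤ ((⟨1/f0, by positivity⟩ : NNReal) : ℝ) :=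
      Filter.Eventually.of_forall fun ω => hη0b (Y0 ω)
    have h2 := ae_bdd_condExp_of_ae_bdd
      (m := MeasurableSpace.comap (fun ω => α.transpose.mulVec (X ω)) inferInstance) hb
    filter_upwards [hmα0, h2] with ω h h'
    rw [h]; exact h'
  -- master a.e. bound
  set B : ℝ := (1/f1)/c + (1/f0)/c with hB_def
  have hBd : ∀ᵐ ω ∂μ, c ≤ p (X ω) ∧ p (X ω) ≤ 1 - c ∧ |ψ ω| ≤ B ∧ |np (X ω)| ≤ B
      ∧ |ep ω| ≤ B ∧ |ε ω| ≤ 1 ∧ |m1 (X ω)| ≤ 1/f1 ∧ |m0 (X ω)| ≤ 1/f0 := by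
    filter_upwards [hoverlap, hm0b, hm1b, hmα0b, hmα1b] with ω hover h0 h1 ha0 ha1
    obtain ⟨hc1, hc2⟩ := hover
    have hp0 : 0 < p (X ω) := lt_of_lt_of_le hc hc1
    have hp1 : p (X ω) ≤ 1 := by linarith
    have h1p : c ≤ 1 - p (X ω) := by linarith
    have h1p0 : 0 < 1 - p (X ω) := lt_of_lt_of_le hc h1p
    have hD' := hD01' ω
    refine ⟨hc1, hc2, ?_, ?_, ?_, ?_, h1, h0⟩
    · -- |ψ|
      rw [hψ]
      have e1 : |D ω / p (X ω) * η1 (Y1 ω)| ≤ (1/f1)/c := by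
        rw [abs_mul, abs_div, abs_of_nonneg hD'.1, abs_of_pos hp0]
        calc D ω / p (X ω) * |η1 (Y1 ω)| ≤ (1/c) * (1/f1) := by
              apply mul_le_mul _ (hη1b _) (abs_nonneg _) (by positivity)
              exact div_le_div₀ (by norm_num) hD'.2 hc hc1
          _ = (1/f1)/c := by ring
      have e2 : |(1 - D ω) / (1 - p (X ω)) * η0 (Y0 ω)| ≤ (1/f0)/c := by
        rw [abs_mul, abs_div, abs_of_nonneg (by linarith [hD'.2] : (0:ℝ) ≤ 1 - D ω),
          abs_of_pos h1p0]
        calc (1 - D ω) / (1 - p (X ω)) * |η0 (Y0 ω)| ≤ (1/c) * (1/f0) := by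
              apply mul_le_mul _ (hη0b _) (abs_nonneg _) (by positivity)
              exact div_le_div₀ (by norm_num) (by linarith [hD'.1]) hc h1p
          _ = (1/f0)/c := by ring
      calc |D ω / p (X ω) * η1 (Y1 ω) - (1 - D ω) / (1 - p (X ω)) * η0 (Y0 ω)|
          ≤ |D ω / p (X ω) * η1 (Y1 ω)| + |(1 - D ω) / (1 - p (X ω)) * η0 (Y0 ω)| :=
            abs_sub _ _
        _ ≤ (1/f1)/c + (1/f0)/c := add_le_add e1 e2
    · -- |np|
      rw [hnp]
      have e1 : |m1 (X ω) / p (X ω)| ≤ (1/f1)/c := by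
        rw [abs_div, abs_of_pos hp0]
        exact div_le_div₀ (by positivity) h1 hc hc1
      have e2 : |m0 (X ω) / (1 - p (X ω))| ≤ (1/f0)/c := by
        rw [abs_div, abs_of_pos h1p0]
        exact div_le_div₀ (by positivity) h0 hc h1p
      calc |m1 (X ω) / p (X ω) + m0 (X ω) / (1 - p (X ω))|
          ≤ |m1 (X ω) / p (X ω)| + |m0 (X ω) / (1 - p (X ω))| := abs_add_le _ _
        _ ≤ (1/f1)/c + (1/f0)/c := add_le_add e1 e2
    · -- |ep|
      rw [hep]
      have e1 : |mα1 (α.transpose.mulVec (X ω)) / p (X ω)| ≤ (1/f1)/c := by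
        rw [abs_div, abs_of_pos hp0]
        exact div_le_div₀ (by positivity) ha1 hc hc1
      have e2 : |mα0 (α.transpose.mulVec (X ω)) / (1 - p (X ω))| ≤ (1/f0)/c := by
        rw [abs_div, abs_of_pos h1p0]
        exact div_le_div₀ (by positivity) ha0 hc h1p
      calc |mα1 (α.transpose.mulVec (X ω)) / p (X ω)
            + mα0 (α.transpose.mulVec (X ω)) / (1 - p (X ω))|
          ≤ |mα1 (α.transpose.mulVec (X ω)) / p (X ω)|
            + |mα0 (α.transpose.mulVec (X ω)) / (1 - p (X ω))| := abs_add_le _ _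
        _ ≤ (1/f1)/c + (1/f0)/c := add_le_add e1 e2
    · -- |ε|
      rw [hε, abs_le]
      constructor <;> linarith [hD'.1, hD'.2]
  have hB0 : 0 < B := by rw [hB_def]; positivity
  have hΔ' : ∀ ω, (m1 (X ω) - mα1 (α.transpose.mulVec (X ω))) / p (X ω)
      + (m0 (X ω) - mα0 (α.transpose.mulVec (X ω))) / (1 - p (X ω)) = np (X ω) - ep ω := by
    intro ω; rw [hnp, hep]; ring
  have hGf_eq : ∀ ω, Gf ω = p (X ω) * (1 - p (X ω)) * (np (X ω) - ep ω)^2 := by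
    intro ω; simp only [hGf_def]; rw [hΔ' ω]
  -- integrability
  have intη1Y : Integrable (fun ω => η1 (Y1 ω)) μ :=
    aux_integrable_of_ae_bound ((hη1m.comp hY1).aestronglyMeasurable)
      (Filter.Eventually.of_forall fun ω => hη1b _)
  have intη0Y : Integrable (fun ω => η0 (Y0 ω)) μ :=
    aux_integrable_of_ae_bound ((hη0m.comp hY0).aestronglyMeasurable)
      (Filter.Eventually.of_forall fun ω => hη0b _)
  have intg1 : Integrable (fun ω => D ω * η1 (Y1 ω)) μ := by
    apply aux_integrable_of_ae_bound ((hD.mul (hη1m.comp hY1)).aestronglyMeasurable)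
      (C := 1/f1)
    filter_upwards with ω
    show |D ω * η1 (Y1 ω)| ≤ 1/f1
    rw [abs_mul, abs_of_nonneg (hD01' ω).1]
    calc D ω * |η1 (Y1 ω)| ≤ 1 * (1/f1) :=
          mul_le_mul (hD01' ω).2 (hη1b _) (abs_nonneg _) (by norm_num)
      _ = 1/f1 := by ring
  have intg0 : Integrable (fun ω => D ω * η0 (Y0 ω)) μ := by
    apply aux_integrable_of_ae_bound ((hD.mul (hη0m.comp hY0)).aestronglyMeasurable)
      (C := 1/f0)
    filter_upwards with ω
    show |D ω * η0 (Y0 ω)| ≤ 1/f0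
    rw [abs_mul, abs_of_nonneg (hD01' ω).1]
    calc D ω * |η0 (Y0 ω)| ≤ 1 * (1/f0) :=
          mul_le_mul (hD01' ω).2 (hη0b _) (abs_nonneg _) (by norm_num)
      _ = 1/f0 := by ring
  have intD : Integrable D μ := by
    apply aux_integrable_of_ae_bound hD.aestronglyMeasurable (C := 1)
    filter_upwards with ω
    rw [abs_of_nonneg (hD01' ω).1]; exact (hD01' ω).2
  have intpX : Integrable (fun ω => p (X ω)) μ := by
    apply aux_integrable_of_ae_bound ((hp.comp hX : Measurable fun ω => p (X ω)).aestronglyMeasurable) (C := 1)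
    filter_upwards [hBd] with ω hb
    simp only [Function.comp_apply]
    rw [abs_of_nonneg (by linarith [hb.1] : (0:ℝ) ≤ p (X ω))]
    linarith [hb.2.1]
  have intε : Integrable ε μ := by
    apply aux_integrable_of_ae_bound hεm.aestronglyMeasurable (C := 1)
    filter_upwards [hBd] with ω hb
    exact hb.2.2.2.2.2.1
  have intεsq : Integrable (fun ω => ε ω ^ 2) μ := by
    apply aux_integrable_of_ae_bound ((hεm.pow measurable_const).aestronglyMeasurable) (C := 1)
    filter_upwards [hBd] with ω hb
    have := hb.2.2.2.2.2.1
    rw [abs_le] at this ⊢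
    constructor <;> nlinarith
  have hφ₂b : ∀ᵐ ω ∂μ, |φ₂ ω| ≤ 2*B := by
    filter_upwards [hBd] with ω hb
    rw [hφ₂]
    have h1 := hb.2.2.1
    have h2 := hb.2.2.2.1
    have h3 := hb.2.2.2.2.2.1
    calc |ψ ω - np (X ω) * ε ω| ≤ |ψ ω| + |np (X ω)| * |ε ω| := by
          rw [← abs_mul]; exact abs_sub _ _
      _ ≤ B + B * 1 := add_le_add h1 (mul_le_mul h2 h3 (abs_nonneg _) (le_of_lt hB0))
      _ = 2*B := by ring
  have hφ₃b : ∀ᵐ ω ∂μ, |φ₃ ω| ≤ 2*B := by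
    filter_upwards [hBd] with ω hb
    rw [hφ₃]
    have h1 := hb.2.2.1
    have h2 := hb.2.2.2.2.1
    have h3 := hb.2.2.2.2.2.1
    calc |ψ ω - ep ω * ε ω| ≤ |ψ ω| + |ep ω| * |ε ω| := by
          rw [← abs_mul]; exact abs_sub _ _
      _ ≤ B + B * 1 := add_le_add h1 (mul_le_mul h2 h3 (abs_nonneg _) (le_of_lt hB0))
      _ = 2*B := by ring
  have intφ₂sq : Integrable (fun ω => φ₂ ω ^ 2) μ := by
    apply aux_integrable_of_ae_bound ((hφ₂m.pow measurable_const).aestronglyMeasurable)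
      (C := (2*B)^2)
    filter_upwards [hφ₂b] with ω hb
    rw [abs_le] at hb ⊢
    constructor <;> nlinarith
  have intφ₃sq : Integrable (fun ω => φ₃ ω ^ 2) μ := by
    apply aux_integrable_of_ae_bound ((hφ₃m.pow measurable_const).aestronglyMeasurable)
      (C := (2*B)^2)
    filter_upwards [hφ₃b] with ω hb
    rw [abs_le] at hb ⊢
    constructor <;> nlinarith
  have intφ₂ε : Integrable (fun ω => φ₂ ω * ε ω) μ := by
    apply aux_integrable_of_ae_bound ((hφ₂m.mul hεm).aestronglyMeasurable) (C := 2*B)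
    filter_upwards [hφ₂b, hBd] with ω hb hb'
    have h3 := hb'.2.2.2.2.2.1
    show |φ₂ ω * ε ω| ≤ 2*B
    rw [abs_mul]
    calc |φ₂ ω| * |ε ω| ≤ (2*B) * 1 :=
          mul_le_mul hb h3 (abs_nonneg _) (by positivity)
      _ = 2*B := by ring
  have intGf : Integrable Gf μ := by
    apply aux_integrable_of_ae_bound hGfm.aestronglyMeasurable (C := (2*B)^2)
    filter_upwards [hBd] with ω hb
    rw [hGf_eq ω]
    have h2 := abs_le.mp hb.2.2.2.1
    have h2' := abs_le.mp hb.2.2.2.2.1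
    have hp0 : 0 ≤ p (X ω) := by linarith [hb.1]
    have hp1 : p (X ω) ≤ 1 := by linarith [hb.2.1]
    have hsq : (np (X ω) - ep ω)^2 ≤ (2*B)^2 := by nlinarith [h2.1, h2.2, h2'.1, h2'.2]
    have hpp0 : 0 ≤ p (X ω) * (1 - p (X ω)) := by nlinarith
    have hpp1 : p (X ω) * (1 - p (X ω)) ≤ 1 := by nlinarith
    rw [abs_le]
    constructor
    · nlinarith [mul_nonneg hpp0 (sq_nonneg (np (X ω) - ep ω))]
    · have h3 := mul_le_mul_of_nonneg_right hpp1 (sq_nonneg (np (X ω) - ep ω))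
      rw [one_mul] at h3
      exact h3.trans hsq
  -- conditional expectation basics
  have hpXsm : StronglyMeasurable[mX] fun ω => p (X ω) := (hp.comp hXm).stronglyMeasurable
  have hcondpX : μ[(fun ω => p (X ω))|mX] = fun ω => p (X ω) :=
    condExp_of_stronglyMeasurable hmXle hpXsm intpX
  have hcondε : μ[ε|mX] =ᵐ[μ] 0 := by
    have h : ε = D - fun ω => p (X ω) := funext fun ω => hε ω
    rw [h]
    refine (condExp_sub intD intpX mX).trans ?_
    rw [hcondpX]
    filter_upwards [hpX] with ω h1
    have h2 : p (X ω) = (μ[D|mX]) ω := h1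
    simp only [Pi.sub_apply, Pi.zero_apply]
    linarith
  have hεsq_dec : (fun ω => ε ω ^ 2)
      = (fun ω => 1 - 2 * p (X ω)) * ε + fun ω => p (X ω) * (1 - p (X ω)) := by
    funext ω
    simp only [Pi.add_apply, Pi.mul_apply]
    rw [hε]
    rcases hD01 ω with h | h <;> rw [h] <;> ring
  have sm12p : StronglyMeasurable[mX] fun ω => 1 - 2 * p (X ω) :=
    (measurable_const.sub ((hp.comp hXm).const_mul 2)).stronglyMeasurable
  have int12pε : Integrable ((fun ω => 1 - 2 * p (X ω)) * ε) μ := by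
    apply aux_integrable_of_ae_bound (C := 1)
      (((measurable_const.sub ((hp.comp hX).const_mul 2)).mul hεm).aestronglyMeasurable)
    filter_upwards [hBd] with ω hb
    show |(1 - 2 * p (X ω)) * ε ω| ≤ 1
    rw [abs_mul]
    have h1 : |1 - 2 * p (X ω)| ≤ 1 := by
      rw [abs_le]; constructor <;> nlinarith [hb.1, hb.2.1, hc]
    exact mul_le_one₀ h1 (abs_nonneg _) hb.2.2.2.2.2.1
  have intpp : Integrable (fun ω => p (X ω) * (1 - p (X ω))) μ := by
    apply aux_integrable_of_ae_bound (C := 1)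
      (((hp.comp hX).mul (measurable_const.sub (hp.comp hX))).aestronglyMeasurable)
    filter_upwards [hBd] with ω hb
    show |p (X ω) * (1 - p (X ω))| ≤ 1
    rw [abs_le]; constructor <;> nlinarith [hb.1, hb.2.1, hc]
  have smpp : StronglyMeasurable[mX] fun ω => p (X ω) * (1 - p (X ω)) :=
    ((hp.comp hXm).mul (measurable_const.sub (hp.comp hXm))).stronglyMeasurable
  have hcondεsq : μ[(fun ω => ε ω ^ 2)|mX] =ᵐ[μ] fun ω => p (X ω) * (1 - p (X ω)) := by
    rw [hεsq_dec]
    refine (condExp_add int12pε intpp mX).trans ?_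
    have e1 := condExp_mul_of_stronglyMeasurable_left sm12p int12pε intε
    have e2 : μ[(fun ω => p (X ω) * (1 - p (X ω)))|mX] = fun ω => p (X ω) * (1 - p (X ω)) :=
      condExp_of_stronglyMeasurable hmXle smpp intpp
    rw [e2]
    filter_upwards [e1, hcondε] with ω h1 h2
    have h2' : (μ[ε|mX]) ω = 0 := h2
    have h1' : (μ[(fun ω => 1 - 2 * p (X ω)) * ε|mX]) ω
        = (1 - 2 * p (X ω)) * (μ[ε|mX]) ω := h1
    simp only [Pi.add_apply]
    rw [h1', h2']
    ring
  -- conditional independence: product formulas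
  have hpairm : Measurable fun ω => (Y0 ω, Y1 ω) := hY0.prodMk hY1
  have hindep := (condIndepFun_iff_condExp_inter_preimage_eq_mul
    (m' := mX) (hm' := hmXle) (μ := μ) hpairm hD).mp hunconf
  have hmul1 := hindep (Set.univ ×ˢ Set.Iic q1) {1}
    (MeasurableSet.univ.prod measurableSet_Iic) (measurableSet_singleton 1)
  have hmul0 := hindep (Set.Iic q0 ×ˢ Set.univ) {1}
    (measurableSet_Iic.prod MeasurableSet.univ) (measurableSet_singleton 1)
  have hIBmeas : MeasurableSet (D ⁻¹' ({1} : Set ℝ)) := hD (measurableSet_singleton 1)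
  have hIA1meas : MeasurableSet ((fun ω => (Y0 ω, Y1 ω)) ⁻¹' (Set.univ ×ˢ Set.Iic q1)) :=
    hpairm (MeasurableSet.univ.prod measurableSet_Iic)
  have hIA0meas : MeasurableSet ((fun ω => (Y0 ω, Y1 ω)) ⁻¹' (Set.Iic q0 ×ˢ Set.univ)) :=
    hpairm (measurableSet_Iic.prod MeasurableSet.univ)
  have intIB : Integrable ((D ⁻¹' ({1} : Set ℝ)).indicator fun _ => (1:ℝ)) μ :=
    (integrable_const (1:ℝ)).indicator hIBmeas
  have intIA1 : Integrable
      (((fun ω => (Y0 ω, Y1 ω)) ⁻¹' (Set.univ ×ˢ Set.Iic q1)).indicator fun _ => (1:ℝ)) μ :=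
    (integrable_const (1:ℝ)).indicator hIA1meas
  have intIA0 : Integrable
      (((fun ω => (Y0 ω, Y1 ω)) ⁻¹' (Set.Iic q0 ×ˢ Set.univ)).indicator fun _ => (1:ℝ)) μ :=
    (integrable_const (1:ℝ)).indicator hIA0meas
  have intIA1B : Integrable
      ((((fun ω => (Y0 ω, Y1 ω)) ⁻¹' (Set.univ ×ˢ Set.Iic q1)) ∩ D ⁻¹' {1}).indicator
        fun _ => (1:ℝ)) μ :=
    (integrable_const (1:ℝ)).indicator (hIA1meas.inter hIBmeas)
  have intIA0B : Integrable
      ((((fun ω => (Y0 ω, Y1 ω)) ⁻¹' (Set.Iic q0 ×ˢ Set.univ)) ∩ D ⁻¹' {1}).indicator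
        fun _ => (1:ℝ)) μ :=
    (integrable_const (1:ℝ)).indicator (hIA0meas.inter hIBmeas)
  have hcondIB : μ⟦D ⁻¹' ({1} : Set ℝ)|mX⟧ =ᵐ[μ] fun ω => p (X ω) := by
    have h : (D ⁻¹' ({1} : Set ℝ)).indicator (fun _ => (1:ℝ)) = D := by
      funext ω
      rcases hD01 ω with h | h <;>
        simp [Set.indicator_apply, Set.mem_preimage, Set.mem_singleton_iff, h]
    rw [show (μ⟦D ⁻¹' ({1} : Set ℝ)|mX⟧) = μ[D|mX] by rw [h]]
    exact hpX.symm
  have hcondIA1 : μ⟦(fun ω => (Y0 ω, Y1 ω)) ⁻¹' (Set.univ ×ˢ Set.Iic q1)|mX⟧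
      =ᵐ[μ] fun ω => τ + f1 * m1 (X ω) := by
    have h : ((fun ω => (Y0 ω, Y1 ω)) ⁻¹' (Set.univ ×ˢ Set.Iic q1)).indicator (fun _ => (1:ℝ))
        = (fun _ => τ) + f1 • fun ω => η1 (Y1 ω) := by
      funext ω
      simp only [Set.indicator_apply, Set.mem_preimage, Set.mem_prod, Set.mem_univ, Set.mem_Iic,
        true_and, Pi.add_apply, Pi.smul_apply, smul_eq_mul, hη1]
      split_ifs with hcase <;> field_simp <;> ring
    rw [show (μ⟦(fun ω => (Y0 ω, Y1 ω)) ⁻¹' (Set.univ ×ˢ Set.Iic q1)|mX⟧)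
      = μ[(fun _ => τ) + f1 • fun ω => η1 (Y1 ω)|mX] by rw [h]]
    refine (condExp_add (integrable_const τ) (intη1Y.smul f1) mX).trans ?_
    rw [condExp_const hmXle]
    filter_upwards [condExp_smul (μ := μ) (m := mX) f1 (fun ω => η1 (Y1 ω)), hm1] with ω h1 h2
    have h1' : (μ[f1 • fun ω => η1 (Y1 ω)|mX]) ω = f1 * (μ[(fun ω => η1 (Y1 ω))|mX]) ω := h1
    have h2' : m1 (X ω) = (μ[(fun ω => η1 (Y1 ω))|mX]) ω := h2
    simp only [Pi.add_apply]
    rw [h1', ← h2']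
  have hcondIA0 : μ⟦(fun ω => (Y0 ω, Y1 ω)) ⁻¹' (Set.Iic q0 ×ˢ Set.univ)|mX⟧
      =ᵐ[μ] fun ω => τ + f0 * m0 (X ω) := by
    have h : ((fun ω => (Y0 ω, Y1 ω)) ⁻¹' (Set.Iic q0 ×ˢ Set.univ)).indicator (fun _ => (1:ℝ))
        = (fun _ => τ) + f0 • fun ω => η0 (Y0 ω) := by
      funext ω
      simp only [Set.indicator_apply, Set.mem_preimage, Set.mem_prod, Set.mem_univ, Set.mem_Iic,
        and_true, Pi.add_apply, Pi.smul_apply, smul_eq_mul, hη0]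
      split_ifs with hcase <;> field_simp <;> ring
    rw [show (μ⟦(fun ω => (Y0 ω, Y1 ω)) ⁻¹' (Set.Iic q0 ×ˢ Set.univ)|mX⟧)
      = μ[(fun _ => τ) + f0 • fun ω => η0 (Y0 ω)|mX] by rw [h]]
    refine (condExp_add (integrable_const τ) (intη0Y.smul f0) mX).trans ?_
    rw [condExp_const hmXle]
    filter_upwards [condExp_smul (μ := μ) (m := mX) f0 (fun ω => η0 (Y0 ω)), hm0] with ω h1 h2
    have h1' : (μ[f0 • fun ω => η0 (Y0 ω)|mX]) ω = f0 * (μ[(fun ω => η0 (Y0 ω))|mX]) ω := h1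
    have h2' : m0 (X ω) = (μ[(fun ω => η0 (Y0 ω))|mX]) ω := h2
    simp only [Pi.add_apply]
    rw [h1', ← h2']
  have hcondDη1 : μ[(fun ω => D ω * η1 (Y1 ω))|mX] =ᵐ[μ] fun ω => p (X ω) * m1 (X ω) := by
    have hdec : (fun ω => D ω * η1 (Y1 ω)) = f1⁻¹ •
        (((((fun ω => (Y0 ω, Y1 ω)) ⁻¹' (Set.univ ×ˢ Set.Iic q1)) ∩ D ⁻¹' {1}).indicator
            fun _ => (1:ℝ))
          - τ • (D ⁻¹' ({1} : Set ℝ)).indicator fun _ => (1:ℝ)) := by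
      funext ω
      simp only [Pi.smul_apply, Pi.sub_apply, Set.indicator_apply, Set.mem_inter_iff,
        Set.mem_preimage, Set.mem_prod, Set.mem_univ, Set.mem_Iic, true_and,
        Set.mem_singleton_iff, smul_eq_mul, hη1]
      rcases hD01 ω with h | h <;> rw [h] <;> simp <;> split_ifs <;> field_simp
    rw [hdec]
    refine (condExp_smul (μ := μ) (m := mX) _ _).trans ?_
    have h2 := condExp_sub (m := mX) intIA1B (intIB.smul τ)
    have h3 := condExp_smul (μ := μ) (m := mX) τ ((D ⁻¹' ({1} : Set ℝ)).indicator fun _ => (1:ℝ))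
    filter_upwards [h2, h3, hmul1, hcondIA1, hcondIB] with ω e2 e3 e4 e5 e6
    have e2' : (μ[(((fun ω => (Y0 ω, Y1 ω)) ⁻¹' (Set.univ ×ˢ Set.Iic q1) ∩ D ⁻¹' {1}).indicator
          fun _ => (1:ℝ)) - τ • (D ⁻¹' ({1} : Set ℝ)).indicator (fun _ => (1:ℝ))|mX]) ω
        = (μ⟦(fun ω => (Y0 ω, Y1 ω)) ⁻¹' (Set.univ ×ˢ Set.Iic q1) ∩ D ⁻¹' {1}|mX⟧) ω
          - (μ[τ • (D ⁻¹' ({1} : Set ℝ)).indicator (fun _ => (1:ℝ))|mX]) ω := e2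
    have e3' : (μ[τ • (D ⁻¹' ({1} : Set ℝ)).indicator (fun _ => (1:ℝ))|mX]) ω
        = τ * (μ⟦D ⁻¹' ({1} : Set ℝ)|mX⟧) ω := e3
    have e4' : (μ⟦(fun ω => (Y0 ω, Y1 ω)) ⁻¹' (Set.univ ×ˢ Set.Iic q1) ∩ D ⁻¹' {1}|mX⟧) ω
        = (μ⟦(fun ω => (Y0 ω, Y1 ω)) ⁻¹' (Set.univ ×ˢ Set.Iic q1)|mX⟧) ω
          * (μ⟦D ⁻¹' ({1} : Set ℝ)|mX⟧) ω := e4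
    have e5' : (μ⟦(fun ω => (Y0 ω, Y1 ω)) ⁻¹' (Set.univ ×ˢ Set.Iic q1)|mX⟧) ω
        = τ + f1 * m1 (X ω) := e5
    have e6' : (μ⟦D ⁻¹' ({1} : Set ℝ)|mX⟧) ω = p (X ω) := e6
    show f1⁻¹ • (μ[_|mX]) ω = p (X ω) * m1 (X ω)
    rw [smul_eq_mul, e2', e3', e4', e5', e6']
    field_simp
    ring
  have hcondDη0 : μ[(fun ω => D ω * η0 (Y0 ω))|mX] =ᵐ[μ] fun ω => p (X ω) * m0 (X ω) := by
    have hdec : (fun ω => D ω * η0 (Y0 ω)) = f0⁻¹ •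
        (((((fun ω => (Y0 ω, Y1 ω)) ⁻¹' (Set.Iic q0 ×ˢ Set.univ)) ∩ D ⁻¹' {1}).indicator
            fun _ => (1:ℝ))
          - τ • (D ⁻¹' ({1} : Set ℝ)).indicator fun _ => (1:ℝ)) := by
      funext ω
      simp only [Pi.smul_apply, Pi.sub_apply, Set.indicator_apply, Set.mem_inter_iff,
        Set.mem_preimage, Set.mem_prod, Set.mem_univ, Set.mem_Iic, and_true,
        Set.mem_singleton_iff, smul_eq_mul, hη0]
      rcases hD01 ω with h | h <;> rw [h] <;> simp <;> split_ifs <;> field_simp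
    rw [hdec]
    refine (condExp_smul (μ := μ) (m := mX) _ _).trans ?_
    have h2 := condExp_sub (m := mX) intIA0B (intIB.smul τ)
    have h3 := condExp_smul (μ := μ) (m := mX) τ ((D ⁻¹' ({1} : Set ℝ)).indicator fun _ => (1:ℝ))
    filter_upwards [h2, h3, hmul0, hcondIA0, hcondIB] with ω e2 e3 e4 e5 e6
    have e2' : (μ[(((fun ω => (Y0 ω, Y1 ω)) ⁻¹' (Set.Iic q0 ×ˢ Set.univ) ∩ D ⁻¹' {1}).indicator
          fun _ => (1:ℝ)) - τ • (D ⁻¹' ({1} : Set ℝ)).indicator (fun _ => (1:ℝ))|mX]) ω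
        = (μ⟦(fun ω => (Y0 ω, Y1 ω)) ⁻¹' (Set.Iic q0 ×ˢ Set.univ) ∩ D ⁻¹' {1}|mX⟧) ω
          - (μ[τ • (D ⁻¹' ({1} : Set ℝ)).indicator (fun _ => (1:ℝ))|mX]) ω := e2
    have e3' : (μ[τ • (D ⁻¹' ({1} : Set ℝ)).indicator (fun _ => (1:ℝ))|mX]) ω
        = τ * (μ⟦D ⁻¹' ({1} : Set ℝ)|mX⟧) ω := e3
    have e4' : (μ⟦(fun ω => (Y0 ω, Y1 ω)) ⁻¹' (Set.Iic q0 ×ˢ Set.univ) ∩ D ⁻¹' {1}|mX⟧) ω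
        = (μ⟦(fun ω => (Y0 ω, Y1 ω)) ⁻¹' (Set.Iic q0 ×ˢ Set.univ)|mX⟧) ω
          * (μ⟦D ⁻¹' ({1} : Set ℝ)|mX⟧) ω := e4
    have e5' : (μ⟦(fun ω => (Y0 ω, Y1 ω)) ⁻¹' (Set.Iic q0 ×ˢ Set.univ)|mX⟧) ω
        = τ + f0 * m0 (X ω) := e5
    have e6' : (μ⟦D ⁻¹' ({1} : Set ℝ)|mX⟧) ω = p (X ω) := e6
    show f0⁻¹ • (μ[_|mX]) ω = p (X ω) * m0 (X ω)
    rw [smul_eq_mul, e2', e3', e4', e5', e6']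
    field_simp
    ring
  -- E[φ₂ ε | mX] = 0
  set b1 : Ω → ℝ := fun ω => (1 - p (X ω)) / p (X ω) with hb1_def
  set b2 : Ω → ℝ := fun ω => p (X ω) / (1 - p (X ω)) with hb2_def
  set b4 : Ω → ℝ := fun ω => -(np (X ω) * (1 - 2 * p (X ω))) with hb4_def
  set b5 : Ω → ℝ := fun ω => -(np (X ω) * (p (X ω) * (1 - p (X ω)))) with hb5_def
  have smb1 : StronglyMeasurable[mX] b1 :=
    ((measurable_const.sub (hp.comp hXm)).div (hp.comp hXm)).stronglyMeasurable
  have smb2 : StronglyMeasurable[mX] b2 :=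
    ((hp.comp hXm).div (measurable_const.sub (hp.comp hXm))).stronglyMeasurable
  have smb2n : StronglyMeasurable[mX] (-b2) := smb2.neg
  have smb4 : StronglyMeasurable[mX] b4 :=
    (((hnpm.comp hXm).mul (measurable_const.sub ((hp.comp hXm).const_mul 2))).neg).stronglyMeasurable
  have smb5 : StronglyMeasurable[mX] b5 :=
    (((hnpm.comp hXm).mul ((hp.comp hXm).mul (measurable_const.sub (hp.comp hXm)))).neg).stronglyMeasurable
  have hb1b : ∀ᵐ ω ∂μ, |b1 ω| ≤ 1/c := by
    filter_upwards [hBd] with ω hb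
    have h1 : (0:ℝ) < p (X ω) := lt_of_lt_of_le hc hb.1
    rw [hb1_def]
    simp only
    rw [abs_div, abs_of_pos h1, abs_of_nonneg (by linarith [hb.2.1] : (0:ℝ) ≤ 1 - p (X ω))]
    exact div_le_div₀ (by norm_num) (by linarith [hb.1]) hc hb.1
  have hb2b : ∀ᵐ ω ∂μ, |b2 ω| ≤ 1/c := by
    filter_upwards [hBd] with ω hb
    have h1 : (0:ℝ) < 1 - p (X ω) := by linarith [hb.2.1, hc]
    rw [hb2_def]
    simp only
    rw [abs_div, abs_of_pos h1, abs_of_nonneg (by linarith [hb.1, hc] : (0:ℝ) ≤ p (X ω))]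
    exact div_le_div₀ (by norm_num) (by linarith [hb.1, hb.2.1]) hc (by linarith [hb.2.1])
  have hDη1b : ∀ ω, |D ω * η1 (Y1 ω)| ≤ 1/f1 := by
    intro ω
    rw [abs_mul, abs_of_nonneg (hD01' ω).1]
    calc D ω * |η1 (Y1 ω)| ≤ 1 * (1/f1) :=
          mul_le_mul (hD01' ω).2 (hη1b _) (abs_nonneg _) (by norm_num)
      _ = 1/f1 := by ring
  have hDη0b : ∀ ω, |D ω * η0 (Y0 ω)| ≤ 1/f0 := by
    intro ω
    rw [abs_mul, abs_of_nonneg (hD01' ω).1]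
    calc D ω * |η0 (Y0 ω)| ≤ 1 * (1/f0) :=
          mul_le_mul (hD01' ω).2 (hη0b _) (abs_nonneg _) (by norm_num)
      _ = 1/f0 := by ring
  have intb1g1 : Integrable (b1 * fun ω => D ω * η1 (Y1 ω)) μ := by
    apply aux_integrable_of_ae_bound (C := (1/c) * (1/f1))
      ((smb1.mono hmXle).measurable.mul (hD.mul (hη1m.comp hY1))).aestronglyMeasurable
    filter_upwards [hb1b] with ω hb
    show |b1 ω * (D ω * η1 (Y1 ω))| ≤ (1/c) * (1/f1)
    rw [abs_mul]
    exact mul_le_mul hb (hDη1b ω) (abs_nonneg _) (by positivity)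
  have intb2h0 : Integrable (b2 * fun ω => η0 (Y0 ω)) μ := by
    apply aux_integrable_of_ae_bound (C := (1/c) * (1/f0))
      ((smb2.mono hmXle).measurable.mul (hη0m.comp hY0)).aestronglyMeasurable
    filter_upwards [hb2b] with ω hb
    show |b2 ω * η0 (Y0 ω)| ≤ (1/c) * (1/f0)
    rw [abs_mul]
    exact mul_le_mul hb (hη0b _) (abs_nonneg _) (by positivity)
  have intb2ng0 : Integrable ((-b2) * fun ω => D ω * η0 (Y0 ω)) μ := by
    apply aux_integrable_of_ae_bound (C := (1/c) * (1/f0))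
      (((smb2n.mono hmXle).measurable).mul (hD.mul (hη0m.comp hY0))).aestronglyMeasurable
    filter_upwards [hb2b] with ω hb
    show |(-b2) ω * (D ω * η0 (Y0 ω))| ≤ (1/c) * (1/f0)
    rw [Pi.neg_apply, abs_mul, abs_neg]
    exact mul_le_mul hb (hDη0b ω) (abs_nonneg _) (by positivity)
  have intb4ε : Integrable (b4 * ε) μ := by
    apply aux_integrable_of_ae_bound (C := B)
      ((smb4.mono hmXle).measurable.mul hεm).aestronglyMeasurable
    filter_upwards [hBd] with ω hb
    show |b4 ω * ε ω| ≤ B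
    rw [abs_mul, hb4_def]
    simp only
    rw [abs_neg, abs_mul]
    have h1 : |1 - 2 * p (X ω)| ≤ 1 := by
      rw [abs_le]; constructor <;> nlinarith [hb.1, hb.2.1, hc]
    have h2 := hb.2.2.2.1
    have h3 := hb.2.2.2.2.2.1
    calc |np (X ω)| * |1 - 2 * p (X ω)| * |ε ω| ≤ B * 1 * 1 := by
          apply mul_le_mul _ h3 (abs_nonneg _) (by positivity)
          exact mul_le_mul h2 h1 (abs_nonneg _) (le_of_lt hB0)
      _ = B := by ring
  have intb5 : Integrable b5 μ := by
    apply aux_integrable_of_ae_bound (C := B) ((smb5.mono hmXle).measurable).aestronglyMeasurable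
    filter_upwards [hBd] with ω hb
    show |b5 ω| ≤ B
    rw [hb5_def]
    simp only
    rw [abs_neg, abs_mul]
    have h1 : |p (X ω) * (1 - p (X ω))| ≤ 1 := by
      rw [abs_le]; constructor <;> nlinarith [hb.1, hb.2.1, hc]
    calc |np (X ω)| * |p (X ω) * (1 - p (X ω))| ≤ B * 1 :=
          mul_le_mul hb.2.2.2.1 h1 (abs_nonneg _) (le_of_lt hB0)
      _ = B := by ring
  have hφ₂ε_dec : (fun ω => φ₂ ω * ε ω)
      = b1 * (fun ω => D ω * η1 (Y1 ω)) + b2 * (fun ω => η0 (Y0 ω))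
        + (-b2) * (fun ω => D ω * η0 (Y0 ω)) + b4 * ε + b5 := by
    funext ω
    simp only [Pi.add_apply, Pi.mul_apply, Pi.neg_apply, hb1_def, hb2_def, hb4_def, hb5_def]
    rw [hφ₂, hψ, hε]
    rcases hD01 ω with h | h <;> rw [h] <;> ring
  have hcondφ₂ε : μ[(fun ω => φ₂ ω * ε ω)|mX] =ᵐ[μ] 0 := by
    rw [hφ₂ε_dec]
    have a1 := condExp_add (m := mX) intb1g1 intb2h0
    have a2 := condExp_add (m := mX) (intb1g1.add intb2h0) intb2ng0
    have a3 := condExp_add (m := mX) ((intb1g1.add intb2h0).add intb2ng0) intb4ε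
    have a4 := condExp_add (m := mX) (((intb1g1.add intb2h0).add intb2ng0).add intb4ε) intb5
    have e1 := condExp_mul_of_stronglyMeasurable_left smb1 intb1g1 intg1
    have e2 := condExp_mul_of_stronglyMeasurable_left smb2 intb2h0 intη0Y
    have e3 := condExp_mul_of_stronglyMeasurable_left smb2n intb2ng0 intg0
    have e4 := condExp_mul_of_stronglyMeasurable_left smb4 intb4ε intε
    have e5 : μ[b5|mX] = b5 := condExp_of_stronglyMeasurable hmXle smb5 intb5
    filter_upwards [a1, a2, a3, a4, e1, e2, e3, e4, hcondDη1, hcondDη0, hm0, hcondε, hBd]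
      with ω ha1 ha2 ha3 ha4 he1 he2 he3 he4 hd1 hd0 hh0 hce hb
    have ha4' : (μ[b1 * (fun ω => D ω * η1 (Y1 ω)) + b2 * (fun ω => η0 (Y0 ω))
          + (-b2) * (fun ω => D ω * η0 (Y0 ω)) + b4 * ε + b5|mX]) ω
        = (μ[b1 * (fun ω => D ω * η1 (Y1 ω)) + b2 * (fun ω => η0 (Y0 ω))
          + (-b2) * (fun ω => D ω * η0 (Y0 ω)) + b4 * ε|mX]) ω + (μ[b5|mX]) ω := ha4
    have ha3' : (μ[b1 * (fun ω => D ω * η1 (Y1 ω)) + b2 * (fun ω => η0 (Y0 ω))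
          + (-b2) * (fun ω => D ω * η0 (Y0 ω)) + b4 * ε|mX]) ω
        = (μ[b1 * (fun ω => D ω * η1 (Y1 ω)) + b2 * (fun ω => η0 (Y0 ω))
          + (-b2) * (fun ω => D ω * η0 (Y0 ω))|mX]) ω + (μ[b4 * ε|mX]) ω := ha3
    have ha2' : (μ[b1 * (fun ω => D ω * η1 (Y1 ω)) + b2 * (fun ω => η0 (Y0 ω))
          + (-b2) * (fun ω => D ω * η0 (Y0 ω))|mX]) ω
        = (μ[b1 * (fun ω => D ω * η1 (Y1 ω)) + b2 * (fun ω => η0 (Y0 ω))|mX]) ω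
          + (μ[(-b2) * (fun ω => D ω * η0 (Y0 ω))|mX]) ω := ha2
    have ha1' : (μ[b1 * (fun ω => D ω * η1 (Y1 ω)) + b2 * (fun ω => η0 (Y0 ω))|mX]) ω
        = (μ[b1 * (fun ω => D ω * η1 (Y1 ω))|mX]) ω + (μ[b2 * (fun ω => η0 (Y0 ω))|mX]) ω := ha1
    have he1' : (μ[b1 * (fun ω => D ω * η1 (Y1 ω))|mX]) ω
        = b1 ω * (μ[(fun ω => D ω * η1 (Y1 ω))|mX]) ω := he1
    have he2' : (μ[b2 * (fun ω => η0 (Y0 ω))|mX]) ω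
        = b2 ω * (μ[(fun ω => η0 (Y0 ω))|mX]) ω := he2
    have he3' : (μ[(-b2) * (fun ω => D ω * η0 (Y0 ω))|mX]) ω
        = (-b2) ω * (μ[(fun ω => D ω * η0 (Y0 ω))|mX]) ω := he3
    have he4' : (μ[b4 * ε|mX]) ω = b4 ω * (μ[ε|mX]) ω := he4
    have hd1' : (μ[(fun ω => D ω * η1 (Y1 ω))|mX]) ω = p (X ω) * m1 (X ω) := hd1
    have hd0' : (μ[(fun ω => D ω * η0 (Y0 ω))|mX]) ω = p (X ω) * m0 (X ω) := hd0
    have hh0' : m0 (X ω) = (μ[(fun ω => η0 (Y0 ω))|mX]) ω := hh0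
    have hce' : (μ[ε|mX]) ω = 0 := hce
    show (μ[b1 * (fun ω => D ω * η1 (Y1 ω)) + b2 * (fun ω => η0 (Y0 ω))
          + (-b2) * (fun ω => D ω * η0 (Y0 ω)) + b4 * ε + b5|mX]) ω = 0
    rw [ha4', ha3', ha2', ha1', he1', he2', he3', he4', hd1', hd0', ← hh0', hce', e5]
    simp only [Pi.neg_apply, hb1_def, hb2_def, hb4_def, hb5_def]
    rw [hnp]
    have hp0 : p (X ω) ≠ 0 := by
      have := hb.1; intro hcon; rw [hcon] at this; linarith
    have hp1 : (1:ℝ) - p (X ω) ≠ 0 := by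
      have := hb.2.1; intro hcon; nlinarith
    field_simp
    ring
  -- decomposition of φ₃² − φ₂² − G
  have hepmX : Measurable[mX] ep := by
    have h : ep = fun ω => mα1 (α.transpose.mulVec (X ω)) / p (X ω)
        + mα0 (α.transpose.mulVec (X ω)) / (1 - p (X ω)) := funext hep
    rw [h]
    exact ((hmα1meas.comp (hαm.comp hXm)).div (hp.comp hXm)).add
      ((hmα0meas.comp (hαm.comp hXm)).div (measurable_const.sub (hp.comp hXm)))
  set c1 : Ω → ℝ := fun ω => 2 * (np (X ω) - ep ω) with hc1_def
  set c2 : Ω → ℝ := fun ω => (np (X ω) - ep ω) ^ 2 with hc2_def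
  set c3 : Ω → ℝ := fun ω => -(p (X ω) * (1 - p (X ω)) * (np (X ω) - ep ω) ^ 2) with hc3_def
  have smc1 : StronglyMeasurable[mX] c1 :=
    (((hnpm.comp hXm).sub hepmX).const_mul 2).stronglyMeasurable
  have smc2 : StronglyMeasurable[mX] c2 :=
    (((hnpm.comp hXm).sub hepmX).pow measurable_const).stronglyMeasurable
  have smc3 : StronglyMeasurable[mX] c3 :=
    ((((hp.comp hXm).mul (measurable_const.sub (hp.comp hXm))).mul
      (((hnpm.comp hXm).sub hepmX).pow measurable_const)).neg).stronglyMeasurable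
  have intc1φ₂ε : Integrable (c1 * fun ω => φ₂ ω * ε ω) μ := by
    apply aux_integrable_of_ae_bound (C := (4*B) * (2*B))
      ((smc1.mono hmXle).measurable.mul (hφ₂m.mul hεm)).aestronglyMeasurable
    filter_upwards [hBd, hφ₂b] with ω hb hb2
    show |c1 ω * (φ₂ ω * ε ω)| ≤ (4*B) * (2*B)
    rw [abs_mul, hc1_def]
    simp only
    have h1 : |2 * (np (X ω) - ep ω)| ≤ 4*B := by
      have := abs_le.mp hb.2.2.2.1
      have := abs_le.mp hb.2.2.2.2.1
      rw [abs_le]; constructor <;> nlinarith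
    have h2 : |φ₂ ω * ε ω| ≤ 2*B := by
      rw [abs_mul]
      calc |φ₂ ω| * |ε ω| ≤ (2*B) * 1 :=
            mul_le_mul hb2 hb.2.2.2.2.2.1 (abs_nonneg _) (by positivity)
        _ = 2*B := by ring
    exact mul_le_mul h1 h2 (abs_nonneg _) (by positivity)
  have intc2εsq : Integrable (c2 * fun ω => ε ω ^ 2) μ := by
    apply aux_integrable_of_ae_bound (C := (2*B)^2)
      ((smc2.mono hmXle).measurable.mul (hεm.pow measurable_const)).aestronglyMeasurable
    filter_upwards [hBd] with ω hb
    show |c2 ω * ε ω ^ 2| ≤ (2*B)^2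
    rw [abs_mul, hc2_def]
    simp only
    have h1 : |(np (X ω) - ep ω)^2| ≤ (2*B)^2 := by
      have := abs_le.mp hb.2.2.2.1
      have := abs_le.mp hb.2.2.2.2.1
      rw [abs_le]; constructor <;> nlinarith
    have h2 : |ε ω ^ 2| ≤ 1 := by
      have := abs_le.mp hb.2.2.2.2.2.1
      rw [abs_le]; constructor <;> nlinarith
    calc |(np (X ω) - ep ω)^2| * |ε ω ^ 2| ≤ (2*B)^2 * 1 :=
          mul_le_mul h1 h2 (abs_nonneg _) (by positivity)
      _ = (2*B)^2 := by ring
  have intc3 : Integrable c3 μ := by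
    apply aux_integrable_of_ae_bound (C := (2*B)^2)
      ((smc3.mono hmXle).measurable).aestronglyMeasurable
    filter_upwards [hBd] with ω hb
    show |c3 ω| ≤ (2*B)^2
    rw [hc3_def]
    simp only
    rw [abs_neg, abs_mul]
    have h1 : |p (X ω) * (1 - p (X ω))| ≤ 1 := by
      rw [abs_le]; constructor <;> nlinarith [hb.1, hb.2.1, hc]
    have h2 : |(np (X ω) - ep ω)^2| ≤ (2*B)^2 := by
      have := abs_le.mp hb.2.2.2.1
      have := abs_le.mp hb.2.2.2.2.1
      rw [abs_le]; constructor <;> nlinarith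
    calc |p (X ω) * (1 - p (X ω))| * |(np (X ω) - ep ω)^2| ≤ 1 * ((2*B)^2) :=
          mul_le_mul h1 h2 (abs_nonneg _) (by norm_num)
      _ = (2*B)^2 := by ring
  set F : Ω → ℝ := fun ω => φ₃ ω ^ 2 - φ₂ ω ^ 2 - Gf ω with hF_def
  have hφ₃dec : ∀ ω, φ₃ ω = φ₂ ω + (np (X ω) - ep ω) * ε ω := by
    intro ω; rw [hφ₃, hφ₂]; ring
  have hFdec : F = c1 * (fun ω => φ₂ ω * ε ω) + c2 * (fun ω => ε ω ^ 2) + c3 := by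
    funext ω
    show φ₃ ω ^ 2 - φ₂ ω ^ 2 - Gf ω = _
    simp only [Pi.add_apply, Pi.mul_apply, hc1_def, hc2_def, hc3_def]
    rw [hGf_eq ω, hφ₃dec ω]
    ring
  have intF : Integrable F μ := by
    have h : F = ((fun ω => φ₃ ω ^ 2) - fun ω => φ₂ ω ^ 2) - Gf := rfl
    rw [h]
    exact (intφ₃sq.sub intφ₂sq).sub intGf
  have hcondF : μ[F|mX] =ᵐ[μ] 0 := by
    rw [hFdec]
    have a1 := condExp_add (m := mX) intc1φ₂ε intc2εsq
    have a2 := condExp_add (m := mX) (intc1φ₂ε.add intc2εsq) intc3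
    have e1 := condExp_mul_of_stronglyMeasurable_left smc1 intc1φ₂ε intφ₂ε
    have e2 := condExp_mul_of_stronglyMeasurable_left smc2 intc2εsq intεsq
    have e3 : μ[c3|mX] = c3 := condExp_of_stronglyMeasurable hmXle smc3 intc3
    filter_upwards [a1, a2, e1, e2, hcondφ₂ε, hcondεsq] with ω ha1 ha2 he1 he2 h5 h6
    have ha2' : (μ[c1 * (fun ω => φ₂ ω * ε ω) + c2 * (fun ω => ε ω ^ 2) + c3|mX]) ω
        = (μ[c1 * (fun ω => φ₂ ω * ε ω) + c2 * (fun ω => ε ω ^ 2)|mX]) ω + (μ[c3|mX]) ω := ha2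
    have ha1' : (μ[c1 * (fun ω => φ₂ ω * ε ω) + c2 * (fun ω => ε ω ^ 2)|mX]) ω
        = (μ[c1 * (fun ω => φ₂ ω * ε ω)|mX]) ω + (μ[c2 * (fun ω => ε ω ^ 2)|mX]) ω := ha1
    have he1' : (μ[c1 * (fun ω => φ₂ ω * ε ω)|mX]) ω
        = c1 ω * (μ[(fun ω => φ₂ ω * ε ω)|mX]) ω := he1
    have he2' : (μ[c2 * (fun ω => ε ω ^ 2)|mX]) ω
        = c2 ω * (μ[(fun ω => ε ω ^ 2)|mX]) ω := he2
    have h5' : (μ[(fun ω => φ₂ ω * ε ω)|mX]) ω = 0 := h5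
    have h6' : (μ[(fun ω => ε ω ^ 2)|mX]) ω = p (X ω) * (1 - p (X ω)) := h6
    show (μ[c1 * (fun ω => φ₂ ω * ε ω) + c2 * (fun ω => ε ω ^ 2) + c3|mX]) ω = 0
    rw [ha2', ha1', he1', he2', h5', h6', e3]
    simp only [hc1_def, hc2_def, hc3_def]
    ring
  -- tower property and conclusion
  have htower : μ[F|mX1] =ᵐ[μ] 0 := by
    refine (condExp_condExp_of_le hle hmXle).symm.trans ?_
    refine (condExp_congr_ae (m := mX1) hcondF).trans ?_
    rw [condExp_zero]
  have hsplit : μ[F|mX1] =ᵐ[μ]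
      μ[(fun ω => φ₃ ω ^ 2)|mX1] - μ[(fun ω => φ₂ ω ^ 2)|mX1] - μ[Gf|mX1] := by
    have h : F = ((fun ω => φ₃ ω ^ 2) - fun ω => φ₂ ω ^ 2) - Gf := rfl
    rw [h]
    refine (condExp_sub (m := mX1) (intφ₃sq.sub intφ₂sq) intGf).trans ?_
    exact (condExp_sub (m := mX1) intφ₃sq intφ₂sq).sub Filter.EventuallyEq.rfl
  have hmain : μ[(fun ω => φ₃ ω ^ 2)|mX1] =ᵐ[μ]
      μ[(fun ω => φ₂ ω ^ 2)|mX1] + μ[Gf|mX1] := by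
    filter_upwards [htower, hsplit] with ω h1 h2
    have h1' : (μ[F|mX1]) ω = 0 := h1
    have h2' : (μ[F|mX1]) ω = (μ[(fun ω => φ₃ ω ^ 2)|mX1]) ω
        - (μ[(fun ω => φ₂ ω ^ 2)|mX1]) ω - (μ[Gf|mX1]) ω := h2
    show (μ[(fun ω => φ₃ ω ^ 2)|mX1]) ω
        = (μ[(fun ω => φ₂ ω ^ 2)|mX1]) ω + (μ[Gf|mX1]) ω
    linarith
  have hGnn : (0 : Ω → ℝ) ≤ᵐ[μ] μ[Gf|mX1] := by
    refine condExp_nonneg ?_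
    filter_upwards [hBd] with ω hb
    show (0 : ℝ) ≤ Gf ω
    rw [hGf_eq ω]
    have h1 : (0:ℝ) ≤ p (X ω) := by linarith [hb.1, hc]
    have h2 : (0:ℝ) ≤ 1 - p (X ω) := by linarith [hb.2.1, hc]
    positivity
  refine ⟨hmain, ?_⟩
  filter_upwards [hmain, hGnn] with ω h1 h2
  have h1' : (μ[(fun ω => φ₃ ω ^ 2)|mX1]) ω
      = (μ[(fun ω => φ₂ ω ^ 2)|mX1]) ω + (μ[Gf|mX1]) ω := h1
  have h2' : (0:ℝ) ≤ (μ[Gf|mX1]) ω := h2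
  show (μ[(fun ω' => φ₂ ω' ^ 2)|mX1]) ω ≤ (μ[(fun ω' => φ₃ ω' ^ 2)|mX1]) ω
  linarith
end
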